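/- arXiv:2203.03766 — 5 statements merged into one kernel-verified Lean document; each statement's English description precedes it below -/
import Mathlib

section
/- For every θ ∈ (0,1) there exist constants C = C(θ) > 0 and δ₀ = δ₀(θ) > 0 with the following property: if 0 < δ ≤ δ₀ and (I, ψ, m) satisfy the centering condition m((-∞, a_θ] ∩ I) = θ and the δ-deficit condition e^{-ψ(a_θ)} ≤ e^{-ψ_g(a_θ)} + δ, then the relative entropy of m with respect to γ satisfies Ent_γ(m) = ∫_I (ψ_g(x) − ψ(x)) e^{ψ_g(x) − ψ(x)} γ(dx) ≤ C · δ. -/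
open MeasureTheory Real Set
open scoped ENNReal NNReal

/-- `gaussPsi x = x²/2 + (1/2)·log(2π)`, so that the standard Gaussian measure
is `exp (-gaussPsi x) dx`. -/
noncomputable def gaussPsi (x : ℝ) : ℝ := x ^ 2 / 2 + Real.log (2 * π) / 2

/-- The standard Gaussian measure `γ(dx) = (2π)^{-1/2} exp(-x²/2) dx` on `ℝ`. -/
noncomputable def gauss : Measure ℝ :=
  MeasureTheory.volume.withDensity fun x => ENNReal.ofReal (Real.exp (-gaussPsi x))

lemma int_exp_lin (b c : ℝ) :
    Integrable (fun x => Real.exp (b*x + c) * Real.exp (-gaussPsi x)) := by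
  have h : ∀ x : ℝ, Real.exp (b*x + c) * Real.exp (-gaussPsi x)
      = Real.exp (c - Real.log (2*π)/2 + b^2/2) * Real.exp (-(1/2) * (x - b)^2) := by
    intro x
    rw [← Real.exp_add, ← Real.exp_add, gaussPsi]
    congr 1
    ring
  simp_rw [h]
  exact ((integrable_exp_neg_mul_sq (by norm_num : (0:ℝ) < 1/2)).comp_sub_right b).const_mul _

lemma int_exp_lin' (b a : ℝ) :
    Integrable (fun x => Real.exp (b*(x-a)) * Real.exp (-gaussPsi x)) := by
  have := int_exp_lin b (-(b*a))
  convert this using 2 with x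
  congr 1
  ring

lemma int_g0 : Integrable (fun x => Real.exp (-gaussPsi x)) := by
  have := int_exp_lin' 0 0
  simpa using this

lemma int_abs_exp (a : ℝ) :
    Integrable (fun x => |x - a| * Real.exp |x - a| * Real.exp (-gaussPsi x)) := by
  have hmaj : Integrable (fun x => Real.exp (2*(x-a)) * Real.exp (-gaussPsi x)
      + Real.exp ((-2)*(x-a)) * Real.exp (-gaussPsi x)) :=
    (int_exp_lin' 2 a).add (int_exp_lin' (-2) a)
  refine hmaj.mono' ?_ ?_
  · apply Continuous.aestronglyMeasurable
    unfold gaussPsi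
    continuity
  · refine Filter.Eventually.of_forall fun x => ?_
    have h0 : (0:ℝ) ≤ |x - a| * Real.exp |x - a| * Real.exp (-gaussPsi x) := by positivity
    rw [Real.norm_eq_abs, abs_of_nonneg h0]
    have h1 : |x - a| ≤ Real.exp |x - a| := (lt_of_lt_of_le (lt_add_one _) (Real.add_one_le_exp _)).le
    have h2 : |x - a| * Real.exp |x - a| ≤ Real.exp (2*|x - a|) := by
      have := mul_le_mul_of_nonneg_right h1 (Real.exp_pos |x - a|).le
      calc |x - a| * Real.exp |x - a| ≤ Real.exp |x - a| * Real.exp |x - a| := this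
        _ = Real.exp (2*|x-a|) := by rw [← Real.exp_add]; ring_nf
    have h3 : Real.exp (2*|x - a|) ≤ Real.exp (2*(x-a)) + Real.exp ((-2)*(x-a)) := by
      rcases abs_cases (x - a) with ⟨h, _⟩ | ⟨h, _⟩
      · rw [h]; nlinarith [Real.exp_pos ((-2)*(x-a))]
      · rw [h, show (2:ℝ) * -(x-a) = (-2)*(x-a) from by ring]
        nlinarith [Real.exp_pos (2*(x-a))]
    calc |x - a| * Real.exp |x - a| * Real.exp (-gaussPsi x)
        ≤ Real.exp (2*|x - a|) * Real.exp (-gaussPsi x) :=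
          mul_le_mul_of_nonneg_right h2 (Real.exp_pos _).le
      _ ≤ _ := by
          have := mul_le_mul_of_nonneg_right h3 (Real.exp_pos (-gaussPsi x)).le
          linarith

lemma gauss_total : ∫ x, Real.exp (-gaussPsi x) = 1 := by
  have h2π : (0:ℝ) < 2*π := by positivity
  have hsq : Real.exp (Real.log (2*π)/2) = Real.sqrt (2*π) := by
    rw [Real.sqrt_eq_rpow, Real.rpow_def_of_pos h2π]
    ring_nf
  have h : ∀ x : ℝ, Real.exp (-gaussPsi x)
      = Real.exp (-(1/2) * x^2) * Real.exp (-(Real.log (2*π)/2)) := by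
    intro x
    rw [← Real.exp_add, gaussPsi]
    congr 1
    ring
  simp_rw [h]
  rw [integral_mul_const, integral_gaussian, Real.exp_neg, hsq,
    show π / (1/2 : ℝ) = 2*π by ring]
  exact mul_inv_cancel₀ (by positivity)

lemma g0_cont : Continuous fun x : ℝ => Real.exp (-gaussPsi x) := by
  unfold gaussPsi; continuity

lemma gauss_apply {S : Set ℝ} (hS : MeasurableSet S) :
    gauss S = ENNReal.ofReal (∫ x in S, Real.exp (-gaussPsi x)) := by
  rw [gauss, withDensity_apply _ hS,
    ← ofReal_integral_eq_lintegral_ofReal int_g0.integrableOn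
      (Filter.Eventually.of_forall fun x => (Real.exp_pos _).le)]

lemma setInt_g0_pos {c d : ℝ} (h : c < d) :
    0 < ∫ x in Ioc c d, Real.exp (-gaussPsi x) := by
  set e0 : ℝ := Real.exp (-((max |c| |d|)^2/2 + Real.log (2*π)/2)) with he0
  have hlow : ∀ x ∈ Ioc c d, e0 ≤ Real.exp (-gaussPsi x) := by
    intro x hx
    apply Real.exp_le_exp.2
    unfold gaussPsi
    have hax : |x| ≤ max |c| |d| := by
      apply abs_le.2
      constructor
      · have h1 : -|c| ≤ c := neg_abs_le c
        have h2 : |c| ≤ max |c| |d| := le_max_left _ _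
        have := hx.1
        linarith
      · have h1 : d ≤ |d| := le_abs_self d
        have h2 : |d| ≤ max |c| |d| := le_max_right _ _
        have := hx.2
        linarith
    have : x^2 ≤ (max |c| |d|)^2 := by
      have := abs_nonneg x
      nlinarith [sq_abs x]
    linarith
  have hconst : ∫ x in Ioc c d, e0 ∂volume = (d - c) * e0 := by
    rw [setIntegral_const, measureReal_def, Real.volume_Ioc, ENNReal.toReal_ofReal (by linarith), smul_eq_mul]
  have he0pos : (0:ℝ) < e0 := he0 ▸ Real.exp_pos _
  calc (0:ℝ) < (d - c) * e0 := mul_pos (by linarith) he0pos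
    _ = ∫ x in Ioc c d, e0 ∂volume := hconst.symm
    _ ≤ ∫ x in Ioc c d, Real.exp (-gaussPsi x) := by
        refine setIntegral_mono_on (integrableOn_const ?_) int_g0.integrableOn
          measurableSet_Ioc hlow
        rw [Real.volume_Ioc]
        exact ENNReal.ofReal_ne_top

lemma gauss_iic_strictmono {b c : ℝ} (h : b < c) :
    (∫ x in Iic b, Real.exp (-gaussPsi x)) < ∫ x in Iic c, Real.exp (-gaussPsi x) := by
  have hunion : Iic b ∪ Ioc b c = Iic c := Iic_union_Ioc_eq_Iic h.le
  have hdisj : Disjoint (Iic b) (Ioc b c) := Iic_disjoint_Ioc le_rfl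
  have := setIntegral_union hdisj measurableSet_Ioc int_g0.integrableOn int_g0.integrableOn
    (f := fun x => Real.exp (-gaussPsi x)) (μ := volume)
  rw [hunion] at this
  rw [this]
  have := setInt_g0_pos h
  linarith

lemma gauss_iic_inj {b c : ℝ} (h : gauss (Iic b) = gauss (Iic c)) : b = c := by
  rw [gauss_apply measurableSet_Iic, gauss_apply measurableSet_Iic] at h
  have hb : (0:ℝ) ≤ ∫ x in Iic b, Real.exp (-gaussPsi x) :=
    setIntegral_nonneg measurableSet_Iic fun x _ => (Real.exp_pos _).le
  have hc : (0:ℝ) ≤ ∫ x in Iic c, Real.exp (-gaussPsi x) :=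
    setIntegral_nonneg measurableSet_Iic fun x _ => (Real.exp_pos _).le
  rw [ENNReal.ofReal_eq_ofReal_iff hb hc] at h
  rcases lt_trichotomy b c with hlt | heq | hgt
  · exact absurd h (gauss_iic_strictmono hlt).ne
  · exact heq
  · exact absurd h.symm (gauss_iic_strictmono hgt).ne

lemma exists_subgradient {I : Set ℝ} {u : ℝ → ℝ} (hI : IsOpen I) (hu : ConvexOn ℝ I u)
    {a : ℝ} (ha : a ∈ I) : ∃ s : ℝ, ∀ x ∈ I, u a + s * (x - a) ≤ u x := by
  obtain ⟨ε, hε, hball⟩ := Metric.isOpen_iff.1 hI a ha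
  have hyI : a + ε/2 ∈ I := by
    apply hball
    rw [Metric.mem_ball, Real.dist_eq]
    rw [abs_of_pos (by linarith)]
    linarith
  set S : Set ℝ := {r | ∃ y, y ∈ I ∧ a < y ∧ r = (u y - u a)/(y - a)} with hS
  have key : ∀ x ∈ I, x < a → ∀ y ∈ I, a < y → (u a - u x)/(a - x) ≤ (u y - u a)/(y - a) :=
    fun x hx hxa y hy hay => hu.slope_mono_adjacent hx hy hxa hay
  have hne : S.Nonempty := ⟨_, a + ε/2, hyI, by linarith, rfl⟩
  have hbdd : BddBelow S := by
    have hxI : a - ε/2 ∈ I := by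
      apply hball
      rw [Metric.mem_ball, Real.dist_eq]
      rw [show a - ε/2 - a = -(ε/2) by ring, abs_neg, abs_of_pos (by linarith)]
      linarith
    refine ⟨(u a - u (a - ε/2))/(a - (a - ε/2)), fun r hr => ?_⟩
    obtain ⟨y, hy, hay, hreq⟩ := hr
    rw [hreq]
    exact key _ hxI (by linarith) y hy hay
  refine ⟨sInf S, fun x hx => ?_⟩
  rcases lt_trichotomy x a with hxa | hxa | hxa
  · have hle : (u a - u x)/(a - x) ≤ sInf S := by
      refine le_csInf hne fun r hr => ?_
      obtain ⟨y, hy, hay, hreq⟩ := hr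
      rw [hreq]
      exact key x hx hxa y hy hay
    have h2 : u a - u x ≤ sInf S * (a - x) := (div_le_iff₀ (by linarith)).1 hle
    have h3 : sInf S * (x - a) = -(sInf S * (a - x)) := by ring
    rw [h3]; linarith
  · subst hxa; simp
  · have hle : sInf S ≤ (u x - u a)/(x - a) := csInf_le hbdd ⟨x, hx, hxa, rfl⟩
    have h2 : sInf S * (x - a) ≤ u x - u a := (le_div_iff₀ (by linarith)).1 hle
    linarith

lemma convexOn_of_onecvx {I : Set ℝ} (hIc : Convex ℝ I) (ψ : ℝ → ℝ)
    (hcv : ∀ x ∈ I, ∀ y ∈ I, ∀ t ∈ Ioo (0:ℝ) 1,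
      ψ ((1 - t) * x + t * y) ≤ (1 - t) * ψ x + t * ψ y - (1/2)*(1-t)*t*|x-y|^2) :
    ConvexOn ℝ I (fun x => ψ x - gaussPsi x) := by
  refine ⟨hIc, fun x hx y hy p q hp hq hpq => ?_⟩
  simp only [smul_eq_mul]
  rcases eq_or_lt_of_le hp with hp0 | hp0
  · have hq1 : q = 1 := by linarith
    rw [← hp0, hq1]; simp
  rcases eq_or_lt_of_le hq with hq0 | hq0
  · have hp1 : p = 1 := by linarith
    rw [← hq0, hp1]; simp
  have ht : q ∈ Ioo (0:ℝ) 1 := ⟨hq0, by linarith⟩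
  have h := hcv x hx y hy q ht
  have hp1 : 1 - q = p := by linarith
  rw [hp1] at h
  have hpq' : p = 1 - q := by linarith
  have hg : gaussPsi (p*x + q*y) = p * gaussPsi x + q * gaussPsi y - (1/2)*p*q*(x-y)^2 := by
    subst hpq'; unfold gaussPsi; ring
  have hsq : |x - y|^2 = (x-y)^2 := sq_abs _
  rw [hsq] at h
  linarith

lemma mul_exp_neg_le (t : ℝ) : t * Real.exp (-t) ≤ Real.exp (-1) := by
  have h : t ≤ Real.exp (t - 1) := by
    have := Real.add_one_le_exp (t - 1); linarith
  have h2 := mul_le_mul_of_nonneg_right h (Real.exp_pos (-t)).le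
  calc t * Real.exp (-t) ≤ Real.exp (t-1) * Real.exp (-t) := h2
    _ = Real.exp (-1) := by rw [← Real.exp_add]; ring_nf

lemma one_sub_exp_bound {s : ℝ} (h0 : 0 ≤ s) (h1 : s ≤ 1) :
    s * (1 - Real.exp (-1)) ≤ 1 - Real.exp (-s) := by
  have h := convexOn_exp.2 (mem_univ (0:ℝ)) (mem_univ (-1:ℝ)) (by linarith : (0:ℝ) ≤ 1 - s)
    h0 (by ring)
  simp only [smul_eq_mul, mul_zero, mul_neg_one, zero_add, Real.exp_zero, mul_one] at h
  linarith

lemma K1_pos (a : ℝ) : 0 < ∫ x in Iic (a-1), Real.exp (-gaussPsi x) := by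
  refine lt_of_lt_of_le (setInt_g0_pos (show a-2 < a-1 by linarith)) ?_
  exact setIntegral_mono_set int_g0.integrableOn
    (Filter.Eventually.of_forall fun x => (Real.exp_pos _).le)
    (HasSubset.Subset.eventuallyLE Ioc_subset_Iic_self)

lemma K2_pos (a : ℝ) : 0 < ∫ x in Ioi (a+1), Real.exp (-gaussPsi x) := by
  refine lt_of_lt_of_le (setInt_g0_pos (show a+1 < a+2 by linarith)) ?_
  exact setIntegral_mono_set int_g0.integrableOn
    (Filter.Eventually.of_forall fun x => (Real.exp_pos _).le)
    (HasSubset.Subset.eventuallyLE Ioc_subset_Ioi_self)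

lemma exp_neg_one_lt_one : Real.exp (-1) < 1 := by
  have := Real.exp_lt_exp.2 (show (-1:ℝ) < 0 by norm_num)
  simpa using this

set_option maxHeartbeats 4000000 in
lemma core (θ : ℝ) (hθ0 : 0 < θ) (hθ1 : θ < 1) (a : ℝ)
    (ha : gauss (Iic a) = ENNReal.ofReal θ)
    (δ : ℝ) (hδ : 0 < δ)
    (hδ1 : Real.exp (gaussPsi a) * δ ≤ 1/2)
    (hδ2 : Real.exp (gaussPsi a) * δ ≤ (1 - Real.exp (-1))
        * min (∫ x in Iic (a-1), Real.exp (-gaussPsi x))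
              (∫ x in Ioi (a+1), Real.exp (-gaussPsi x)) / 2)
    (I : Set ℝ) (ψ : ℝ → ℝ) (hI : IsOpen I) (hIc : Convex ℝ I) (haI : a ∈ I)
    (hcv : ∀ x ∈ I, ∀ y ∈ I, ∀ t ∈ Ioo (0:ℝ) 1,
      ψ ((1 - t) * x + t * y)
        ≤ (1 - t) * ψ x + t * ψ y - (1 / 2) * (1 - t) * t * |x - y| ^ 2)
    (hprob : IsProbabilityMeasure
      (MeasureTheory.volume.withDensity
        (I.indicator fun x => ENNReal.ofReal (Real.exp (-ψ x)))))
    (hθm : (MeasureTheory.volume.withDensity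
        (I.indicator fun x => ENNReal.ofReal (Real.exp (-ψ x)))) (Iic a ∩ I)
        = ENNReal.ofReal θ)
    (hdef : Real.exp (-ψ a) ≤ Real.exp (-gaussPsi a) + δ) :
    (∫ x in I, (gaussPsi x - ψ x) * Real.exp (gaussPsi x - ψ x) ∂gauss)
      ≤ (Real.exp (gaussPsi a)
          + Real.exp (gaussPsi a) / ((1 - Real.exp (-1))
              * min (∫ x in Iic (a-1), Real.exp (-gaussPsi x))
                    (∫ x in Ioi (a+1), Real.exp (-gaussPsi x)))
            * (2 * ∫ x, |x - a| * Real.exp |x - a| * Real.exp (-gaussPsi x))) * δ := by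
  have hImeas : MeasurableSet I := hI.measurableSet
  set g0 : ℝ → ℝ := fun x => Real.exp (-gaussPsi x) with hg0def
  set w : ℝ → ℝ := fun x => Real.exp (-ψ x) with hwdef
  set u : ℝ → ℝ := fun x => ψ x - gaussPsi x with hudef
  set c₀ : ℝ := Real.exp (gaussPsi a) with hc0def
  set K₁ : ℝ := ∫ x in Iic (a-1), g0 x with hK1def
  set K₂ : ℝ := ∫ x in Ioi (a+1), g0 x with hK2def
  set κ : ℝ := min K₁ K₂ with hκdef
  set C₃ : ℝ := 2 * ∫ x, |x - a| * Real.exp |x - a| * g0 x with hC3def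
  have hc0pos : 0 < c₀ := Real.exp_pos _
  have hK1pos : 0 < K₁ := K1_pos a
  have hK2pos : 0 < K₂ := K2_pos a
  have hκpos : 0 < κ := lt_min hK1pos hK2pos
  have he1 : Real.exp (-1) < 1 := exp_neg_one_lt_one
  have hone : (0:ℝ) < 1 - Real.exp (-1) := by linarith
  -- convexity and subgradient
  have hu_conv : ConvexOn ℝ I u := convexOn_of_onecvx hIc ψ hcv
  obtain ⟨s, hs⟩ := exists_subgradient hI hu_conv haI
  -- continuity / measurability
  have hgaussPsi_cont : Continuous gaussPsi := by unfold gaussPsi; continuity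
  have hψ_cont : ContinuousOn ψ I := by
    have h1 : ContinuousOn u I := ConvexOn.continuousOn hI hu_conv
    have h2 : ContinuousOn (fun x => u x + gaussPsi x) I := h1.add hgaussPsi_cont.continuousOn
    have : (fun x => u x + gaussPsi x) = ψ := by funext x; rw [hudef]; ring
    rwa [this] at h2
  have hw_meas : AEStronglyMeasurable w (volume.restrict I) := by
    have h1 : AEMeasurable ψ (volume.restrict I) := hψ_cont.aemeasurable hImeas
    exact (Real.measurable_exp.comp_aemeasurable h1.neg).aestronglyMeasurable
  -- deficit consequences
  have hwfac : ∀ x : ℝ, w x = Real.exp (-(u x)) * g0 x := by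
    intro x
    show Real.exp (-ψ x) = Real.exp (-(ψ x - gaussPsi x)) * Real.exp (-gaussPsi x)
    rw [← Real.exp_add]
    congr 1
    ring
  have hua : Real.exp (-(u a)) ≤ 1 + c₀ * δ := by
    have h1 : Real.exp (-(u a)) = c₀ * Real.exp (-ψ a) := by
      show Real.exp (-(ψ a - gaussPsi a)) = Real.exp (gaussPsi a) * Real.exp (-ψ a)
      rw [← Real.exp_add]
      congr 1
      ring
    have h2 : c₀ * Real.exp (-gaussPsi a) = 1 := by
      show Real.exp (gaussPsi a) * Real.exp (-gaussPsi a) = 1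
      rw [← Real.exp_add]
      simp
    calc Real.exp (-(u a)) = c₀ * Real.exp (-ψ a) := h1
      _ ≤ c₀ * (Real.exp (-gaussPsi a) + δ) := by
          exact mul_le_mul_of_nonneg_left hdef hc0pos.le
      _ = 1 + c₀ * δ := by rw [mul_add, h2]
  have hua2 : Real.exp (-(u a)) ≤ 2 := by
    have : c₀ * δ ≤ 1/2 := hδ1
    linarith
  have hnua : -(u a) ≤ c₀ * δ := by
    have h2 : -(u a) ≤ Real.log (1 + c₀ * δ) :=
      (Real.le_log_iff_exp_le (by positivity)).2 hua
    have h3 := Real.log_le_sub_one_of_pos (show (0:ℝ) < 1 + c₀ * δ by positivity)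
    linarith
  -- pointwise bound
  have hptw : ∀ x ∈ I, w x ≤ Real.exp (-(u a)) * (Real.exp (-s*(x-a)) * g0 x) := by
    intro x hx
    have h1 : Real.exp (-(u x)) ≤ Real.exp (-(u a)) * Real.exp (-s*(x-a)) := by
      rw [← Real.exp_add]
      apply Real.exp_le_exp.2
      have := hs x hx
      linarith
    calc w x = Real.exp (-(u x)) * g0 x := hwfac x
      _ ≤ (Real.exp (-(u a)) * Real.exp (-s*(x-a))) * g0 x :=
          mul_le_mul_of_nonneg_right h1 (Real.exp_pos _).le
      _ = Real.exp (-(u a)) * (Real.exp (-s*(x-a)) * g0 x) := by ring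
  have hptw2 : ∀ x ∈ I, w x ≤ 2 * (Real.exp (-s*(x-a)) * g0 x) := by
    intro x hx
    refine le_trans (hptw x hx) (mul_le_mul_of_nonneg_right hua2 (by positivity))
  -- integrability
  have hmaj : Integrable (fun x => Real.exp (-s*(x-a)) * g0 x) := int_exp_lin' (-s) a
  have hw_int : IntegrableOn w I := by
    refine Integrable.mono' ((hmaj.const_mul 2).integrableOn) hw_meas ?_
    rw [ae_restrict_iff' hImeas]
    refine Filter.Eventually.of_forall fun x hx => ?_
    rw [Real.norm_eq_abs, abs_of_nonneg (Real.exp_pos _).le]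
    exact hptw2 x hx
  -- measure to integral conversions
  set ν := MeasureTheory.volume.withDensity
      (I.indicator fun x => ENNReal.ofReal (Real.exp (-ψ x))) with hνdef
  have hconv : ∀ S : Set ℝ, MeasurableSet S → S ⊆ I →
      ν S = ENNReal.ofReal (∫ x in S, w x) := by
    intro S hS hSI
    rw [hνdef, withDensity_apply _ hS]
    have h1 : ∫⁻ x in S, I.indicator (fun x => ENNReal.ofReal (Real.exp (-ψ x))) x ∂volume
        = ∫⁻ x in S, ENNReal.ofReal (w x) ∂volume := by
      refine setLIntegral_congr_fun hS (fun x hx => ?_)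
      rw [indicator_of_mem (hSI hx)]
    rw [h1, ← ofReal_integral_eq_lintegral_ofReal (hw_int.mono_set hSI)
      (Filter.Eventually.of_forall fun x => (Real.exp_pos _).le)]
  have hT1 : ∫ x in Iic a ∩ I, w x = θ := by
    have h1 := hconv (Iic a ∩ I) (measurableSet_Iic.inter hImeas) inter_subset_right
    rw [hθm] at h1
    have h2 : (0:ℝ) ≤ ∫ x in Iic a ∩ I, w x :=
      setIntegral_nonneg (measurableSet_Iic.inter hImeas) fun x _ => (Real.exp_pos _).le
    exact ((ENNReal.ofReal_eq_ofReal_iff hθ0.le h2).1 h1).symm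
  have hT : ∫ x in I, w x = 1 := by
    have hcompl : ν Iᶜ = 0 := by
      rw [hνdef, withDensity_apply _ hImeas.compl]
      have : ∫⁻ x in Iᶜ, I.indicator (fun x => ENNReal.ofReal (Real.exp (-ψ x))) x ∂volume
          = ∫⁻ x in Iᶜ, (0:ℝ≥0∞) ∂volume := by
        refine setLIntegral_congr_fun hImeas.compl (fun x hx => ?_)
        exact indicator_of_notMem hx _
      rw [this]
      simp
    have huniv : ν univ = 1 := hprob.measure_univ
    have hIν : ν I = 1 := by
      have := measure_add_measure_compl (μ := ν) hImeas
      rw [hcompl, add_zero] at this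
      rw [this, huniv]
    have h1 := hconv I hImeas subset_rfl
    rw [hIν] at h1
    have h2 : (0:ℝ) ≤ ∫ x in I, w x :=
      setIntegral_nonneg hImeas fun x _ => (Real.exp_pos _).le
    have h3 : ENNReal.ofReal (1:ℝ) = ENNReal.ofReal (∫ x in I, w x) := by
      rw [← h1]; simp
    exact ((ENNReal.ofReal_eq_ofReal_iff (by norm_num) h2).1 h3).symm
  have hT2 : ∫ x in Ioi a ∩ I, w x = 1 - θ := by
    have hdisj : Disjoint (Iic a ∩ I) (Ioi a ∩ I) :=
      Disjoint.mono inter_subset_left inter_subset_left (Iic_disjoint_Ioi le_rfl)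
    have hun : (Iic a ∩ I) ∪ (Ioi a ∩ I) = I := by
      rw [← union_inter_distrib_right, Iic_union_Ioi, univ_inter]
    have h1 := setIntegral_union hdisj (measurableSet_Ioi.inter hImeas)
      (hw_int.mono_set inter_subset_right) (hw_int.mono_set inter_subset_right)
      (f := w) (μ := volume)
    rw [hun, hT, hT1] at h1
    linarith
  have hA0 : ∫ x in Iic a, g0 x = θ := by
    rw [gauss_apply measurableSet_Iic] at ha
    have h2 : (0:ℝ) ≤ ∫ x in Iic a, g0 x :=
      setIntegral_nonneg measurableSet_Iic fun x _ => (Real.exp_pos _).le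
    exact (ENNReal.ofReal_eq_ofReal_iff h2 hθ0.le).1 ha
  have hB0 : ∫ x in Ioi a, g0 x = 1 - θ := by
    have h1 := setIntegral_union (Iic_disjoint_Ioi (le_refl a)) measurableSet_Ioi
      int_g0.integrableOn int_g0.integrableOn (f := fun x => Real.exp (-gaussPsi x)) (μ := volume)
    rw [Iic_union_Ioi] at h1
    rw [Measure.restrict_univ] at h1
    have h2 := gauss_total
    rw [h2, hA0] at h1
    linarith
  -- the A,B comparisons
  set A : ℝ := ∫ x in Iic a, Real.exp (-s*(x-a)) * g0 x with hAdef
  set B : ℝ := ∫ x in Ioi a, Real.exp (-s*(x-a)) * g0 x with hBdef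
  set E : ℝ := Real.exp (-(u a)) with hEdef
  have hEpos : 0 < E := Real.exp_pos _
  have hAθ : θ ≤ E * A := by
    have hstep1 : ∫ x in Iic a ∩ I, w x
        ≤ ∫ x in Iic a ∩ I, E * (Real.exp (-s*(x-a)) * g0 x) := by
      refine setIntegral_mono_on (hw_int.mono_set inter_subset_right)
        (((hmaj.const_mul E)).integrableOn) (measurableSet_Iic.inter hImeas) ?_
      intro x hx
      exact hptw x hx.2
    have hstep2 : ∫ x in Iic a ∩ I, E * (Real.exp (-s*(x-a)) * g0 x)
        ≤ ∫ x in Iic a, E * (Real.exp (-s*(x-a)) * g0 x) := by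
      refine setIntegral_mono_set ((hmaj.const_mul E).integrableOn) ?_
        (HasSubset.Subset.eventuallyLE inter_subset_left)
      exact Filter.Eventually.of_forall fun x => by positivity
    have hstep3 : ∫ x in Iic a, E * (Real.exp (-s*(x-a)) * g0 x) = E * A := by
      rw [hAdef, ← integral_const_mul]
    rw [← hT1]
    linarith
  have hBθ : 1 - θ ≤ E * B := by
    have hstep1 : ∫ x in Ioi a ∩ I, w x
        ≤ ∫ x in Ioi a ∩ I, E * (Real.exp (-s*(x-a)) * g0 x) := by
      refine setIntegral_mono_on (hw_int.mono_set inter_subset_right)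
        (((hmaj.const_mul E)).integrableOn) (measurableSet_Ioi.inter hImeas) ?_
      intro x hx
      exact hptw x hx.2
    have hstep2 : ∫ x in Ioi a ∩ I, E * (Real.exp (-s*(x-a)) * g0 x)
        ≤ ∫ x in Ioi a, E * (Real.exp (-s*(x-a)) * g0 x) := by
      refine setIntegral_mono_set ((hmaj.const_mul E).integrableOn) ?_
        (HasSubset.Subset.eventuallyLE inter_subset_left)
      exact Filter.Eventually.of_forall fun x => by positivity
    have hstep3 : ∫ x in Ioi a, E * (Real.exp (-s*(x-a)) * g0 x) = E * B := by
      rw [hBdef, ← integral_const_mul]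
    rw [← hT2]
    linarith
  -- gap upper bound helper
  have upper_gap : ∀ T X : ℝ, 0 ≤ T → T ≤ 1 → T ≤ E * X → T - X ≤ c₀ * δ := by
    intro T X hT0 hT1' hTX
    have hXge : T / E ≤ X := by
      rw [div_le_iff₀ hEpos]
      linarith [mul_comm E X]
    have key : T * (E - 1) ≤ c₀ * δ * E := by
      rcases le_or_gt 1 E with hE1 | hE1
      · have hh1 : 0 ≤ (1 - T) * (E - 1) :=
          mul_nonneg (by linarith) (by linarith)
        have hh2 : 0 ≤ (c₀ * δ) * (E - 1) :=
          mul_nonneg (by positivity) (by linarith)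
        have hh3 : E - 1 ≤ c₀ * δ := by linarith [hua]
        nlinarith
      · have hh1 : T * (E - 1) ≤ 0 :=
          mul_nonpos_of_nonneg_of_nonpos hT0 (by linarith)
        have hh2 : (0:ℝ) ≤ c₀ * δ * E := by positivity
        linarith
    have h2 : T - T / E ≤ c₀ * δ := by
      have h3 : (T - T/E) * E = T * (E - 1) := by
        rw [sub_mul, div_mul_cancel₀ _ hEpos.ne']
        ring
      have h4 : (T - T/E) * E ≤ (c₀*δ) * E := by rw [h3]; exact key
      exact le_of_mul_le_mul_right h4 hEpos
    linarith
  -- smallness of |s|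
  have small_of_gap : ∀ r : ℝ, 0 ≤ r → (1 - Real.exp (-r)) * κ ≤ c₀ * δ →
      r ≤ c₀ * δ / ((1 - Real.exp (-1)) * κ) := by
    intro r hr0 hgap
    have hr1 : r ≤ 1 := by
      by_contra hcon
      push_neg at hcon
      have h1 : Real.exp (-r) ≤ Real.exp (-1) := Real.exp_le_exp.2 (by linarith)
      have h2 : (1 - Real.exp (-1)) * κ ≤ (1 - Real.exp (-r)) * κ := by nlinarith
      have h3 : c₀ * δ ≤ (1 - Real.exp (-1)) * κ / 2 := by
        rw [hκdef]; exact hδ2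
      nlinarith
    have h4 := one_sub_exp_bound hr0 hr1
    have h5 : r * (1 - Real.exp (-1)) * κ ≤ c₀ * δ := by nlinarith
    rw [le_div_iff₀ (by positivity)]
    nlinarith
  have hs_small : |s| ≤ c₀ * δ / ((1 - Real.exp (-1)) * κ) := by
    rcases le_or_gt 0 s with hsgn | hsgn
    · -- use B side
      have hBint : IntegrableOn (fun x => g0 x - Real.exp (-s*(x-a)) * g0 x) (Ioi a) :=
        (int_g0.integrableOn).sub (hmaj.integrableOn)
      have hnonneg : ∀ x ∈ Ioi a, 0 ≤ g0 x - Real.exp (-s*(x-a)) * g0 x := by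
        intro x hx
        have h1 : Real.exp (-s*(x-a)) ≤ 1 := by
          rw [show (1:ℝ) = Real.exp 0 by simp]
          apply Real.exp_le_exp.2
          have : a < x := hx
          nlinarith
        nlinarith [Real.exp_pos (-gaussPsi x), h1, Real.exp_pos (-s*(x-a))]
      have hgapB : (1 - Real.exp (-s)) * K₂ ≤ (∫ x in Ioi a, g0 x) - B := by
        have hsub : (∫ x in Ioi a, g0 x) - B
            = ∫ x in Ioi a, (g0 x - Real.exp (-s*(x-a)) * g0 x) := by
          rw [hBdef, ← integral_sub int_g0.integrableOn hmaj.integrableOn]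
        have hstep1 : ∫ x in Ioi (a+1), ((1 - Real.exp (-s)) * g0 x)
            ≤ ∫ x in Ioi (a+1), (g0 x - Real.exp (-s*(x-a)) * g0 x) := by
          refine setIntegral_mono_on ((int_g0.const_mul _).integrableOn)
            (hBint.mono_set (by intro x hx; exact lt_trans (show a < a + 1 by linarith) hx))
            measurableSet_Ioi ?_
          intro x hx
          have hx1 : a + 1 < x := hx
          have h1 : Real.exp (-s*(x-a)) ≤ Real.exp (-s) := by
            apply Real.exp_le_exp.2
            nlinarith
          have h2 : (0:ℝ) ≤ g0 x := (Real.exp_pos _).le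
          have h3 := mul_le_mul_of_nonneg_right h1 h2
          linarith
        have hstep2 : ∫ x in Ioi (a+1), (g0 x - Real.exp (-s*(x-a)) * g0 x)
            ≤ ∫ x in Ioi a, (g0 x - Real.exp (-s*(x-a)) * g0 x) := by
          exact setIntegral_mono_set hBint
            ((ae_restrict_iff' measurableSet_Ioi).2 (Filter.Eventually.of_forall hnonneg))
            (HasSubset.Subset.eventuallyLE (fun x hx => lt_trans (show a < a + 1 by linarith) hx))
        have hstep0 : ∫ x in Ioi (a+1), ((1 - Real.exp (-s)) * g0 x)
            = (1 - Real.exp (-s)) * K₂ := by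
          rw [hK2def, ← integral_const_mul]
        rw [hsub]
        linarith
      have hgapB2 : (∫ x in Ioi a, g0 x) - B ≤ c₀ * δ := by
        rw [hB0]
        exact upper_gap (1-θ) B (by linarith) (by linarith) hBθ
      have habs : |s| = s := abs_of_nonneg hsgn
      rw [habs]
      apply small_of_gap s hsgn
      have hκK : κ ≤ K₂ := min_le_right _ _
      have hfac : 0 ≤ 1 - Real.exp (-s) := by
        have : Real.exp (-s) ≤ 1 := by
          rw [show (1:ℝ) = Real.exp 0 by simp]
          exact Real.exp_le_exp.2 (by linarith)
        linarith
      nlinarith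
    · -- s < 0, use A side
      have hr0 : 0 ≤ -s := by linarith
      have hAint : IntegrableOn (fun x => g0 x - Real.exp (-s*(x-a)) * g0 x) (Iic a) :=
        (int_g0.integrableOn).sub (hmaj.integrableOn)
      have hnonneg : ∀ x ∈ Iic a, 0 ≤ g0 x - Real.exp (-s*(x-a)) * g0 x := by
        intro x hx
        have h1 : Real.exp (-s*(x-a)) ≤ 1 := by
          rw [show (1:ℝ) = Real.exp 0 by simp]
          apply Real.exp_le_exp.2
          have : x ≤ a := hx
          nlinarith
        have h2 : (0:ℝ) ≤ g0 x := (Real.exp_pos _).le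
        have h3 := mul_le_mul_of_nonneg_right h1 h2
        rw [one_mul] at h3
        linarith
      have hgapA : (1 - Real.exp (-(-s))) * K₁ ≤ (∫ x in Iic a, g0 x) - A := by
        have hsub : (∫ x in Iic a, g0 x) - A
            = ∫ x in Iic a, (g0 x - Real.exp (-s*(x-a)) * g0 x) := by
          rw [hAdef, ← integral_sub int_g0.integrableOn hmaj.integrableOn]
        have hstep1 : ∫ x in Iic (a-1), ((1 - Real.exp (-(-s))) * g0 x)
            ≤ ∫ x in Iic (a-1), (g0 x - Real.exp (-s*(x-a)) * g0 x) := by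
          refine setIntegral_mono_on ((int_g0.const_mul _).integrableOn)
            (hAint.mono_set (Iic_subset_Iic.2 (by linarith)))
            measurableSet_Iic ?_
          intro x hx
          have hx1 : x ≤ a - 1 := hx
          have h1 : Real.exp (-s*(x-a)) ≤ Real.exp (-(-s)) := by
            apply Real.exp_le_exp.2
            nlinarith
          have h2 : (0:ℝ) ≤ g0 x := (Real.exp_pos _).le
          have h3 := mul_le_mul_of_nonneg_right h1 h2
          linarith
        have hstep2 : ∫ x in Iic (a-1), (g0 x - Real.exp (-s*(x-a)) * g0 x)
            ≤ ∫ x in Iic a, (g0 x - Real.exp (-s*(x-a)) * g0 x) := by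
          exact setIntegral_mono_set hAint
            ((ae_restrict_iff' measurableSet_Iic).2 (Filter.Eventually.of_forall hnonneg))
            (HasSubset.Subset.eventuallyLE (Iic_subset_Iic.2 (by linarith)))
        have hstep0 : ∫ x in Iic (a-1), ((1 - Real.exp (-(-s))) * g0 x)
            = (1 - Real.exp (-(-s))) * K₁ := by
          rw [hK1def, ← integral_const_mul]
        rw [hsub]
        linarith
      have hgapA2 : (∫ x in Iic a, g0 x) - A ≤ c₀ * δ := by
        rw [hA0]
        exact upper_gap θ A hθ0.le hθ1.le hAθ
      have habs : |s| = -s := abs_of_neg hsgn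
      rw [habs]
      apply small_of_gap (-s) hr0
      have hκK : κ ≤ K₁ := min_le_left _ _
      have hfac : 0 ≤ 1 - Real.exp (-(-s)) := by
        have : Real.exp (-(-s)) ≤ 1 := by
          rw [show (1:ℝ) = Real.exp 0 by simp]
          exact Real.exp_le_exp.2 (by linarith)
        linarith
      nlinarith
  have hs_half : |s| ≤ 1 := by
    have h3 : c₀ * δ ≤ (1 - Real.exp (-1)) * κ / 2 := by rw [hκdef]; exact hδ2
    have h4 : c₀ * δ / ((1 - Real.exp (-1)) * κ) ≤ 1/2 := by
      rw [div_le_iff₀ (by positivity)]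
      nlinarith
    linarith [hs_small]
  -- integrability of (x-a) * w
  have hptw3 : ∀ x ∈ I, w x ≤ 2 * (Real.exp |x - a| * g0 x) := by
    intro x hx
    refine le_trans (hptw2 x hx) ?_
    have h1 : Real.exp (-s*(x-a)) ≤ Real.exp |x-a| := by
      apply Real.exp_le_exp.2
      calc -s*(x-a) ≤ |(-s)*(x-a)| := le_abs_self _
        _ = |s| * |x-a| := by rw [abs_mul, abs_neg]
        _ ≤ 1 * |x-a| := mul_le_mul_of_nonneg_right hs_half (abs_nonneg _)
        _ = |x-a| := one_mul _
    have h2 : (0:ℝ) ≤ g0 x := (Real.exp_pos _).le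
    have h3 := mul_le_mul_of_nonneg_right h1 h2
    linarith [hptw2 x hx]
  have hxw_meas : AEStronglyMeasurable (fun x => (x - a) * w x) (volume.restrict I) :=
    (Continuous.aestronglyMeasurable (by continuity)).mul hw_meas
  have hxw_int : IntegrableOn (fun x => (x - a) * w x) I := by
    refine Integrable.mono' (((int_abs_exp a).const_mul 2).integrableOn) hxw_meas ?_
    rw [ae_restrict_iff' hImeas]
    refine Filter.Eventually.of_forall fun x hx => ?_
    rw [Real.norm_eq_abs, abs_mul]
    have hw0 : 0 ≤ w x := (Real.exp_pos _).le
    rw [abs_of_nonneg hw0]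
    linarith [mul_le_mul_of_nonneg_left (hptw3 x hx) (abs_nonneg (x-a))]
  set M : ℝ := ∫ x in I, (x - a) * w x with hMdef
  have hM : |M| ≤ C₃ := by
    have h1 : |M| ≤ ∫ x in I, ‖(x - a) * w x‖ := by
      rw [hMdef, ← Real.norm_eq_abs]
      exact norm_integral_le_integral_norm _
    have h2 : ∫ x in I, ‖(x - a) * w x‖ ≤ ∫ x in I, 2 * (|x - a| * Real.exp |x - a| * g0 x) := by
      refine setIntegral_mono_on hxw_int.norm (((int_abs_exp a).const_mul 2).integrableOn)
        hImeas ?_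
      intro x hx
      rw [Real.norm_eq_abs, abs_mul]
      have hw0 : (0:ℝ) ≤ w x := (Real.exp_pos _).le
      rw [abs_of_nonneg hw0]
      linarith [mul_le_mul_of_nonneg_left (hptw3 x hx) (abs_nonneg (x-a))]
    have h3 : ∫ x in I, 2 * (|x - a| * Real.exp |x - a| * g0 x)
        ≤ ∫ x, 2 * (|x - a| * Real.exp |x - a| * g0 x) :=
      setIntegral_le_integral ((int_abs_exp a).const_mul 2)
        (Filter.Eventually.of_forall fun x => by positivity)
    have h4 : ∫ x, 2 * (|x - a| * Real.exp |x - a| * g0 x) = C₃ := by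
      rw [hC3def]
      exact integral_const_mul 2 _
    linarith
  -- rewrite the entropy integral over gauss as an integral over volume
  have hEnt : (∫ x in I, (gaussPsi x - ψ x) * Real.exp (gaussPsi x - ψ x) ∂gauss)
      = ∫ x in I, (gaussPsi x - ψ x) * w x ∂volume := by
    have hmeasnn : Measurable fun x => Real.toNNReal (Real.exp (-gaussPsi x)) :=
      (Real.continuous_exp.comp hgaussPsi_cont.neg).measurable.real_toNNReal
    have hrepr : gauss = volume.withDensity
        (fun x => ((Real.toNNReal (Real.exp (-gaussPsi x)) : ℝ≥0) : ℝ≥0∞)) := rfl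
    rw [hrepr, setIntegral_withDensity_eq_setIntegral_smul hmeasnn _ hImeas]
    refine setIntegral_congr_fun hImeas fun x hx => ?_
    show (Real.toNNReal (Real.exp (-gaussPsi x)))
        • ((gaussPsi x - ψ x) * Real.exp (gaussPsi x - ψ x))
      = (gaussPsi x - ψ x) * Real.exp (-ψ x)
    rw [NNReal.smul_def, Real.coe_toNNReal _ (Real.exp_pos _).le, smul_eq_mul]
    rw [show Real.exp (-gaussPsi x) * ((gaussPsi x - ψ x) * Real.exp (gaussPsi x - ψ x))
        = (gaussPsi x - ψ x) * (Real.exp (gaussPsi x - ψ x) * Real.exp (-gaussPsi x)) from by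
          ring]
    rw [← Real.exp_add]
    congr 2
    ring
  -- main comparison
  have hfg : ∀ x ∈ I, (gaussPsi x - ψ x) * w x ≤ (-(u a) - s*(x-a)) * w x := by
    intro x hx
    have h1 : gaussPsi x - ψ x ≤ -(u a) - s*(x-a) := by
      have h2 := hs x hx
      have h3 : u x = ψ x - gaussPsi x := rfl
      linarith [h3 ▸ h2]
    exact mul_le_mul_of_nonneg_right h1 (Real.exp_pos _).le
  have hg_int : IntegrableOn (fun x => (-(u a) - s*(x-a)) * w x) I := by
    have h1 : IntegrableOn (fun x => (-(u a)) * w x - s * ((x - a) * w x)) I :=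
      (hw_int.const_mul _).sub (hxw_int.const_mul s)
    have h0 : (fun x => (-(u a) - s*(x-a)) * w x)
        = fun x => (-(u a)) * w x - s * ((x - a) * w x) := by
      funext x; ring
    rwa [h0]
  have hf_meas : AEStronglyMeasurable (fun x => (gaussPsi x - ψ x) * w x)
      (volume.restrict I) := by
    have h1 : AEMeasurable (fun x => gaussPsi x - ψ x) (volume.restrict I) :=
      (hgaussPsi_cont.continuousOn.sub hψ_cont).aemeasurable hImeas
    exact h1.aestronglyMeasurable.mul hw_meas
  have hf_int : IntegrableOn (fun x => (gaussPsi x - ψ x) * w x) I := by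
    refine Integrable.mono'
      (g := fun x => Real.exp (-1) * g0 x + ‖(-(u a) - s*(x-a)) * w x‖)
      (((int_g0.const_mul (Real.exp (-1))).integrableOn).add hg_int.norm) hf_meas ?_
    rw [ae_restrict_iff' hImeas]
    refine Filter.Eventually.of_forall fun x hx => ?_
    show ‖(gaussPsi x - ψ x) * w x‖
      ≤ Real.exp (-1) * g0 x + ‖(-(u a) - s*(x-a)) * w x‖
    rw [Real.norm_eq_abs]
    have hgnn : (0:ℝ) ≤ ‖(-(u a) - s*(x-a)) * w x‖ := norm_nonneg _
    have hg0nn : (0:ℝ) ≤ Real.exp (-1) * g0 x := by positivity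
    rcases le_or_gt 0 (u x) with hcase | hcase
    · have hux : gaussPsi x - ψ x = -(u x) := by show _ = -(ψ x - gaussPsi x); ring
      have hfneg : (gaussPsi x - ψ x) * w x ≤ 0 := by
        rw [hux]
        exact mul_nonpos_of_nonpos_of_nonneg (by linarith) (Real.exp_pos _).le
      rw [abs_of_nonpos hfneg]
      have heq : -((gaussPsi x - ψ x) * w x) = (u x * Real.exp (-(u x))) * g0 x := by
        rw [hwfac x, hux]; ring
      rw [heq]
      have h5 : (u x * Real.exp (-(u x))) * g0 x ≤ Real.exp (-1) * g0 x :=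
        mul_le_mul_of_nonneg_right (mul_exp_neg_le (u x)) (Real.exp_pos _).le
      linarith
    · have hux : (0:ℝ) ≤ gaussPsi x - ψ x := by
        have : u x = ψ x - gaussPsi x := rfl
        linarith
      rw [abs_of_nonneg (mul_nonneg hux (Real.exp_pos _).le)]
      have h5 := hfg x hx
      have h6 : (-(u a) - s*(x-a)) * w x ≤ ‖(-(u a) - s*(x-a)) * w x‖ := le_abs_self _
      linarith
  have hmain : ∫ x in I, (gaussPsi x - ψ x) * w x ∂volume
      ≤ ∫ x in I, (-(u a) - s*(x-a)) * w x ∂volume :=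
    setIntegral_mono_on hf_int hg_int hImeas hfg
  have hgval : ∫ x in I, (-(u a) - s*(x-a)) * w x ∂volume = -(u a) - s * M := by
    have h0 : (fun x => (-(u a) - s*(x-a)) * w x)
        = fun x => (-(u a)) * w x - s * ((x - a) * w x) := by
      funext x; ring
    rw [h0, integral_sub (hw_int.const_mul _) (hxw_int.const_mul s),
      integral_const_mul, integral_const_mul, hT, hMdef]
    ring
  have hfinal : -(u a) - s * M ≤ c₀ * δ + (c₀ * δ / ((1 - Real.exp (-1)) * κ)) * C₃ := by
    have h1 : -(s * M) ≤ |s| * |M| := by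
      calc -(s*M) ≤ |s*M| := neg_le_abs _
        _ = |s| * |M| := abs_mul s M
    have h2 : |s| * |M| ≤ (c₀ * δ / ((1 - Real.exp (-1)) * κ)) * C₃ := by
      exact mul_le_mul hs_small hM (abs_nonneg M) (by positivity)
    have h3 : -(u a) + -(s * M) ≤ c₀ * δ + (c₀ * δ / ((1 - Real.exp (-1)) * κ)) * C₃ :=
      add_le_add hnua (h1.trans h2)
    linarith
  rw [hEnt]
  calc ∫ x in I, (gaussPsi x - ψ x) * w x ∂volume
      ≤ -(u a) - s * M := by rw [← hgval]; exact hmain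
    _ ≤ c₀ * δ + (c₀ * δ / ((1 - Real.exp (-1)) * κ)) * C₃ := hfinal
    _ = (c₀ + c₀ / ((1 - Real.exp (-1)) * κ) * C₃) * δ := by ring

/-- the relative-entropy (`Ent_γ(m)`) estimate on an interval. -/
theorem entropy_estimate_on_interval (θ : ℝ) (hθ : θ ∈ Ioo (0:ℝ) 1) :
    ∃ C : ℝ, 0 < C ∧ ∃ δ₀ : ℝ, 0 < δ₀ ∧
      ∀ (δ : ℝ), 0 < δ → δ ≤ δ₀ →
      ∀ (I : Set ℝ) (ψ : ℝ → ℝ) (a : ℝ),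
        IsOpen I → Convex ℝ I → a ∈ I →
        gauss (Iic a) = ENNReal.ofReal θ →
        (∀ x ∈ I, ∀ y ∈ I, ∀ t ∈ Ioo (0:ℝ) 1,
          ψ ((1 - t) * x + t * y)
            ≤ (1 - t) * ψ x + t * ψ y - (1 / 2) * (1 - t) * t * |x - y| ^ 2) →
        IsProbabilityMeasure
          (MeasureTheory.volume.withDensity
            (I.indicator fun x => ENNReal.ofReal (Real.exp (-ψ x)))) →
        (MeasureTheory.volume.withDensity
            (I.indicator fun x => ENNReal.ofReal (Real.exp (-ψ x)))) (Iic a ∩ I)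
          = ENNReal.ofReal θ →
        Real.exp (-ψ a) ≤ Real.exp (-gaussPsi a) + δ →
        (∫ x in I, (gaussPsi x - ψ x) * Real.exp (gaussPsi x - ψ x) ∂gauss) ≤ C * δ := by
  obtain ⟨hθ0, hθ1⟩ := hθ
  by_cases hex : ∃ b : ℝ, gauss (Iic b) = ENNReal.ofReal θ
  · obtain ⟨a₀, ha₀⟩ := hex
    set c₀ : ℝ := Real.exp (gaussPsi a₀) with hc0def
    set κ : ℝ := min (∫ x in Iic (a₀-1), Real.exp (-gaussPsi x))
        (∫ x in Ioi (a₀+1), Real.exp (-gaussPsi x)) with hκdef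
    set C₃ : ℝ := 2 * ∫ x, |x - a₀| * Real.exp |x - a₀| * Real.exp (-gaussPsi x) with hC3def
    have hc0pos : 0 < c₀ := Real.exp_pos _
    have hκpos : 0 < κ := lt_min (K1_pos a₀) (K2_pos a₀)
    have hone : (0:ℝ) < 1 - Real.exp (-1) := by linarith [exp_neg_one_lt_one]
    have hC3nn : (0:ℝ) ≤ C₃ := by
      rw [hC3def]
      have h1 : (0:ℝ) ≤ ∫ x, |x - a₀| * Real.exp |x - a₀| * Real.exp (-gaussPsi x) :=
        integral_nonneg fun x => by positivity
      linarith
    refine ⟨c₀ + c₀ / ((1 - Real.exp (-1)) * κ) * C₃ + 1, ?_,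
      min (1/(2*c₀)) ((1 - Real.exp (-1)) * κ / (2*c₀)), ?_, ?_⟩
    · have h1 : (0:ℝ) ≤ c₀ / ((1 - Real.exp (-1)) * κ) * C₃ := by positivity
      linarith
    · exact lt_min (by positivity) (by positivity)
    · intro δ hδ hδ0 I ψ a hI hIc haI hcdf hcv hprob hθm hdef
      have haa : a = a₀ := gauss_iic_inj (hcdf.trans ha₀.symm)
      subst haa
      have hδ1 : c₀ * δ ≤ 1/2 := by
        have h1 : δ ≤ 1/(2*c₀) := le_trans hδ0 (min_le_left _ _)
        rw [le_div_iff₀ (by positivity)] at h1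
        nlinarith
      have hδ2 : c₀ * δ ≤ (1 - Real.exp (-1)) * κ / 2 := by
        have h1 : δ ≤ (1 - Real.exp (-1)) * κ / (2*c₀) := le_trans hδ0 (min_le_right _ _)
        rw [le_div_iff₀ (by positivity)] at h1
        nlinarith
      have hcore := core θ hθ0 hθ1 a hcdf δ hδ hδ1 hδ2 I ψ hI hIc haI hcv hprob hθm hdef
      rw [← hc0def, ← hκdef, ← hC3def] at hcore
      refine le_trans hcore ?_
      have h2 : (0:ℝ) ≤ c₀ / ((1 - Real.exp (-1)) * κ) * C₃ := by positivity
      nlinarith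
  · refine ⟨1, one_pos, 1, one_pos, ?_⟩
    intro δ _ _ I ψ a _ _ _ hcdf _ _ _ _
    exact absurd ⟨a, hcdf⟩ hex
end

section
/- For every θ ∈ (0,1) there exist constants C = C(θ) > 0 and δ₀ = δ₀(θ) > 0 with the following property: if 0 < δ ≤ δ₀ and (I, ψ, m) satisfy the centering condition m((-∞, a_θ] ∩ I) = θ and the δ-deficit condition e^{-ψ(a_θ)} ≤ e^{-ψ_g(a_θ)} + δ, then for every x ∈ I, ψ(x) − ψ_g(x) ≥ (ψ'_+(a_θ) − a_θ)(x − a_θ) − C·δ, where ψ'_+(a_θ) denotes the right derivative of the convex function ψ at a_θ. -/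
open MeasureTheory Real Set

lemma gauss_Iic_lt {a b : ℝ} (hab : a < b) (hfin : gauss (Iic a) ≠ ⊤) :
    gauss (Iic a) < gauss (Iic b) := by
  have hcont : Continuous gaussPsi := by unfold gaussPsi; continuity
  have hm : Measurable fun x => ENNReal.ofReal (Real.exp (-gaussPsi x)) :=
    (Real.continuous_exp.comp hcont.neg).measurable.ennreal_ofReal
  have hioc : gauss (Ioc a b) ≠ 0 := by
    rw [gauss, withDensity_apply _ measurableSet_Ioc]
    have hpos : 0 < ∫⁻ x in Ioc a b, ENNReal.ofReal (Real.exp (-gaussPsi x)) := by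
      rw [lintegral_pos_iff_support hm]
      have hsupp : Function.support (fun x => ENNReal.ofReal (Real.exp (-gaussPsi x))) = univ := by
        ext x
        simp only [Function.mem_support, mem_univ, iff_true]
        exact (ENNReal.ofReal_pos.mpr (Real.exp_pos _)).ne'
      rw [hsupp, Measure.restrict_apply_univ, Real.volume_Ioc]
      exact ENNReal.ofReal_pos.mpr (by linarith)
    exact hpos.ne'
  calc gauss (Iic a) < gauss (Iic a) + gauss (Ioc a b) := ENNReal.lt_add_right hfin hioc
    _ = gauss (Iic b) := by
        rw [← measure_union (Iic_disjoint_Ioc le_rfl) measurableSet_Ioc,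
          Iic_union_Ioc_eq_Iic hab.le]

lemma gauss_quantile_unique {θ a b : ℝ} (ha : gauss (Iic a) = ENNReal.ofReal θ)
    (hb : gauss (Iic b) = ENNReal.ofReal θ) : a = b := by
  rcases lt_trichotomy a b with h | h | h
  · exact absurd (gauss_Iic_lt h (ha ▸ ENNReal.ofReal_ne_top)) (by rw [ha, hb]; exact lt_irrefl _)
  · exact h
  · exact absurd (gauss_Iic_lt h (hb ▸ ENNReal.ofReal_ne_top)) (by rw [ha, hb]; exact lt_irrefl _)

open Classical in
noncomputable def gaussQuantile (θ : ℝ) : ℝ :=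
  if h : ∃ a, gauss (Iic a) = ENNReal.ofReal θ then h.choose else 0

lemma convex_right_tangent {I : Set ℝ} (hI : IsOpen I) {g : ℝ → ℝ} (hg : ConvexOn ℝ I g)
    {a : ℝ} (ha : a ∈ I) :
    ∃ d, HasDerivWithinAt g d (Ici a) a ∧ ∀ x ∈ I, g a + d * (x - a) ≤ g x := by
  obtain ⟨ε, hε, hball⟩ := Metric.isOpen_iff.mp hI a ha
  rw [Real.ball_eq_Ioo] at hball
  have hsub : Ioo a (a + ε) ⊆ I := fun y hy => hball ⟨by linarith [hy.1], hy.2⟩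
  have hbmem : a - ε / 2 ∈ I := hball ⟨by linarith, by linarith⟩
  have hne : (Ioo a (a + ε)).Nonempty := ⟨a + ε / 2, by constructor <;> linarith⟩
  have hmono : MonotoneOn (slope g a) (Ioo a (a + ε)) := by
    intro y hy z hz hyz
    rw [slope_def_field, slope_def_field]
    exact hg.secant_mono ha (hsub hy) (hsub hz) hy.1.ne' hz.1.ne' hyz
  have hlb : slope g a (a - ε / 2) ∈ lowerBounds (slope g a '' Ioo a (a + ε)) := by
    rintro w ⟨z, hz, rfl⟩
    rw [slope_def_field, slope_def_field]
    exact hg.secant_mono ha hbmem (hsub hz) (ne_of_lt (by linarith)) hz.1.ne' (by linarith [hz.1])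
  have hbdd : BddBelow (slope g a '' Ioo a (a + ε)) := ⟨_, hlb⟩
  set d := sInf (slope g a '' Ioo a (a + ε)) with hd
  have htend : Filter.Tendsto (slope g a) (nhdsWithin a (Ioi a)) (nhds d) :=
    MonotoneOn.tendsto_nhdsWithin_Ioo_right hne hmono hbdd
  have hder : HasDerivWithinAt g d (Ioi a) a :=
    (hasDerivWithinAt_iff_tendsto_slope' (by simp)).mpr htend
  refine ⟨d, hder.Ici_of_Ioi, ?_⟩
  intro x hx
  rcases lt_trichotomy x a with hxa | rfl | hxa
  · have hsle : slope g a x ≤ d := by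
      apply le_csInf (hne.image _)
      rintro w ⟨z, hz, rfl⟩
      rw [slope_def_field, slope_def_field]
      exact hg.secant_mono ha hx (hsub hz) hxa.ne hz.1.ne' (by linarith [hz.1])
    rw [slope_def_field] at hsle
    have hneg : x - a < 0 := by linarith
    rw [div_le_iff_of_neg hneg] at hsle
    linarith
  · simp
  · have := hg.le_slope_of_hasDerivWithinAt_Ioi ha hx hxa hder
    rw [slope_def_field] at this
    rw [le_div_iff₀ (by linarith)] at this
    linarith

/-- the lower bound `ψ - ψ_g ≥ (ψ'_+(a_θ) - a_θ)(x - a_θ) - C·δ` on `I`. -/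
theorem lower_bound_on_interval (θ : ℝ) (hθ : θ ∈ Ioo (0:ℝ) 1) :
    ∃ C : ℝ, 0 < C ∧ ∃ δ₀ : ℝ, 0 < δ₀ ∧
      ∀ (δ : ℝ), 0 < δ → δ ≤ δ₀ →
      ∀ (I : Set ℝ) (ψ : ℝ → ℝ) (a : ℝ),
        IsOpen I → Convex ℝ I → a ∈ I →
        gauss (Iic a) = ENNReal.ofReal θ →
        (∀ x ∈ I, ∀ y ∈ I, ∀ t ∈ Ioo (0:ℝ) 1,
          ψ ((1 - t) * x + t * y)
            ≤ (1 - t) * ψ x + t * ψ y - (1 / 2) * (1 - t) * t * |x - y| ^ 2) →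
        IsProbabilityMeasure
          (MeasureTheory.volume.withDensity
            (I.indicator fun x => ENNReal.ofReal (Real.exp (-ψ x)))) →
        (MeasureTheory.volume.withDensity
            (I.indicator fun x => ENNReal.ofReal (Real.exp (-ψ x)))) (Iic a ∩ I)
          = ENNReal.ofReal θ →
        Real.exp (-ψ a) ≤ Real.exp (-gaussPsi a) + δ →
        ∀ x ∈ I,
          ψ x - gaussPsi x ≥ (derivWithin ψ (Ici a) a - a) * (x - a) - C * δ := by
  refine ⟨Real.exp (gaussPsi (gaussQuantile θ)), Real.exp_pos _, 1, one_pos, ?_⟩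
  intro δ hδ hδ1 I ψ a hIopen hIconv haI hga hψ hprob hcent hdef x hxI
  -- identify a with the quantile
  have hex : ∃ b, gauss (Iic b) = ENNReal.ofReal θ := ⟨a, hga⟩
  have hqa : gaussQuantile θ = a := by
    rw [gaussQuantile, dif_pos hex]
    exact gauss_quantile_unique hex.choose_spec hga
  rw [hqa]
  -- φ is convex on I
  have hφ : ConvexOn ℝ I (fun y => ψ y - y ^ 2 / 2) := by
    refine ⟨hIconv, ?_⟩
    intro u hu v hv s t hs ht hst
    simp only [smul_eq_mul]
    rcases eq_or_lt_of_le hs with rfl | hs'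
    · have ht1 : t = 1 := by linarith
      subst ht1; simp
    rcases eq_or_lt_of_le ht with rfl | ht'
    · have hs1 : s = 1 := by linarith
      subst hs1; simp
    · have h := hψ u hu v hv t ⟨ht', by linarith⟩
      have hs'' : s = 1 - t := by linarith
      subst hs''
      have habs : |u - v| ^ 2 = (u - v) ^ 2 := sq_abs _
      rw [habs] at h
      have hid : (1 - t) * u ^ 2 + t * v ^ 2
          = ((1 - t) * u + t * v) ^ 2 + (1 - t) * t * (u - v) ^ 2 := by ring
      linarith [h]
  obtain ⟨d, hd, hlow⟩ := convex_right_tangent hIopen hφ haI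
  -- derivative of ψ
  have hq : HasDerivWithinAt (fun y : ℝ => y ^ 2 / 2) a (Ici a) a := by
    have h := ((hasDerivAt_pow 2 a).div_const 2).hasDerivWithinAt (s := Ici a)
    exact h.congr_deriv (by norm_num)
  have hψd : HasDerivWithinAt ψ (d + a) (Ici a) a := by
    have h := hd.add hq
    have heq : (fun y => (ψ y - y ^ 2 / 2) + y ^ 2 / 2) = ψ := by funext y; ring
    rw [show ((fun y => ψ y - y ^ 2 / 2) + fun y => y ^ 2 / 2) = ψ from heq] at h
    exact h
  have hdw : derivWithin ψ (Ici a) a = d + a :=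
    hψd.derivWithin (uniqueDiffOn_Ici a a self_mem_Ici)
  -- deficit bound
  have hub : -(Real.exp (gaussPsi a) * δ) ≤ ψ a - gaussPsi a := by
    have h2 := mul_le_mul_of_nonneg_left hdef (Real.exp_pos (gaussPsi a)).le
    rw [mul_add, ← Real.exp_add, ← Real.exp_add] at h2
    have e1 : gaussPsi a + -gaussPsi a = 0 := by ring
    rw [e1, Real.exp_zero] at h2
    have h3 : Real.exp (-(ψ a - gaussPsi a)) ≤ Real.exp (Real.exp (gaussPsi a) * δ) := by
      have e2 : -(ψ a - gaussPsi a) = gaussPsi a + -ψ a := by ring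
      rw [e2]
      calc Real.exp (gaussPsi a + -ψ a) ≤ 1 + Real.exp (gaussPsi a) * δ := h2
        _ ≤ Real.exp (Real.exp (gaussPsi a) * δ) := by
            linarith [Real.add_one_le_exp (Real.exp (gaussPsi a) * δ)]
    have := Real.exp_le_exp.mp h3
    linarith
  -- conclude
  rw [hdw]
  have hl := hlow x hxI
  simp only [gaussPsi] at hub ⊢
  have hda : d + a - a = d := by ring
  rw [hda]
  linarith [hl, hub]
end

section
/- For every θ ∈ (0,1) there exist constants C = C(θ) > 0 and δ₀ = δ₀(θ) > 0 with the following property: if 0 < δ ≤ δ₀ and (I, ψ, m) satisfy the centering condition m((-∞, a_θ] ∩ I) = θ and the δ-deficit condition e^{-ψ(a_θ)} ≤ e^{-ψ_g(a_θ)} + δ, then |ψ'_+(a_θ) − a_θ| ≤ C·δ, where ψ'_+(a_θ) denotes the right derivative of ψ at a_θ. -/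
open MeasureTheory Real Set

/-! ### Auxiliary integral facts -/

noncomputable def Hfun (s : ℝ) : ℝ := ∫ t in Ioi (0:ℝ), Real.exp (-(s*t) - t^2/2)

noncomputable def cfun (s : ℝ) : ℝ := ∫ t in Ioc (0:ℝ) 1, t * Real.exp (-(s*t) - t^2/2)

lemma integrable_aux (s : ℝ) : Integrable (fun t : ℝ => Real.exp (-(s*t) - t^2/2)) := by
  have h : Integrable (fun x : ℝ => Real.exp (-(2⁻¹:ℝ) * x ^ 2)) :=
    integrable_exp_neg_mul_sq (by norm_num)
  have h2 := (h.comp_add_right s).const_mul (Real.exp (s^2/2))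
  convert h2 using 2 with t
  rw [← Real.exp_add]; ring_nf

lemma cont_aux (s : ℝ) : Continuous (fun t : ℝ => t * Real.exp (-(s*t) - t^2/2)) := by
  fun_prop

lemma cfun_pos (s : ℝ) : 0 < cfun s := by
  rw [cfun]
  have hint : IntegrableOn (fun t : ℝ => t * Real.exp (-(s*t) - t^2/2)) (Ioc 0 1) :=
    (cont_aux s).integrableOn_Ioc
  have hae : 0 ≤ᶠ[ae (volume.restrict (Ioc (0:ℝ) 1))]
      fun t : ℝ => t * Real.exp (-(s*t) - t^2/2) := by
    filter_upwards [ae_restrict_mem measurableSet_Ioc] with t ht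
    exact mul_nonneg ht.1.le (Real.exp_pos _).le
  rw [setIntegral_pos_iff_support_of_nonneg_ae hae hint]
  · have hsub : Ioc (0:ℝ) 1 ⊆ Function.support (fun t : ℝ => t * Real.exp (-(s*t) - t^2/2)) := by
      intro t ht
      simp only [Function.mem_support]
      exact mul_ne_zero (ne_of_gt ht.1) (Real.exp_ne_zero _)
    calc (0:ENNReal) < volume (Ioc (0:ℝ) 1) := by simp
      _ ≤ volume (Function.support (fun t : ℝ => t * Real.exp (-(s*t) - t^2/2)) ∩ Ioc 0 1) := by
          apply measure_mono
          exact fun t ht => ⟨hsub ht, ht⟩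

lemma Hfun_ge_cfun (s : ℝ) : cfun s ≤ Hfun s := by
  rw [cfun, Hfun]
  have h1 : ∫ t in Ioc (0:ℝ) 1, t * Real.exp (-(s*t) - t^2/2)
      ≤ ∫ t in Ioc (0:ℝ) 1, Real.exp (-(s*t) - t^2/2) := by
    apply setIntegral_mono_on ((cont_aux s).integrableOn_Ioc)
      ((integrable_aux s).integrableOn) measurableSet_Ioc
    intro t ht
    nlinarith [Real.exp_pos (-(s*t) - t^2/2), ht.1, ht.2]
  refine h1.trans ?_
  apply setIntegral_mono_set (integrable_aux s).integrableOn
  · filter_upwards with t using (Real.exp_pos _).le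
  · filter_upwards with t ht using ht.1

lemma Hfun_pos (s : ℝ) : 0 < Hfun s := lt_of_lt_of_le (cfun_pos s) (Hfun_ge_cfun s)

lemma Hfun_anti {s s' : ℝ} (h : s ≤ s') :
    (s' - s)/(1 + (s' - s)) * cfun s ≤ Hfun s - Hfun s' := by
  set q := s' - s with hq
  have hq0 : 0 ≤ q := by simp [hq, h]
  have hsub : Hfun s - Hfun s'
      = ∫ t in Ioi (0:ℝ), (Real.exp (-(s*t) - t^2/2) - Real.exp (-(s'*t) - t^2/2)) := by
    rw [Hfun, Hfun, ← integral_sub (integrable_aux s).integrableOn (integrable_aux s').integrableOn]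
  rw [hsub]
  have hnn : ∀ t ∈ Ioi (0:ℝ),
      0 ≤ Real.exp (-(s*t) - t^2/2) - Real.exp (-(s'*t) - t^2/2) := by
    intro t ht
    have : -(s'*t) - t^2/2 ≤ -(s*t) - t^2/2 := by nlinarith [le_of_lt (show (0:ℝ) < t from ht)]
    simpa using Real.exp_le_exp.mpr this
  have hIoc : ∫ t in Ioc (0:ℝ) 1, (Real.exp (-(s*t) - t^2/2) - Real.exp (-(s'*t) - t^2/2))
      ≤ ∫ t in Ioi (0:ℝ), (Real.exp (-(s*t) - t^2/2) - Real.exp (-(s'*t) - t^2/2)) := by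
    apply setIntegral_mono_set
      (((integrable_aux s).sub (integrable_aux s')).integrableOn)
    · filter_upwards [ae_restrict_mem measurableSet_Ioi] with t ht using hnn t ht
    · filter_upwards with t ht using ht.1
  refine le_trans ?_ hIoc
  have hpt : ∀ t ∈ Ioc (0:ℝ) 1,
      q/(1+q) * (t * Real.exp (-(s*t) - t^2/2))
        ≤ Real.exp (-(s*t) - t^2/2) - Real.exp (-(s'*t) - t^2/2) := by
    intro t ht
    have ht0 : 0 < t := ht.1
    have ht1 : t ≤ 1 := ht.2
    have key : q/(1+q) * t ≤ 1 - Real.exp (-(q*t)) := by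
      have h1 : q*t + 1 ≤ Real.exp (q*t) := by
        have := Real.add_one_le_exp (q*t)
        linarith
      have hqt0 : 0 ≤ q*t := mul_nonneg hq0 ht0.le
      have h2 : Real.exp (-(q*t)) ≤ 1/(1+q*t) := by
        rw [Real.exp_neg, one_div]
        exact inv_anti₀ (by linarith) (by linarith)
      have h3 : 1 - 1/(1+q*t) = q*t/(1+q*t) := by
        field_simp
        ring
      have h4 : q/(1+q) * t ≤ q*t/(1+q*t) := by
        rw [div_mul_eq_mul_div, div_le_div_iff₀ (by linarith) (by nlinarith)]
        nlinarith [mul_le_mul_of_nonneg_left ht1 (mul_nonneg (mul_nonneg hqt0 hq0) hq0),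
          mul_le_mul_of_nonneg_left ht1 (mul_nonneg hqt0 hq0)]
      linarith [h2, h4, h3.symm ▸ (by linarith : 1 - 1/(1+q*t) ≤ 1 - Real.exp (-(q*t)))]
    have hexp : Real.exp (-(s'*t) - t^2/2)
        = Real.exp (-(s*t) - t^2/2) * Real.exp (-(q*t)) := by
      rw [← Real.exp_add]; congr 1; simp [hq]; ring
    have hE := Real.exp_pos (-(s*t) - t^2/2)
    rw [hexp]
    calc q/(1+q) * (t * Real.exp (-(s*t) - t^2/2))
        = (q/(1+q) * t) * Real.exp (-(s*t) - t^2/2) := by ring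
      _ ≤ (1 - Real.exp (-(q*t))) * Real.exp (-(s*t) - t^2/2) := by
          apply mul_le_mul_of_nonneg_right key hE.le
      _ = Real.exp (-(s*t) - t^2/2) - Real.exp (-(s*t) - t^2/2) * Real.exp (-(q*t)) := by ring
  calc q/(1+q) * cfun s
      = ∫ t in Ioc (0:ℝ) 1, q/(1+q) * (t * Real.exp (-(s*t) - t^2/2)) := by
        rw [cfun, integral_const_mul]
    _ ≤ ∫ t in Ioc (0:ℝ) 1, (Real.exp (-(s*t) - t^2/2) - Real.exp (-(s'*t) - t^2/2)) := by
        apply setIntegral_mono_on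
          (((cont_aux s).integrableOn_Ioc).const_mul _)
          (((integrable_aux s).sub (integrable_aux s')).integrableOn)
          measurableSet_Ioc hpt

lemma aux_translate_Ioi (a p : ℝ) :
    ∫ x in Ioi a, Real.exp (-(p*(x-a)) - (x-a)^2/2) = Hfun p := by
  have e : MeasurePreserving (fun t : ℝ => t + a) volume volume :=
    measurePreserving_add_right volume a
  have emb : MeasurableEmbedding (fun t : ℝ => t + a) :=
    (Homeomorph.addRight a).isClosedEmbedding.measurableEmbedding
  have key := MeasurableEmbedding.setIntegral_map (μ := volume) emb
    (fun x => Real.exp (-(p*(x-a)) - (x-a)^2/2)) (Ioi a)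
  rw [e.map_eq] at key
  rw [key]
  have : (fun t : ℝ => t + a) ⁻¹' (Ioi a) = Ioi 0 := by
    ext t; simp
  rw [this, Hfun]
  congr 1
  ext t
  simp

lemma aux_translate_Iio (a p : ℝ) :
    ∫ x in Iio a, Real.exp (-(p*(x-a)) - (x-a)^2/2) = Hfun (-p) := by
  have e : MeasurePreserving (fun t : ℝ => a - t) volume volume := by
    have h1 : MeasurePreserving (fun t : ℝ => -t) (volume : Measure ℝ) volume :=
      Measure.measurePreserving_neg volume
    have h2 : MeasurePreserving (fun t : ℝ => t + a) (volume : Measure ℝ) volume :=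
      measurePreserving_add_right volume a
    have := h2.comp h1
    convert this using 1
    ext t
    simp [sub_eq_neg_add, add_comm]
  have emb : MeasurableEmbedding (fun t : ℝ => a - t) := by
    have : (fun t : ℝ => a - t) = (fun t : ℝ => -t + a) := by ext t; ring
    rw [this]
    exact ((Homeomorph.neg ℝ).trans (Homeomorph.addRight a)).isClosedEmbedding.measurableEmbedding
  have key := MeasurableEmbedding.setIntegral_map (μ := volume) emb
    (fun x => Real.exp (-(p*(x-a)) - (x-a)^2/2)) (Iio a)
  rw [e.map_eq] at key
  rw [key]
  have : (fun t : ℝ => a - t) ⁻¹' (Iio a) = Ioi 0 := by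
    ext t; simp
  rw [this, Hfun]
  congr 1
  ext t
  have h : a - t - a = -t := by ring
  rw [h]
  congr 1
  ring

lemma integrable_shift (a p : ℝ) :
    Integrable (fun x : ℝ => Real.exp (-(p*(x-a)) - (x-a)^2/2)) :=
  (integrable_aux p).comp_sub_right a

/-! ### Convexity: right derivative -/

lemma convex_right_deriv {I : Set ℝ} {φ : ℝ → ℝ} {a : ℝ}
    (hI : IsOpen I) (ha : a ∈ I) (hφ : ConvexOn ℝ I φ) :
    ∃ r : ℝ, HasDerivWithinAt φ r (Ici a) a ∧ ∀ x ∈ I, φ a + r * (x - a) ≤ φ x := by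
  obtain ⟨ε, hε, hball⟩ := Metric.isOpen_iff.mp hI a ha
  rw [Real.ball_eq_Ioo] at hball
  set b := a + ε with hb
  have hIoo : Ioo a b ⊆ I := fun x hx => hball ⟨by linarith [hx.1], hx.2⟩
  have hne : (Ioo a b).Nonempty := ⟨a + ε/2, by constructor <;> simp [hb] <;> linarith⟩
  have ha₀ : a - ε/2 ∈ I := hball ⟨by linarith, by linarith⟩
  have hmono : MonotoneOn (slope φ a) (Ioo a b) := by
    intro x hx y hy hxy
    simp only [slope_def_field]
    exact hφ.secant_mono ha (hIoo hx) (hIoo hy) (ne_of_gt hx.1) (ne_of_gt hy.1) hxy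
  have hbdd : BddBelow (slope φ a '' Ioo a b) := by
    refine ⟨slope φ a (a - ε/2), ?_⟩
    rintro _ ⟨x, hx, rfl⟩
    simp only [slope_def_field]
    exact hφ.secant_mono ha ha₀ (hIoo hx) (ne_of_lt (by linarith)) (ne_of_gt hx.1)
      (by linarith [hx.1])
  set r := sInf (slope φ a '' Ioo a b) with hr
  have htend : Filter.Tendsto (slope φ a) (nhdsWithin a (Ioi a)) (nhds r) :=
    MonotoneOn.tendsto_nhdsWithin_Ioo_right hne hmono hbdd
  refine ⟨r, ?_, ?_⟩
  · rw [hasDerivWithinAt_iff_tendsto_slope]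
    rw [Ici_sdiff_left]
    exact htend
  · intro x hx
    rcases lt_trichotomy x a with hlt | heq | hgt
    · have hle : slope φ a x ≤ r := by
        apply le_csInf (hne.image _)
        rintro _ ⟨z, hz, rfl⟩
        simp only [slope_def_field]
        exact hφ.secant_mono ha hx (hIoo hz) (ne_of_lt hlt) (ne_of_gt hz.1) (by linarith [hz.1])
      rw [slope_def_field] at hle
      have := (div_le_iff_of_neg (show x - a < 0 by linarith)).mp hle
      linarith
    · simp [heq]
    · have hle : r ≤ slope φ a x := by
        set c := min x (a + ε/2) with hc
        have hcIoo : c ∈ Ioo a b := by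
          refine ⟨lt_min hgt (by linarith), lt_of_le_of_lt (min_le_right _ _) ?_⟩
          simp [hb]; linarith
        have h1 : r ≤ slope φ a c := csInf_le hbdd (mem_image_of_mem _ hcIoo)
        have h2 : slope φ a c ≤ slope φ a x := by
          simp only [slope_def_field]
          exact hφ.secant_mono ha (hIoo hcIoo) hx (ne_of_gt hcIoo.1) (ne_of_gt hgt)
            (min_le_left _ _)
        linarith
      rw [slope_def_field] at hle
      have := (le_div_iff₀ (show 0 < x - a by linarith)).mp hle
      linarith

lemma psi_props {I : Set ℝ} {ψ : ℝ → ℝ} {a : ℝ} (hI : IsOpen I) (hIc : Convex ℝ I) (ha : a ∈ I)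
    (hcvx : ∀ x ∈ I, ∀ y ∈ I, ∀ t ∈ Ioo (0:ℝ) 1,
      ψ ((1 - t) * x + t * y)
        ≤ (1 - t) * ψ x + t * ψ y - (1 / 2) * (1 - t) * t * |x - y| ^ 2) :
    ∀ x ∈ I, ψ a + (derivWithin ψ (Ici a) a) * (x - a) + (x - a)^2/2 ≤ ψ x := by
  set φ : ℝ → ℝ := fun x => ψ x - x^2/2 with hφ
  have hφconv : ConvexOn ℝ I φ := by
    refine ⟨hIc, ?_⟩
    intro x hx y hy p q hp hq hpq
    simp only [smul_eq_mul, hφ]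
    rcases eq_or_lt_of_le hq with hq0 | hq1
    · have : p = 1 := by linarith
      simp [← hq0, this]
    rcases eq_or_lt_of_le hp with hp0 | hp1
    · have : q = 1 := by linarith
      simp [← hp0, this]
    have hqlt : q < 1 := by linarith
    have := hcvx x hx y hy q ⟨hq1, hqlt⟩
    rw [sq_abs] at this
    have hp' : p = 1 - q := by linarith
    rw [hp']
    nlinarith [this]
  obtain ⟨r, hdr, hsub⟩ := convex_right_deriv hI ha hφconv
  have hsq : HasDerivWithinAt (fun x : ℝ => x^2/2) a (Ici a) a := by
    have := ((hasDerivAt_pow 2 a).div_const 2).hasDerivWithinAt (s := Ici a)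
    refine this.congr_deriv ?_
    norm_num
  have hψd : HasDerivWithinAt ψ (r + a) (Ici a) a := by
    have := hdr.add hsq
    have hfun : ψ = φ + fun x => x^2/2 := by ext x; simp [hφ]
    rw [hfun]; exact this
  have hderiv : derivWithin ψ (Ici a) a = r + a :=
    hψd.derivWithin (uniqueDiffOn_Ici a a self_mem_Ici)
  intro x hx
  have := hsub x hx
  simp only [hφ] at this
  rw [hderiv]
  nlinarith [this]

/-! ### Gaussian facts -/

lemma gaussPsi_shift (a x : ℝ) :
    Real.exp (-gaussPsi x) = Real.exp (-gaussPsi a) * Real.exp (-(a*(x-a)) - (x-a)^2/2) := by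
  rw [← Real.exp_add]
  congr 1
  simp only [gaussPsi]
  ring

lemma integrable_gaussPsi : Integrable (fun x : ℝ => Real.exp (-gaussPsi x)) := by
  have h : Integrable (fun x : ℝ => Real.exp (-(2⁻¹:ℝ) * x ^ 2)) :=
    integrable_exp_neg_mul_sq (by norm_num)
  have := h.const_mul (Real.exp (-(Real.log (2*π)/2)))
  convert this using 2 with x
  rw [← Real.exp_add, gaussPsi]
  ring_nf

lemma integral_gaussPsi : ∫ x : ℝ, Real.exp (-gaussPsi x) = 1 := by
  have h2π : 0 < 2*π := by positivity
  have hs : Real.exp (Real.log (2*π)/2) = Real.sqrt (2*π) := by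
    rw [← Real.exp_log (Real.sqrt_pos.mpr h2π), Real.log_sqrt h2π.le]
  have heq : (fun x : ℝ => Real.exp (-gaussPsi x))
      = fun x : ℝ => Real.exp (-(Real.log (2*π)/2)) * Real.exp (-(2⁻¹:ℝ) * x ^ 2) := by
    ext x
    rw [← Real.exp_add, gaussPsi]
    ring_nf
  rw [heq, integral_const_mul, integral_gaussian]
  have h : π / 2⁻¹ = 2 * π := by ring
  rw [h, Real.exp_neg, hs]
  rw [inv_mul_eq_div, div_eq_one_iff_eq (by positivity)]

lemma gauss_Iic_eq (a : ℝ) :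
    gauss (Iic a) = ENNReal.ofReal (∫ x in Iic a, Real.exp (-gaussPsi x)) := by
  rw [gauss, withDensity_apply _ measurableSet_Iic,
    ← ofReal_integral_eq_lintegral_ofReal integrable_gaussPsi.integrableOn]
  filter_upwards with x using (Real.exp_pos _).le

lemma gauss_mono {a a' : ℝ} (h : a < a') : gauss (Iic a) < gauss (Iic a') := by
  rw [gauss_Iic_eq, gauss_Iic_eq]
  apply ENNReal.ofReal_lt_ofReal_iff_of_nonneg (by positivity) |>.mpr
  have hsplit : ∫ x in Iic a', Real.exp (-gaussPsi x)
      = (∫ x in Iic a, Real.exp (-gaussPsi x)) + ∫ x in Ioc a a', Real.exp (-gaussPsi x) := by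
    rw [← setIntegral_union (Iic_disjoint_Ioc le_rfl) measurableSet_Ioc
      integrable_gaussPsi.integrableOn integrable_gaussPsi.integrableOn, Iic_union_Ioc_eq_Iic h.le]
  rw [hsplit]
  have hpos : 0 < ∫ x in Ioc a a', Real.exp (-gaussPsi x) := by
    have hae : 0 ≤ᶠ[ae (volume.restrict (Ioc a a'))] fun x : ℝ => Real.exp (-gaussPsi x) := by
      filter_upwards with x using (Real.exp_pos _).le
    rw [setIntegral_pos_iff_support_of_nonneg_ae hae integrable_gaussPsi.integrableOn]
    have hsupp : Function.support (fun x : ℝ => Real.exp (-gaussPsi x)) = univ := by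
      ext x; simp [Real.exp_ne_zero]
    rw [hsupp, univ_inter, Real.volume_Ioc]
    simp [h]
  linarith

lemma gauss_theta {a θ : ℝ} (hθ : θ ∈ Ioo (0:ℝ) 1) (h : gauss (Iic a) = ENNReal.ofReal θ) :
    θ = Real.exp (-gaussPsi a) * Hfun (-a)
      ∧ 1 - θ = Real.exp (-gaussPsi a) * Hfun a := by
  rw [gauss_Iic_eq] at h
  have hIic : ∫ x in Iic a, Real.exp (-gaussPsi x) = θ := by
    rw [ENNReal.ofReal_eq_ofReal_iff (by positivity) hθ.1.le] at h
    exact h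
  have hIio : ∫ x in Iio a, Real.exp (-gaussPsi x) = θ := by
    rw [setIntegral_congr_set Iio_ae_eq_Iic]; exact hIic
  have hshift : ∀ s : Set ℝ, ∫ x in s, Real.exp (-gaussPsi x)
      = Real.exp (-gaussPsi a) * ∫ x in s, Real.exp (-(a*(x-a)) - (x-a)^2/2) := by
    intro s
    rw [← integral_const_mul]
    exact integral_congr_ae (Filter.Eventually.of_forall fun x => gaussPsi_shift a x)
  constructor
  · rw [hshift, aux_translate_Iio] at hIio
    exact hIio.symm
  · have htot : (∫ x in Iic a, Real.exp (-gaussPsi x))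
        + ∫ x in Ioi a, Real.exp (-gaussPsi x) = 1 := by
      rw [← integral_gaussPsi]
      rw [← setIntegral_union (Iic_disjoint_Ioi le_rfl) measurableSet_Ioi
        integrable_gaussPsi.integrableOn integrable_gaussPsi.integrableOn, Iic_union_Ioi,
        setIntegral_univ]
    have hIoi : ∫ x in Ioi a, Real.exp (-gaussPsi x) = 1 - θ := by
      rw [hIic] at htot; linarith
    rw [hshift, aux_translate_Ioi] at hIoi
    exact hIoi.symm

/-! ### The measure `m` -/

lemma m_apply {I : Set ℝ} {ψ : ℝ → ℝ} (hI : MeasurableSet I) {S : Set ℝ} (hS : MeasurableSet S) :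
    MeasureTheory.volume.withDensity (I.indicator fun x => ENNReal.ofReal (Real.exp (-ψ x))) S
      = ∫⁻ x in S ∩ I, ENNReal.ofReal (Real.exp (-ψ x)) := by
  rw [withDensity_indicator hI, withDensity_apply _ hS, Measure.restrict_restrict hS]

lemma bound_side {I : Set ℝ} {ψ : ℝ → ℝ} {E p a : ℝ} {S : Set ℝ}
    (hI : MeasurableSet I) (hS : MeasurableSet S) (hE : 0 ≤ E)
    (hbound : ∀ x ∈ I, Real.exp (-ψ x) ≤ E * Real.exp (-(p*(x-a)) - (x-a)^2/2)) :
    ∫⁻ x in S ∩ I, ENNReal.ofReal (Real.exp (-ψ x))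
      ≤ ENNReal.ofReal (∫ x in S, E * Real.exp (-(p*(x-a)) - (x-a)^2/2)) := by
  calc ∫⁻ x in S ∩ I, ENNReal.ofReal (Real.exp (-ψ x))
      ≤ ∫⁻ x in S ∩ I, ENNReal.ofReal (E * Real.exp (-(p*(x-a)) - (x-a)^2/2)) := by
        apply lintegral_mono_ae
        filter_upwards [ae_restrict_mem (hS.inter hI)] with x hx
        exact ENNReal.ofReal_le_ofReal (hbound x hx.2)
    _ ≤ ∫⁻ x in S, ENNReal.ofReal (E * Real.exp (-(p*(x-a)) - (x-a)^2/2)) :=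
        lintegral_mono_set inter_subset_left
    _ = ENNReal.ofReal (∫ x in S, E * Real.exp (-(p*(x-a)) - (x-a)^2/2)) := by
        rw [← ofReal_integral_eq_lintegral_ofReal
          (((integrable_shift a p).const_mul E).integrableOn)]
        filter_upwards with x
        positivity

set_option maxHeartbeats 1000000

/-- the estimate `|ψ'_+(a_θ) - a_θ| ≤ C·δ`. -/
theorem right_derivative_estimate (θ : ℝ) (hθ : θ ∈ Ioo (0:ℝ) 1) :
    ∃ C : ℝ, 0 < C ∧ ∃ δ₀ : ℝ, 0 < δ₀ ∧
      ∀ (δ : ℝ), 0 < δ → δ ≤ δ₀ →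
      ∀ (I : Set ℝ) (ψ : ℝ → ℝ) (a : ℝ),
        IsOpen I → Convex ℝ I → a ∈ I →
        gauss (Iic a) = ENNReal.ofReal θ →
        (∀ x ∈ I, ∀ y ∈ I, ∀ t ∈ Ioo (0:ℝ) 1,
          ψ ((1 - t) * x + t * y)
            ≤ (1 - t) * ψ x + t * ψ y - (1 / 2) * (1 - t) * t * |x - y| ^ 2) →
        IsProbabilityMeasure
          (MeasureTheory.volume.withDensity
            (I.indicator fun x => ENNReal.ofReal (Real.exp (-ψ x)))) →
        (MeasureTheory.volume.withDensity
            (I.indicator fun x => ENNReal.ofReal (Real.exp (-ψ x)))) (Iic a ∩ I)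
          = ENNReal.ofReal θ →
        Real.exp (-ψ a) ≤ Real.exp (-gaussPsi a) + δ →
        |derivWithin ψ (Ici a) a - a| ≤ C * δ := by
  by_cases hex : ∃ a : ℝ, gauss (Iic a) = ENNReal.ofReal θ
  swap
  · exact ⟨1, one_pos, 1, one_pos,
      fun δ _ _ I ψ a _ _ _ hga _ _ _ _ => absurd ⟨a, hga⟩ hex⟩
  obtain ⟨a₀, ha₀⟩ := hex
  obtain ⟨hθeq, h1θeq⟩ := gauss_theta hθ ha₀
  set g : ℝ := Real.exp (-gaussPsi a₀) with hg
  have hgpos : 0 < g := Real.exp_pos _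
  set K : ℝ := min (cfun a₀) (cfun (-a₀)) with hK
  have hKpos : 0 < K := lt_min (cfun_pos _) (cfun_pos _)
  set M : ℝ := max (Hfun a₀) (Hfun (-a₀)) with hM
  have hMpos : 0 < M := lt_of_lt_of_le (Hfun_pos a₀) (le_max_left _ _)
  set D : ℝ := M / (g * K) with hD
  have hDpos : 0 < D := by positivity
  refine ⟨2 * D, by positivity, 1 / (2 * D), by positivity, ?_⟩
  intro δ hδ hδ₀ I ψ a hIopen hIconv haI hga hcvx hprob hmθ hdef
  -- identify a = a₀
  have haa : a = a₀ := by
    rcases lt_trichotomy a a₀ with h | h | h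
    · exact absurd (ha₀ ▸ hga ▸ gauss_mono h) (lt_irrefl _)
    · exact h
    · exact absurd (hga ▸ ha₀ ▸ gauss_mono h) (lt_irrefl _)
  subst haa
  clear hga
  set p : ℝ := derivWithin ψ (Ici a) a with hp
  set E : ℝ := Real.exp (-ψ a) with hE
  have hEpos : 0 < E := Real.exp_pos _
  have hEδ : E ≤ g + δ := hdef
  have hsub := psi_props hIopen hIconv haI hcvx
  have hbound : ∀ x ∈ I, Real.exp (-ψ x) ≤ E * Real.exp (-(p*(x-a)) - (x-a)^2/2) := by
    intro x hx
    rw [hE, ← Real.exp_add]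
    apply Real.exp_le_exp.mpr
    have := hsub x hx
    nlinarith [this]
  have hImeas : MeasurableSet I := hIopen.measurableSet
  set m := MeasureTheory.volume.withDensity
    (I.indicator fun x => ENNReal.ofReal (Real.exp (-ψ x))) with hm
  -- θ-side bound
  have hIic_int : ∫ x in Iic a, E * Real.exp (-(p*(x-a)) - (x-a)^2/2) = E * Hfun (-p) := by
    rw [integral_const_mul]
    congr 1
    rw [← aux_translate_Iio a p]
    exact setIntegral_congr_set Iio_ae_eq_Iic.symm
  have hθle : θ ≤ E * Hfun (-p) := by
    have h1 : m (Iic a ∩ I) = ∫⁻ x in Iic a ∩ I, ENNReal.ofReal (Real.exp (-ψ x)) := by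
      rw [hm, m_apply hImeas (measurableSet_Iic.inter hImeas), inter_assoc, inter_self]
    have h2 : ENNReal.ofReal θ ≤ ENNReal.ofReal (E * Hfun (-p)) := by
      rw [← hmθ, h1, ← hIic_int]
      exact bound_side hImeas measurableSet_Iic hEpos.le hbound
    exact (ENNReal.ofReal_le_ofReal_iff (mul_nonneg hEpos.le (Hfun_pos _).le)).mp h2
  -- (1-θ)-side bound
  have hIoi_int : ∫ x in Ioi a, E * Real.exp (-(p*(x-a)) - (x-a)^2/2) = E * Hfun p := by
    rw [integral_const_mul, aux_translate_Ioi]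
  have h1θle : 1 - θ ≤ E * Hfun p := by
    have hIicm : m (Iic a) = ENNReal.ofReal θ := by
      rw [hm, m_apply hImeas measurableSet_Iic, ← hmθ, hm,
        m_apply hImeas (measurableSet_Iic.inter hImeas), inter_assoc, inter_self]
    have hcompl : m (Ioi a) = 1 - ENNReal.ofReal θ := by
      have := measure_compl (μ := m) (s := Iic a) measurableSet_Iic (measure_ne_top m _)
      rw [compl_Iic] at this
      rw [this, hIicm, measure_univ]
    have hofreal : m (Ioi a) = ENNReal.ofReal (1 - θ) := by
      rw [hcompl, ENNReal.ofReal_sub 1 hθ.1.le, ENNReal.ofReal_one]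
    have h1 : m (Ioi a) = ∫⁻ x in Ioi a ∩ I, ENNReal.ofReal (Real.exp (-ψ x)) := by
      rw [hm, m_apply hImeas measurableSet_Ioi]
    have h2 : ENNReal.ofReal (1 - θ) ≤ ENNReal.ofReal (E * Hfun p) := by
      rw [← hofreal, h1, ← hIoi_int]
      exact bound_side hImeas measurableSet_Ioi hEpos.le hbound
    exact (ENNReal.ofReal_le_ofReal_iff (mul_nonneg hEpos.le (Hfun_pos _).le)).mp h2
  -- final arithmetic
  have habs : |p - a| ≤ 2 * D * δ := by
    rcases le_total a p with hap | hpa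
    · -- upper bound : use H at a and p
      set q : ℝ := p - a with hq
      have hq0 : 0 ≤ q := by simp [hq, hap]
      have hH := Hfun_anti hap
      have hHc : q/(1+q) * cfun a ≤ Hfun a - Hfun p := by
        simpa [← hq] using hH
      have hHple : Hfun p ≤ Hfun a := by
        nlinarith [cfun_pos a, div_nonneg hq0 (by linarith : (0:ℝ) ≤ 1 + q)]
      have hchain : g * Hfun a ≤ (g + δ) * Hfun p := by
        calc g * Hfun a = 1 - θ := h1θeq.symm
          _ ≤ E * Hfun p := h1θle
          _ ≤ (g + δ) * Hfun p := by
              apply mul_le_mul_of_nonneg_right hEδ (Hfun_pos p).le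
      have hstep : g * (Hfun a - Hfun p) ≤ δ * Hfun a := by
        nlinarith [hchain, hHple]
      have hqq : q/(1+q) ≤ D * δ := by
        have h1 : q/(1+q) * cfun a ≤ δ * Hfun a / g := by
          rw [le_div_iff₀ hgpos]
          nlinarith [hHc, hstep]
        have h2 : q/(1+q) ≤ δ * Hfun a / (g * cfun a) := by
          rw [le_div_iff₀ (mul_pos hgpos (cfun_pos a))]
          calc q/(1+q) * (g * cfun a) = (q/(1+q) * cfun a) * g := by ring
            _ ≤ (δ * Hfun a / g) * g := by
                apply mul_le_mul_of_nonneg_right h1 hgpos.le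
            _ = δ * Hfun a := by field_simp
        refine h2.trans ?_
        rw [hD, div_mul_eq_mul_div, div_le_div_iff₀ (mul_pos hgpos (cfun_pos a)) (mul_pos hgpos hKpos)]
        have hHa : Hfun a ≤ M := le_max_left _ _
        have hca : K ≤ cfun a := min_le_left _ _
        nlinarith [hδ.le, hgpos.le, hKpos.le, hMpos.le, (Hfun_pos a).le,
          mul_le_mul_of_nonneg_left hca (by positivity : (0:ℝ) ≤ δ * M),
          mul_le_mul_of_nonneg_left hHa (by positivity : (0:ℝ) ≤ δ * K)]
      have hq1 : q ≤ 1 := by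
        by_contra hq1
        push_neg at hq1
        have : (1:ℝ)/2 < q/(1+q) := by
          rw [div_lt_div_iff₀ (by norm_num) (by linarith)]
          linarith
        have hDδ : D * δ ≤ 1/2 := by
          have := mul_le_mul_of_nonneg_left hδ₀ hDpos.le
          calc D * δ ≤ D * (1/(2*D)) := this
            _ = 1/2 := by field_simp [hDpos.ne']; try ring
        linarith
      have h5 : q ≤ D * δ * (1+q) := (div_le_iff₀ (by linarith)).mp hqq
      have h6 : q ≤ 2 * D * δ := by nlinarith [mul_nonneg hDpos.le hδ.le]
      calc |p - a| = q := by rw [abs_of_nonneg (by simpa [hq] using hq0)]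
        _ ≤ 2 * D * δ := h6
    · -- lower bound : use H at -a and -p
      set q : ℝ := a - p with hq
      have hq0 : 0 ≤ q := by simp [hq, hpa]
      have hH := Hfun_anti (show -a ≤ -p by linarith)
      have hHc : q/(1+q) * cfun (-a) ≤ Hfun (-a) - Hfun (-p) := by
        have : -p - -a = q := by rw [hq]; ring
        simpa [this] using hH
      have hHple : Hfun (-p) ≤ Hfun (-a) := by
        nlinarith [cfun_pos (-a), div_nonneg hq0 (by linarith : (0:ℝ) ≤ 1 + q)]
      have hchain : g * Hfun (-a) ≤ (g + δ) * Hfun (-p) := by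
        calc g * Hfun (-a) = θ := hθeq.symm
          _ ≤ E * Hfun (-p) := hθle
          _ ≤ (g + δ) * Hfun (-p) := by
              apply mul_le_mul_of_nonneg_right hEδ (Hfun_pos _).le
      have hstep : g * (Hfun (-a) - Hfun (-p)) ≤ δ * Hfun (-a) := by
        nlinarith [hchain, hHple]
      have hqq : q/(1+q) ≤ D * δ := by
        have h1 : q/(1+q) * cfun (-a) ≤ δ * Hfun (-a) / g := by
          rw [le_div_iff₀ hgpos]
          nlinarith [hHc, hstep]
        have h2 : q/(1+q) ≤ δ * Hfun (-a) / (g * cfun (-a)) := by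
          rw [le_div_iff₀ (mul_pos hgpos (cfun_pos (-a)))]
          calc q/(1+q) * (g * cfun (-a)) = (q/(1+q) * cfun (-a)) * g := by ring
            _ ≤ (δ * Hfun (-a) / g) * g := by
                apply mul_le_mul_of_nonneg_right h1 hgpos.le
            _ = δ * Hfun (-a) := by field_simp
        refine h2.trans ?_
        rw [hD, div_mul_eq_mul_div, div_le_div_iff₀ (mul_pos hgpos (cfun_pos (-a))) (mul_pos hgpos hKpos)]
        have hHa : Hfun (-a) ≤ M := le_max_right _ _
        have hca : K ≤ cfun (-a) := min_le_right _ _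
        nlinarith [hδ.le, hgpos.le, hKpos.le, hMpos.le, (Hfun_pos (-a)).le,
          mul_le_mul_of_nonneg_left hca (by positivity : (0:ℝ) ≤ δ * M),
          mul_le_mul_of_nonneg_left hHa (by positivity : (0:ℝ) ≤ δ * K)]
      have hq1 : q ≤ 1 := by
        by_contra hq1
        push_neg at hq1
        have : (1:ℝ)/2 < q/(1+q) := by
          rw [div_lt_div_iff₀ (by norm_num) (by linarith)]
          linarith
        have hDδ : D * δ ≤ 1/2 := by
          have := mul_le_mul_of_nonneg_left hδ₀ hDpos.le
          calc D * δ ≤ D * (1/(2*D)) := this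
            _ = 1/2 := by field_simp [hDpos.ne']; try ring
        linarith
      have h5 : q ≤ D * δ * (1+q) := (div_le_iff₀ (by linarith)).mp hqq
      have h6 : q ≤ 2 * D * δ := by nlinarith [mul_nonneg hDpos.le hδ.le]
      calc |p - a| = q := by
            rw [abs_of_nonpos (by simpa [hq] using (by linarith : p - a ≤ 0))]
            rw [hq]; ring
        _ ≤ 2 * D * δ := h6
  exact habs
end

section
/- For every θ ∈ (0,1) there exist constants C = C(θ) > 0 and δ₀ = δ₀(θ) > 0 with the following property: if 0 < δ ≤ δ₀ and (I, ψ, m) satisfy the centering condition m((-∞, a_θ] ∩ I) = θ and the δ-deficit condition e^{-ψ(a_θ)} ≤ e^{-ψ_g(a_θ)} + δ, then with f(x) = e^{ψ_g(x) − ψ(x)} for x ∈ I and f(x) = 0 for x ∉ I, one has ∫_ℝ |x − a_θ| · |f(x) − 1| γ(dx) ≤ C·√δ. -/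
open MeasureTheory Real Set
open scoped ENNReal NNReal

namespace GaussAux

lemma gaussPsi_continuous : Continuous gaussPsi := by
  unfold gaussPsi; continuity

lemma two_pi_pos : (0:ℝ) < 2 * π := by positivity

lemma exp_half_log_two_pi : Real.exp (Real.log (2*π) / 2) = Real.sqrt (2*π) := by
  rw [← Real.log_sqrt (le_of_lt two_pi_pos)]
  exact Real.exp_log (Real.sqrt_pos.2 two_pi_pos)

lemma exp_linear_eq (c b x : ℝ) :
    Real.exp (c*x + b) * Real.exp (-gaussPsi x)
      = Real.exp (c^2/2 + b) * ((Real.sqrt (2*π))⁻¹ * Real.exp (-(1/2) * (x - c)^2)) := by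
  rw [← exp_half_log_two_pi, ← Real.exp_neg, ← Real.exp_add, ← Real.exp_add, ← Real.exp_add]
  congr 1
  unfold gaussPsi
  ring

lemma integrable_shift_gauss (c : ℝ) :
    Integrable (fun x : ℝ => Real.exp (-(1/2) * (x - c)^2)) := by
  have h := (integrable_exp_neg_mul_sq (by norm_num : (0:ℝ) < 1/2)).comp_sub_right c
  simpa using h

lemma integral_shift_gauss (c : ℝ) :
    ∫ x : ℝ, Real.exp (-(1/2) * (x - c)^2) = Real.sqrt (2*π) := by
  rw [integral_sub_right_eq_self (fun x : ℝ => Real.exp (-(1/2) * x^2)) c]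
  have := integral_gaussian (1/2)
  simpa [div_div_eq_mul_div, mul_comm] using this

lemma lintegral_exp_linear (c b : ℝ) :
    ∫⁻ x, ENNReal.ofReal (Real.exp (c*x + b)) ∂gauss = ENNReal.ofReal (Real.exp (c^2/2 + b)) := by
  unfold gauss
  rw [lintegral_withDensity_eq_lintegral_mul _ (by
      exact (Real.continuous_exp.comp gaussPsi_continuous.neg).measurable.ennreal_ofReal)
    (by exact (Real.continuous_exp.comp (by continuity)).measurable.ennreal_ofReal)]
  have hpt : ∀ x : ℝ, (ENNReal.ofReal (Real.exp (-gaussPsi x))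
      * ENNReal.ofReal (Real.exp (c*x + b)))
      = ENNReal.ofReal (Real.exp (c^2/2 + b) * ((Real.sqrt (2*π))⁻¹
          * Real.exp (-(1/2) * (x - c)^2))) := by
    intro x
    rw [← ENNReal.ofReal_mul (le_of_lt (Real.exp_pos _))]
    rw [mul_comm (Real.exp (-gaussPsi x)), exp_linear_eq]
  simp only [Pi.mul_apply, hpt]
  rw [← ofReal_integral_eq_lintegral_ofReal]
  · rw [integral_const_mul, integral_const_mul, integral_shift_gauss]
    congr 1
    field_simp
  · exact ((integrable_shift_gauss c).const_mul _).const_mul _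
  · filter_upwards with x
    positivity

lemma lintegral_exp_mul (c : ℝ) :
    ∫⁻ x, ENNReal.ofReal (Real.exp (c*x)) ∂gauss = ENNReal.ofReal (Real.exp (c^2/2)) := by
  simpa using lintegral_exp_linear c 0

instance : IsProbabilityMeasure gauss := by
  constructor
  have h := lintegral_exp_mul 0
  simpa [lintegral_one] using h


lemma gauss_apply {s : Set ℝ} (hs : MeasurableSet s) :
    gauss s = ∫⁻ x in s, ENNReal.ofReal (Real.exp (-gaussPsi x)) := by
  unfold gauss; exact withDensity_apply _ hs

lemma tail_Ioi (R : ℝ) : gauss (Ioi R) ≤ ENNReal.ofReal (Real.exp (1/2 - R)) := by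
  have h1 : gauss (Ioi R) = ∫⁻ x in Ioi R, 1 ∂gauss := (setLIntegral_one _).symm
  rw [h1]
  have h2 : ∫⁻ x in Ioi R, 1 ∂gauss ≤ ∫⁻ x in Ioi R, ENNReal.ofReal (Real.exp (1*x + (-R))) ∂gauss := by
    refine setLIntegral_mono (by exact (Real.continuous_exp.comp (by continuity)).measurable.ennreal_ofReal) ?_
    intro x hx
    rw [show (1:ℝ≥0∞) = ENNReal.ofReal (Real.exp 0) by simp]
    exact ENNReal.ofReal_le_ofReal (Real.exp_le_exp.2 (by simp at hx; linarith))
  refine h2.trans ((setLIntegral_le_lintegral _ _).trans ?_)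
  rw [lintegral_exp_linear]
  apply ENNReal.ofReal_le_ofReal
  apply Real.exp_le_exp.2; norm_num

lemma tail_Iic (R : ℝ) : gauss (Iic (-R)) ≤ ENNReal.ofReal (Real.exp (1/2 - R)) := by
  have h1 : gauss (Iic (-R)) = ∫⁻ x in Iic (-R), 1 ∂gauss := (setLIntegral_one _).symm
  rw [h1]
  have h2 : ∫⁻ x in Iic (-R), 1 ∂gauss
      ≤ ∫⁻ x in Iic (-R), ENNReal.ofReal (Real.exp ((-1)*x + (-R))) ∂gauss := by
    refine setLIntegral_mono (by exact (Real.continuous_exp.comp (by continuity)).measurable.ennreal_ofReal) ?_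
    intro x hx
    rw [show (1:ℝ≥0∞) = ENNReal.ofReal (Real.exp 0) by simp]
    exact ENNReal.ofReal_le_ofReal (Real.exp_le_exp.2 (by simp at hx; linarith))
  refine h2.trans ((setLIntegral_le_lintegral _ _).trans ?_)
  rw [lintegral_exp_linear]
  apply ENNReal.ofReal_le_ofReal
  apply Real.exp_le_exp.2; norm_num

lemma gauss_compl_Iic {a θ : ℝ} (hθ : θ ∈ Ioo (0:ℝ) 1) (h : gauss (Iic a) = ENNReal.ofReal θ) :
    gauss (Ioi a) = ENNReal.ofReal (1 - θ) := by
  have h1 : gauss (Ioi a) = 1 - gauss (Iic a) := by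
    rw [← compl_Iic]
    rw [measure_compl measurableSet_Iic (measure_ne_top _ _), measure_univ]
  rw [h1, h, ← ENNReal.ofReal_one, ← ENNReal.ofReal_sub _ (le_of_lt hθ.1)]

lemma abs_a_le_R {θ a R : ℝ} (hθ : θ ∈ Ioo (0:ℝ) 1) (h : gauss (Iic a) = ENNReal.ofReal θ)
    (hR : Real.exp (1/2 - R) < min θ (1 - θ)) : |a| ≤ R := by
  rw [abs_le]
  constructor
  · by_contra hc
    push_neg at hc
    have hsub : Iic a ⊆ Iic (-R) := Iic_subset_Iic.2 (by linarith)
    have := (measure_mono (μ := gauss) hsub).trans (tail_Iic R)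
    rw [h] at this
    have h2 : θ ≤ Real.exp (1/2 - R) :=
      (ENNReal.ofReal_le_ofReal_iff (le_of_lt (Real.exp_pos _))).1 this
    have := lt_min_iff.1 hR
    linarith [this.1]
  · by_contra hc
    push_neg at hc
    have hsub : Ioi a ⊆ Ioi R := fun x hx => lt_trans hc hx
    have := (measure_mono (μ := gauss) hsub).trans (tail_Ioi R)
    rw [gauss_compl_Iic hθ h] at this
    have h2 : 1 - θ ≤ Real.exp (1/2 - R) :=
      (ENNReal.ofReal_le_ofReal_iff (le_of_lt (Real.exp_pos _))).1 this
    have := lt_min_iff.1 hR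
    linarith [this.2]

lemma gauss_Icc_ge {b R : ℝ} (h1 : -(R+2) ≤ b) (h2 : b + 1 ≤ R + 2) :
    ENNReal.ofReal (Real.exp (-gaussPsi (R+2))) ≤ gauss (Icc b (b+1)) := by
  rw [gauss_apply measurableSet_Icc]
  have hpt : ∀ x ∈ Icc b (b+1),
      ENNReal.ofReal (Real.exp (-gaussPsi (R+2))) ≤ ENNReal.ofReal (Real.exp (-gaussPsi x)) := by
    intro x hx
    apply ENNReal.ofReal_le_ofReal
    apply Real.exp_le_exp.2
    simp only [neg_le_neg_iff, gaussPsi, add_le_add_iff_right, div_le_div_iff_of_pos_right]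
    have hx1 := hx.1; have hx2 := hx.2
    have : |x| ≤ R + 2 := by rw [abs_le]; constructor <;> linarith
    nlinarith [abs_nonneg x, sq_abs x]
  calc ENNReal.ofReal (Real.exp (-gaussPsi (R+2)))
      = ∫⁻ _ in Icc b (b+1), ENNReal.ofReal (Real.exp (-gaussPsi (R+2))) := by
        rw [setLIntegral_const, Real.volume_Icc]
        simp
    _ ≤ ∫⁻ x in Icc b (b+1), ENNReal.ofReal (Real.exp (-gaussPsi x)) := by
        exact setLIntegral_mono (by exact (Real.continuous_exp.comp gaussPsi_continuous.neg).measurable.ennreal_ofReal) hpt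

lemma moment_bound {a R : ℝ} (hA : |a| ≤ R) :
    ∫⁻ x, ENNReal.ofReal (Real.exp (2*|x - a|)) ∂gauss
      ≤ ENNReal.ofReal (2 * Real.exp (2 + 2*R)) := by
  have hpt : ∀ x : ℝ, ENNReal.ofReal (Real.exp (2*|x - a|))
      ≤ ENNReal.ofReal (Real.exp (2*x + (-2*a))) + ENNReal.ofReal (Real.exp ((-2)*x + 2*a)) := by
    intro x
    rcases abs_cases (x - a) with ⟨h, _⟩ | ⟨h, _⟩
    · refine le_trans (le_of_eq (by rw [h]; ring_nf)) (le_self_add)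
    · refine le_trans (le_of_eq (by rw [h]; ring_nf)) (le_add_self)
  calc ∫⁻ x, ENNReal.ofReal (Real.exp (2*|x - a|)) ∂gauss
      ≤ ∫⁻ x, (ENNReal.ofReal (Real.exp (2*x + (-2*a))) + ENNReal.ofReal (Real.exp ((-2)*x + 2*a))) ∂gauss :=
        lintegral_mono hpt
    _ = ENNReal.ofReal (Real.exp (2^2/2 + (-2*a))) + ENNReal.ofReal (Real.exp ((-2)^2/2 + 2*a)) := by
        rw [lintegral_add_left (by exact (Real.continuous_exp.comp (by continuity)).measurable.ennreal_ofReal)]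
        rw [lintegral_exp_linear, lintegral_exp_linear]
    _ ≤ ENNReal.ofReal (2 * Real.exp (2 + 2*R)) := by
        rw [← ENNReal.ofReal_add (le_of_lt (Real.exp_pos _)) (le_of_lt (Real.exp_pos _))]
        apply ENNReal.ofReal_le_ofReal
        have h1 : Real.exp (2^2/2 + (-2*a)) ≤ Real.exp (2 + 2*R) := by
          apply Real.exp_le_exp.2; rw [abs_le] at hA; norm_num; linarith
        have h2 : Real.exp ((-2)^2/2 + 2*a) ≤ Real.exp (2 + 2*R) := by
          apply Real.exp_le_exp.2; rw [abs_le] at hA; norm_num; linarith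
        linarith


lemma abs_le_exp_abs (t : ℝ) : |t| ≤ Real.exp |t| := by
  linarith [Real.add_one_le_exp |t|, abs_nonneg t]

lemma exp_convex_aux {ε M : ℝ} (hε0 : 0 ≤ ε) (hε1 : ε ≤ 1) :
    Real.exp (ε * M) - 1 ≤ ε * (Real.exp M - 1) := by
  have h := convexOn_exp.2 (mem_univ (0:ℝ)) (mem_univ M) (by linarith : (0:ℝ) ≤ 1 - ε) hε0
    (by ring)
  simp only [smul_eq_mul, mul_zero, zero_add, Real.exp_zero, mul_one] at h
  linarith

lemma neg_log_mul_le {β : ℝ} (h0 : 0 < β) (h1 : β ≤ 1) :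
    (-Real.log β) * β ≤ 2 * Real.sqrt β := by
  have hs : 0 < Real.sqrt β := Real.sqrt_pos.2 h0
  have hlog : Real.log β = 2 * Real.log (Real.sqrt β) := by
    rw [Real.log_sqrt (le_of_lt h0)]; ring
  have h2 : Real.log (Real.sqrt β)⁻¹ ≤ (Real.sqrt β)⁻¹ - 1 :=
    Real.log_le_sub_one_of_pos (by positivity)
  rw [Real.log_inv] at h2
  have h3 : -Real.log β ≤ 2 * (Real.sqrt β)⁻¹ := by rw [hlog]; linarith
  have h4 : (-Real.log β) * β ≤ 2 * (Real.sqrt β)⁻¹ * β := by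
    apply mul_le_mul_of_nonneg_right h3 (le_of_lt h0)
  refine h4.trans (le_of_eq ?_)
  field_simp
  nlinarith [Real.mul_self_sqrt (le_of_lt h0)]

lemma exp_neg_twok_le {κ : ℝ} (h0 : 0 < κ) (h1 : κ ≤ 1/2) :
    Real.exp (-(2*κ)) ≤ 1 - κ := by
  have e1 : 2*κ + 1 ≤ Real.exp (2*κ) := Real.add_one_le_exp _
  have e2 : Real.exp (-(2*κ)) * Real.exp (2*κ) = 1 := by rw [← Real.exp_add]; simp
  nlinarith [mul_le_mul_of_nonneg_left e1 (le_of_lt (Real.exp_pos (-(2*κ)))),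
    mul_nonneg (le_of_lt h0) (by linarith : (0:ℝ) ≤ 1 - 2*κ), h0]

lemma self_le_sqrt {δ : ℝ} (h0 : 0 < δ) (h1 : δ ≤ 1) : δ ≤ Real.sqrt δ := by
  have h2 : Real.sqrt δ * Real.sqrt δ = δ := Real.mul_self_sqrt (le_of_lt h0)
  have h3 : Real.sqrt δ ≤ 1 := by
    rw [show (1:ℝ) = Real.sqrt 1 by simp]
    exact Real.sqrt_le_sqrt h1
  nlinarith [Real.sqrt_nonneg δ]

lemma ofReal_add_four {w x y z : ℝ} (hw : 0 ≤ w) (hx : 0 ≤ x) (hy : 0 ≤ y) (hz : 0 ≤ z) :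
    ENNReal.ofReal w + ENNReal.ofReal x + ENNReal.ofReal y + ENNReal.ofReal z
      = ENNReal.ofReal (w+x+y+z) := by
  rw [← ENNReal.ofReal_add hw hx, ← ENNReal.ofReal_add (add_nonneg hw hx) hy,
    ← ENNReal.ofReal_add (add_nonneg (add_nonneg hw hx) hy) hz]

section Estimates

variable {F : ℝ → ℝ} {a R : ℝ}

lemma piece_pos_weighted {s : Set ℝ} {c : ℝ} (hc : 0 ≤ c) (hR : |a| ≤ R)
    (hbd : ∀ x ∈ s, max (F x - 1) 0 ≤ c * Real.exp |x - a|) :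
    ∫⁻ x in s, ENNReal.ofReal (|x - a| * max (F x - 1) 0) ∂gauss
      ≤ ENNReal.ofReal (c * (2 * Real.exp (2 + 2*R))) := by
  have hpt : ∀ x ∈ s, ENNReal.ofReal (|x - a| * max (F x - 1) 0)
      ≤ ENNReal.ofReal c * ENNReal.ofReal (Real.exp (2*|x - a|)) := by
    intro x hx
    rw [← ENNReal.ofReal_mul hc]
    apply ENNReal.ofReal_le_ofReal
    calc |x - a| * max (F x - 1) 0 ≤ |x - a| * (c * Real.exp |x - a|) :=
          mul_le_mul_of_nonneg_left (hbd x hx) (abs_nonneg _)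
      _ ≤ Real.exp |x - a| * (c * Real.exp |x - a|) :=
          mul_le_mul_of_nonneg_right (abs_le_exp_abs _) (by positivity)
      _ = c * Real.exp (2*|x - a|) := by
          rw [show 2*|x-a| = |x-a| + |x-a| by ring, Real.exp_add]; ring
  calc ∫⁻ x in s, ENNReal.ofReal (|x - a| * max (F x - 1) 0) ∂gauss
      ≤ ∫⁻ x in s, ENNReal.ofReal c * ENNReal.ofReal (Real.exp (2*|x - a|)) ∂gauss := by
        refine setLIntegral_mono (by
          exact (measurable_const.mul ((Real.continuous_exp.comp (by continuity)).measurable.ennreal_ofReal))) hpt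
    _ ≤ ENNReal.ofReal c * ∫⁻ x, ENNReal.ofReal (Real.exp (2*|x - a|)) ∂gauss := by
        rw [lintegral_const_mul _ (by
          exact (Real.continuous_exp.comp (by continuity)).measurable.ennreal_ofReal)]
        exact mul_le_mul_right (setLIntegral_le_lintegral _ _) _
    _ ≤ ENNReal.ofReal c * ENNReal.ofReal (2 * Real.exp (2 + 2*R)) :=
        mul_le_mul_right (moment_bound hR) _
    _ = ENNReal.ofReal (c * (2 * Real.exp (2 + 2*R))) := by
        rw [← ENNReal.ofReal_mul hc]

lemma piece_pos_unweighted {s : Set ℝ} {c : ℝ} (hc : 0 ≤ c) (hR : |a| ≤ R)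
    (hbd : ∀ x ∈ s, max (F x - 1) 0 ≤ c * Real.exp |x - a|) :
    ∫⁻ x in s, ENNReal.ofReal (max (F x - 1) 0) ∂gauss
      ≤ ENNReal.ofReal (c * (2 * Real.exp (2 + 2*R))) := by
  have hpt : ∀ x ∈ s, ENNReal.ofReal (max (F x - 1) 0)
      ≤ ENNReal.ofReal c * ENNReal.ofReal (Real.exp (2*|x - a|)) := by
    intro x hx
    rw [← ENNReal.ofReal_mul hc]
    apply ENNReal.ofReal_le_ofReal
    refine (hbd x hx).trans (mul_le_mul_of_nonneg_left ?_ hc)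
    apply Real.exp_le_exp.2
    linarith [abs_nonneg (x - a)]
  calc ∫⁻ x in s, ENNReal.ofReal (max (F x - 1) 0) ∂gauss
      ≤ ∫⁻ x in s, ENNReal.ofReal c * ENNReal.ofReal (Real.exp (2*|x - a|)) ∂gauss := by
        refine setLIntegral_mono (by
          exact (measurable_const.mul ((Real.continuous_exp.comp (by continuity)).measurable.ennreal_ofReal))) hpt
    _ ≤ ENNReal.ofReal c * ∫⁻ x, ENNReal.ofReal (Real.exp (2*|x - a|)) ∂gauss := by
        rw [lintegral_const_mul _ (by
          exact (Real.continuous_exp.comp (by continuity)).measurable.ennreal_ofReal)]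
        exact mul_le_mul_right (setLIntegral_le_lintegral _ _) _
    _ ≤ ENNReal.ofReal c * ENNReal.ofReal (2 * Real.exp (2 + 2*R)) :=
        mul_le_mul_right (moment_bound hR) _
    _ = ENNReal.ofReal (c * (2 * Real.exp (2 + 2*R))) := by
        rw [← ENNReal.ofReal_mul hc]

lemma balance_lemma {s : Set ℝ} (hF0 : ∀ x, 0 ≤ F x)
    (hFm : AEMeasurable F (gauss.restrict s))
    (hcent : ∫⁻ x in s, ENNReal.ofReal (F x) ∂gauss = gauss s) :
    ∫⁻ x in s, ENNReal.ofReal (max (1 - F x) 0) ∂gauss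
      = ∫⁻ x in s, ENNReal.ofReal (max (F x - 1) 0) ∂gauss := by
  have hpt : ∀ x, ENNReal.ofReal (F x) + ENNReal.ofReal (max (1 - F x) 0)
      = ENNReal.ofReal (max (F x - 1) 0) + 1 := by
    intro x
    rcases le_total (F x) 1 with h | h
    · rw [max_eq_left (by linarith), max_eq_right (by linarith),
        ← ENNReal.ofReal_add (hF0 x) (by linarith)]
      simp
    · rw [max_eq_right (by linarith), max_eq_left (by linarith)]
      rw [← ENNReal.ofReal_one, ← ENNReal.ofReal_add (by linarith) zero_le_one]
      simp
  have h1 : ∫⁻ x in s, (ENNReal.ofReal (F x) + ENNReal.ofReal (max (1 - F x) 0)) ∂gauss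
      = ∫⁻ x in s, (ENNReal.ofReal (max (F x - 1) 0) + 1) ∂gauss :=
    lintegral_congr fun x => hpt x
  rw [lintegral_add_left' hFm.ennreal_ofReal, lintegral_add_right'
      _ aemeasurable_const, hcent, setLIntegral_one] at h1
  have hpp : AEMeasurable (fun x => ENNReal.ofReal (max (F x - 1) 0)) (gauss.restrict s) :=
    ((hFm.sub aemeasurable_const).max aemeasurable_const).ennreal_ofReal
  exact (ENNReal.add_right_inj (measure_ne_top gauss s)).1 (by
    rw [h1, add_comm])

lemma piece_np {s : Set ℝ} {β : ℝ} (hβ0 : 0 < β) (hβ1 : β ≤ 1) (hR : |a| ≤ R)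
    (hF0 : ∀ x, 0 ≤ F x)
    (hFm : AEMeasurable F (gauss.restrict s))
    (hA : ∫⁻ x in s, ENNReal.ofReal (max (1 - F x) 0) ∂gauss ≤ ENNReal.ofReal β) :
    ∫⁻ x in s, ENNReal.ofReal (|x - a| * max (1 - F x) 0) ∂gauss
      ≤ ENNReal.ofReal (2*Real.sqrt β + β * (2 * Real.exp (2 + 2*R))) := by
  have hlogβ : 0 ≤ -Real.log β := by
    have := Real.log_nonpos (le_of_lt hβ0) hβ1
    linarith
  have hpt : ∀ x, |x - a| * max (1 - F x) 0
      ≤ (-Real.log β) * max (1 - F x) 0 + β * Real.exp (2*|x - a|) := by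
    intro x
    have hnp0 : 0 ≤ max (1 - F x) 0 := le_max_right _ _
    have hnp1 : max (1 - F x) 0 ≤ 1 := max_le (by linarith [hF0 x]) zero_le_one
    rcases le_total |x - a| (-Real.log β) with h | h
    · have : |x - a| * max (1 - F x) 0 ≤ (-Real.log β) * max (1 - F x) 0 :=
        mul_le_mul_of_nonneg_right h hnp0
      have hexp : (0:ℝ) ≤ β * Real.exp (2*|x - a|) := by positivity
      linarith
    · have hβe : Real.exp (-|x - a|) ≤ β := by
        rw [← Real.exp_log hβ0]
        apply Real.exp_le_exp.2
        linarith
      have h1 : |x - a| * max (1 - F x) 0 ≤ |x - a| := by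
        calc |x - a| * max (1 - F x) 0 ≤ |x - a| * 1 :=
            mul_le_mul_of_nonneg_left hnp1 (abs_nonneg _)
          _ = |x - a| := mul_one _
      have h2 : |x - a| ≤ Real.exp (2*|x - a|) * Real.exp (-|x - a|) := by
        rw [← Real.exp_add]
        calc |x - a| ≤ Real.exp |x - a| := abs_le_exp_abs _
          _ ≤ Real.exp (2*|x - a| + -|x - a|) := by
              apply Real.exp_le_exp.2; linarith [abs_nonneg (x - a)]
      have h3 : Real.exp (2*|x - a|) * Real.exp (-|x - a|) ≤ Real.exp (2*|x - a|) * β :=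
        mul_le_mul_of_nonneg_left hβe (le_of_lt (Real.exp_pos _))
      have h4 : (0:ℝ) ≤ (-Real.log β) * max (1 - F x) 0 := mul_nonneg hlogβ hnp0
      nlinarith
  have hmeas2 : AEMeasurable (fun x => ENNReal.ofReal ((-Real.log β) * max (1 - F x) 0)
      + ENNReal.ofReal (β * Real.exp (2*|x - a|))) (gauss.restrict s) := by
    refine AEMeasurable.add (f := fun x => ENNReal.ofReal ((-Real.log β) * max (1 - F x) 0))
      (g := fun x => ENNReal.ofReal (β * Real.exp (2*|x - a|))) ?_ ?_
    · exact ((aemeasurable_const.mul ((aemeasurable_const.sub hFm).max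
        aemeasurable_const))).ennreal_ofReal
    · exact ((Real.continuous_exp.comp (by continuity : Continuous fun x : ℝ => 2*|x - a|))
        |>.measurable.const_mul β).ennreal_ofReal.aemeasurable
  calc ∫⁻ x in s, ENNReal.ofReal (|x - a| * max (1 - F x) 0) ∂gauss
      ≤ ∫⁻ x in s, (ENNReal.ofReal ((-Real.log β) * max (1 - F x) 0)
          + ENNReal.ofReal (β * Real.exp (2*|x - a|))) ∂gauss := by
        refine setLIntegral_mono_ae hmeas2 (Filter.Eventually.of_forall fun x hx => ?_)
        refine le_trans (ENNReal.ofReal_le_ofReal (hpt x)) ?_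
        exact ENNReal.ofReal_add_le
    _ = ∫⁻ x in s, ENNReal.ofReal ((-Real.log β) * max (1 - F x) 0) ∂gauss
        + ∫⁻ x in s, ENNReal.ofReal (β * Real.exp (2*|x - a|)) ∂gauss := by
        rw [lintegral_add_left' (f := fun x => ENNReal.ofReal ((-Real.log β) * max (1 - F x) 0)) (((aemeasurable_const.mul ((aemeasurable_const.sub hFm).max
          aemeasurable_const))).ennreal_ofReal)]
    _ ≤ ENNReal.ofReal (-Real.log β) * ENNReal.ofReal β
        + ENNReal.ofReal β * ENNReal.ofReal (2 * Real.exp (2 + 2*R)) := by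
        refine add_le_add ?_ ?_
        · have hnpm : AEMeasurable (fun x => ENNReal.ofReal (max (1 - F x) 0))
              (gauss.restrict s) :=
            ((aemeasurable_const.sub hFm).max aemeasurable_const).ennreal_ofReal
          calc ∫⁻ x in s, ENNReal.ofReal ((-Real.log β) * max (1 - F x) 0) ∂gauss
              = ∫⁻ x in s, ENNReal.ofReal (-Real.log β)
                  * ENNReal.ofReal (max (1 - F x) 0) ∂gauss := by
                refine lintegral_congr fun x => ?_
                rw [← ENNReal.ofReal_mul hlogβ]
            _ = ENNReal.ofReal (-Real.log β)
                * ∫⁻ x in s, ENNReal.ofReal (max (1 - F x) 0) ∂gauss :=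
                lintegral_const_mul'' _ hnpm
            _ ≤ ENNReal.ofReal (-Real.log β) * ENNReal.ofReal β := mul_le_mul_right hA _
        · calc ∫⁻ x in s, ENNReal.ofReal (β * Real.exp (2*|x - a|)) ∂gauss
              = ENNReal.ofReal β * ∫⁻ x in s, ENNReal.ofReal (Real.exp (2*|x - a|)) ∂gauss := by
                rw [← lintegral_const_mul _ (by
                  exact (Real.continuous_exp.comp (by continuity)).measurable.ennreal_ofReal)]
                refine lintegral_congr fun x => ?_
                rw [← ENNReal.ofReal_mul (le_of_lt hβ0)]
            _ ≤ ENNReal.ofReal β * ENNReal.ofReal (2 * Real.exp (2 + 2*R)) :=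
                mul_le_mul_right ((setLIntegral_le_lintegral _ _).trans (moment_bound hR)) _
    _ ≤ ENNReal.ofReal (2*Real.sqrt β + β * (2 * Real.exp (2 + 2*R))) := by
        rw [← ENNReal.ofReal_mul hlogβ, ← ENNReal.ofReal_mul (le_of_lt hβ0)]
        rw [← ENNReal.ofReal_add (by positivity) (by positivity)]
        apply ENNReal.ofReal_le_ofReal
        have := neg_log_mul_le hβ0 hβ1
        linarith

lemma exists_good_point {s : Set ℝ} {b κ δ' : ℝ} (hκ : 0 < κ) (hδ'0 : 0 ≤ δ')
    (hFm : AEMeasurable F (gauss.restrict (Icc b (b+1))))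
    (hb1 : -(R+2) ≤ b) (hb2 : b+1 ≤ R+2)
    (hJs : Icc b (b+1) ⊆ s)
    (hA : ∫⁻ x in s, ENNReal.ofReal (max (1 - F x) 0) ∂gauss ≤ ENNReal.ofReal (2*δ'))
    (hgap : 2*δ' < κ * Real.exp (-gaussPsi (R+2))) :
    ∃ x₀ ∈ Icc b (b+1), max (1 - F x₀) 0 < κ := by
  by_contra hcon
  push_neg at hcon
  have hlow : ENNReal.ofReal (κ * Real.exp (-gaussPsi (R+2)))
      ≤ ∫⁻ x in Icc b (b+1), ENNReal.ofReal (max (1 - F x) 0) ∂gauss := by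
    calc ENNReal.ofReal (κ * Real.exp (-gaussPsi (R+2)))
        = ENNReal.ofReal κ * ENNReal.ofReal (Real.exp (-gaussPsi (R+2))) := by
          rw [← ENNReal.ofReal_mul (le_of_lt hκ)]
      _ ≤ ENNReal.ofReal κ * gauss (Icc b (b+1)) :=
          mul_le_mul_right (gauss_Icc_ge hb1 hb2) _
      _ = ∫⁻ _ in Icc b (b+1), ENNReal.ofReal κ ∂gauss := by rw [setLIntegral_const]
      _ ≤ ∫⁻ x in Icc b (b+1), ENNReal.ofReal (max (1 - F x) 0) ∂gauss := by
          refine setLIntegral_mono_ae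
            (((aemeasurable_const.sub hFm).max aemeasurable_const).ennreal_ofReal)
            (Filter.Eventually.of_forall fun x hx => ?_)
          exact ENNReal.ofReal_le_ofReal (hcon x hx)
  have hup : ∫⁻ x in Icc b (b+1), ENNReal.ofReal (max (1 - F x) 0) ∂gauss
      ≤ ENNReal.ofReal (2*δ') := by
    refine le_trans (lintegral_mono_set hJs) hA
  have := (hlow.trans hup)
  rw [ENNReal.ofReal_le_ofReal_iff (by linarith)] at this
  linarith


lemma piece_pos_const {s : Set ℝ} {c : ℝ} (hc : 0 ≤ c)
    (hbd : ∀ x ∈ s, max (F x - 1) 0 ≤ c) :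
    ∫⁻ x in s, ENNReal.ofReal (max (F x - 1) 0) ∂gauss ≤ ENNReal.ofReal c := by
  calc ∫⁻ x in s, ENNReal.ofReal (max (F x - 1) 0) ∂gauss
      ≤ ∫⁻ _ in s, ENNReal.ofReal c ∂gauss :=
        setLIntegral_mono measurable_const (fun x hx => ENNReal.ofReal_le_ofReal (hbd x hx))
    _ = ENNReal.ofReal c * gauss s := setLIntegral_const _ _
    _ ≤ ENNReal.ofReal c * 1 := mul_le_mul_right prob_le_one _
    _ = ENNReal.ofReal c := mul_one _

lemma assembly (hFm : AEMeasurable F gauss) {b₁ b₂ b₃ b₄ : ℝ≥0∞}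
    (h₁ : ∫⁻ x in Iic a, ENNReal.ofReal (|x - a| * max (F x - 1) 0) ∂gauss ≤ b₁)
    (h₂ : ∫⁻ x in Iic a, ENNReal.ofReal (|x - a| * max (1 - F x) 0) ∂gauss ≤ b₂)
    (h₃ : ∫⁻ x in Ioi a, ENNReal.ofReal (|x - a| * max (F x - 1) 0) ∂gauss ≤ b₃)
    (h₄ : ∫⁻ x in Ioi a, ENNReal.ofReal (|x - a| * max (1 - F x) 0) ∂gauss ≤ b₄) :
    ∫⁻ x, ENNReal.ofReal (|x - a| * |F x - 1|) ∂gauss ≤ b₁ + b₂ + b₃ + b₄ := by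
  have hsplit : ∀ x : ℝ, ENNReal.ofReal (|x - a| * |F x - 1|)
      = ENNReal.ofReal (|x - a| * max (F x - 1) 0) + ENNReal.ofReal (|x - a| * max (1 - F x) 0) := by
    intro x
    rw [← ENNReal.ofReal_add (by positivity) (by positivity)]
    congr 1
    have : |F x - 1| = max (F x - 1) 0 + max (1 - F x) 0 := by
      rcases le_total (F x) 1 with h | h
      · rw [max_eq_right (by linarith), max_eq_left (by linarith), abs_of_nonpos (by linarith)]
        ring
      · rw [max_eq_left (by linarith), max_eq_right (by linarith), abs_of_nonneg (by linarith)]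
        ring
    rw [this]; ring
  have hmpp : ∀ s : Set ℝ, AEMeasurable
      (fun x => ENNReal.ofReal (|x - a| * max (F x - 1) 0)) (gauss.restrict s) := by
    intro s
    exact (((continuous_abs.comp (continuous_id.sub continuous_const)).aemeasurable).mul
      (((hFm.restrict.sub aemeasurable_const).max aemeasurable_const))).ennreal_ofReal
  rw [← lintegral_add_compl (fun x => ENNReal.ofReal (|x - a| * |F x - 1|))
    (measurableSet_Iic (a := a)), compl_Iic]
  have e1 : ∫⁻ x in Iic a, ENNReal.ofReal (|x - a| * |F x - 1|) ∂gauss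
      = (∫⁻ x in Iic a, ENNReal.ofReal (|x - a| * max (F x - 1) 0) ∂gauss)
        + ∫⁻ x in Iic a, ENNReal.ofReal (|x - a| * max (1 - F x) 0) ∂gauss := by
    rw [← lintegral_add_left' (hmpp _)]
    exact lintegral_congr fun x => hsplit x
  have e2 : ∫⁻ x in Ioi a, ENNReal.ofReal (|x - a| * |F x - 1|) ∂gauss
      = (∫⁻ x in Ioi a, ENNReal.ofReal (|x - a| * max (F x - 1) 0) ∂gauss)
        + ∫⁻ x in Ioi a, ENNReal.ofReal (|x - a| * max (1 - F x) 0) ∂gauss := by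
    rw [← lintegral_add_left' (hmpp _)]
    exact lintegral_congr fun x => hsplit x
  rw [e1, e2]
  calc (∫⁻ x in Iic a, ENNReal.ofReal (|x - a| * max (F x - 1) 0) ∂gauss)
        + (∫⁻ x in Iic a, ENNReal.ofReal (|x - a| * max (1 - F x) 0) ∂gauss)
        + ((∫⁻ x in Ioi a, ENNReal.ofReal (|x - a| * max (F x - 1) 0) ∂gauss)
        + ∫⁻ x in Ioi a, ENNReal.ofReal (|x - a| * max (1 - F x) 0) ∂gauss)
      ≤ b₁ + b₂ + (b₃ + b₄) := add_le_add (add_le_add h₁ h₂) (add_le_add h₃ h₄)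
    _ = b₁ + b₂ + b₃ + b₄ := by ring

lemma final_conversion {D : ℝ} (hD : 0 ≤ D) (hFm : AEMeasurable F gauss)
    (h : ∫⁻ x, ENNReal.ofReal (|x - a| * |F x - 1|) ∂gauss ≤ ENNReal.ofReal D) :
    ∫ x, |x - a| * |F x - 1| ∂gauss ≤ D := by
  have h1 : AEMeasurable (fun x : ℝ => |x - a|) gauss :=
    ((measurable_id.sub measurable_const).abs).aemeasurable
  have h2 : AEMeasurable (fun x : ℝ => |F x - 1|) gauss :=
    continuous_abs.measurable.comp_aemeasurable (hFm.sub aemeasurable_const)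
  have hmeas : AEMeasurable (fun x : ℝ => |x - a| * |F x - 1|) gauss := h1.mul h2
  rw [integral_eq_lintegral_of_nonneg_ae
    (Filter.Eventually.of_forall fun x => by positivity) hmeas.aestronglyMeasurable]
  exact ENNReal.toReal_le_of_le_ofReal hD h

lemma centering_conversion {I : Set ℝ} {ψ : ℝ → ℝ} (hI : MeasurableSet I)
    (hFm : AEMeasurable (I.indicator fun y => Real.exp (gaussPsi y - ψ y)) volume)
    {s : Set ℝ} (hs : MeasurableSet s) :
    ∫⁻ x in s, ENNReal.ofReal ((I.indicator fun y => Real.exp (gaussPsi y - ψ y)) x) ∂gauss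
      = (volume.withDensity (I.indicator fun x => ENNReal.ofReal (Real.exp (-ψ x)))) s := by
  have hw : Measurable (fun x : ℝ => ENNReal.ofReal (Real.exp (-gaussPsi x))) := by
    exact (Real.continuous_exp.comp gaussPsi_continuous.neg).measurable.ennreal_ofReal
  have hg : AEMeasurable
      (fun x => ENNReal.ofReal ((I.indicator fun y => Real.exp (gaussPsi y - ψ y)) x))
      (((volume.restrict s)).withDensity (fun x => ENNReal.ofReal (Real.exp (-gaussPsi x)))) := by
    refine AEMeasurable.mono_ac ?_ (withDensity_absolutelyContinuous _ _)
    exact hFm.ennreal_ofReal.restrict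
  rw [withDensity_apply _ hs]
  unfold gauss
  rw [restrict_withDensity hs]
  rw [lintegral_withDensity_eq_lintegral_mul₀' hw.aemeasurable hg]
  refine setLIntegral_congr_fun hs (fun x _ => ?_)
  by_cases hx : x ∈ I
  · simp only [Pi.mul_apply, indicator_of_mem hx]
    rw [← ENNReal.ofReal_mul (le_of_lt (Real.exp_pos _)), ← Real.exp_add]
    congr 2
    ring
  · simp only [Pi.mul_apply, indicator_of_notMem hx]
    simp

end Estimates

end GaussAux

set_option maxHeartbeats 1000000 in
open GaussAux in
/-- the weighted `L¹`-estimate `∫ |x - a_θ|·|f - 1| dγ ≤ C·√δ`. -/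
theorem weighted_l1_estimate_on_interval (θ : ℝ) (hθ : θ ∈ Ioo (0:ℝ) 1) :
    ∃ C : ℝ, 0 < C ∧ ∃ δ₀ : ℝ, 0 < δ₀ ∧
      ∀ (δ : ℝ), 0 < δ → δ ≤ δ₀ →
      ∀ (I : Set ℝ) (ψ : ℝ → ℝ) (a : ℝ),
        IsOpen I → Convex ℝ I → a ∈ I →
        gauss (Iic a) = ENNReal.ofReal θ →
        (∀ x ∈ I, ∀ y ∈ I, ∀ t ∈ Ioo (0:ℝ) 1,
          ψ ((1 - t) * x + t * y)
            ≤ (1 - t) * ψ x + t * ψ y - (1 / 2) * (1 - t) * t * |x - y| ^ 2) →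
        IsProbabilityMeasure
          (MeasureTheory.volume.withDensity
            (I.indicator fun x => ENNReal.ofReal (Real.exp (-ψ x)))) →
        (MeasureTheory.volume.withDensity
            (I.indicator fun x => ENNReal.ofReal (Real.exp (-ψ x)))) (Iic a ∩ I)
          = ENNReal.ofReal θ →
        Real.exp (-ψ a) ≤ Real.exp (-gaussPsi a) + δ →
        (∫ x, |x - a| * |I.indicator (fun y => Real.exp (gaussPsi y - ψ y)) x - 1| ∂gauss)
          ≤ C * Real.sqrt δ := by
  obtain ⟨hθ0, hθ1⟩ := hθ
  obtain ⟨m', hm'def⟩ : ∃ m' : ℝ, m' = min θ (1 - θ) := ⟨_, rfl⟩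
  have hm'0 : 0 < m' := by rw [hm'def]; exact lt_min hθ0 (by linarith)
  have hm'1 : m' ≤ 1/2 := by
    rw [hm'def]
    rcases le_total θ (1-θ) with h | h
    · calc min θ (1-θ) ≤ θ := min_le_left _ _
        _ ≤ 1/2 := by linarith
    · calc min θ (1-θ) ≤ 1 - θ := min_le_right _ _
        _ ≤ 1/2 := by linarith
  obtain ⟨R, hRdef⟩ : ∃ R : ℝ, R = 1/2 - Real.log (m'/2) := ⟨_, rfl⟩
  have hRgap : Real.exp (1/2 - R) < m' := by
    rw [hRdef]
    have : (1:ℝ)/2 - (1/2 - Real.log (m'/2)) = Real.log (m'/2) := by ring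
    rw [this, Real.exp_log (by linarith)]
    linarith
  have hR1 : 1 ≤ R := by
    have h1 : Real.log (m'/2) ≤ Real.log (1/4) := by
      apply Real.log_le_log (by linarith)
      linarith
    have h2 : Real.log (1/4) = -(2 * Real.log 2) := by
      rw [show (1:ℝ)/4 = (2*2)⁻¹ by norm_num, Real.log_inv, Real.log_mul (by norm_num) (by norm_num)]
      ring
    have h3 := Real.log_two_gt_d9
    rw [hRdef]
    linarith
  obtain ⟨d, hddef⟩ : ∃ d : ℝ, d = Real.exp (-gaussPsi (R+2)) := ⟨_, rfl⟩
  have hd0 : 0 < d := by rw [hddef]; exact Real.exp_pos _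
  have hd1 : d ≤ 1 := by
    rw [hddef]
    rw [show (1:ℝ) = Real.exp 0 by simp]
    apply Real.exp_le_exp.2
    have h2π : (1:ℝ) ≤ 2*π := by nlinarith [Real.pi_gt_three]
    have : 0 ≤ Real.log (2*π) := Real.log_nonneg h2π
    have : 0 ≤ gaussPsi (R+2) := by unfold gaussPsi; positivity
    linarith
  obtain ⟨E, hEdef⟩ : ∃ E : ℝ, E = Real.sqrt (2*π) * Real.exp (R^2/2) := ⟨_, rfl⟩
  have hE1 : 1 ≤ E := by
    rw [hEdef]
    have h1 : (1:ℝ) ≤ Real.sqrt (2*π) := by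
      rw [show (1:ℝ) = Real.sqrt 1 by simp]
      apply Real.sqrt_le_sqrt
      nlinarith [Real.pi_gt_three]
    have h2 : (1:ℝ) ≤ Real.exp (R^2/2) := Real.one_le_exp (by positivity)
    nlinarith [mul_nonneg (sub_nonneg.2 h1) (sub_nonneg.2 h2)]
  have hE0 : 0 < E := by linarith
  obtain ⟨M₂, hM₂def⟩ : ∃ M₂ : ℝ, M₂ = 2 * Real.exp (2 + 2*R) := ⟨_, rfl⟩
  have hM₂1 : 1 ≤ M₂ := by
    rw [hM₂def]
    have : (1:ℝ) ≤ Real.exp (2+2*R) := Real.one_le_exp (by linarith)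
    linarith
  have hM₂0 : 0 < M₂ := by linarith
  obtain ⟨cε, hcεdef⟩ : ∃ cε : ℝ, cε = (1 + 8/d) * E := ⟨_, rfl⟩
  have hcε0 : 0 < cε := by
    rw [hcεdef]
    have h1 : 0 < 8/d := div_pos (by norm_num) hd0
    exact mul_pos (by linarith) hE0
  obtain ⟨K, hKdef⟩ : ∃ K : ℝ, K = cε * Real.exp 2 * M₂ := ⟨_, rfl⟩
  have hK0 : 0 < K := by
    rw [hKdef]
    exact mul_pos (mul_pos hcε0 (Real.exp_pos _)) hM₂0
  obtain ⟨B₁, hB₁def⟩ : ∃ B₁ : ℝ, B₁ = 2 * E * M₂ := ⟨_, rfl⟩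
  have hB₁0 : 0 < B₁ := by
    rw [hB₁def]
    exact mul_pos (mul_pos (by norm_num) hE0) hM₂0
  obtain ⟨C, hCdef⟩ : ∃ C : ℝ, C = B₁*(1+M₂) + 2*Real.sqrt B₁ + K*(1+M₂) + 2*Real.sqrt K := ⟨_, rfl⟩
  have hC0 : 0 < C := by
    rw [hCdef]
    have h1 := mul_pos hB₁0 (by linarith : (0:ℝ) < 1 + M₂)
    have h2 := mul_pos hK0 (by linarith : (0:ℝ) < 1 + M₂)
    have h3 := Real.sqrt_nonneg B₁
    have h4 := Real.sqrt_nonneg K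
    linarith
  refine ⟨C, hC0, (B₁ + K + cε + 1)⁻¹,
    inv_pos.2 (by linarith [hB₁0, hK0, hcε0] : (0:ℝ) < B₁ + K + cε + 1), ?_⟩
  intro δ hδ0 hδδ₀ I ψ a hIopen hIconv haI hcdf hconv hprob hcent hdef
  -- basic smallness facts
  have hsumpos : (0:ℝ) < B₁ + K + cε + 1 := by linarith [hB₁0, hK0, hcε0]
  have hsmall : (B₁ + K + cε + 1) * δ ≤ 1 := by
    have h := mul_le_mul_of_nonneg_left hδδ₀ (le_of_lt hsumpos)
    rwa [mul_inv_cancel₀ (ne_of_gt hsumpos)] at h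
  have hp1 : 0 ≤ B₁*δ := mul_nonneg (le_of_lt hB₁0) (le_of_lt hδ0)
  have hp2 : 0 ≤ K*δ := mul_nonneg (le_of_lt hK0) (le_of_lt hδ0)
  have hp3 : 0 ≤ cε*δ := mul_nonneg (le_of_lt hcε0) (le_of_lt hδ0)
  have hexpand : (B₁ + K + cε + 1) * δ = B₁*δ + K*δ + cε*δ + δ := by ring
  rw [hexpand] at hsmall
  have hδ1 : δ ≤ 1 := by linarith
  have hB₁δ : B₁ * δ ≤ 1 := by linarith
  have hKδ : K * δ ≤ 1 := by linarith
  have hcεδ : cε * δ ≤ 1 := by linarith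
  -- the function F and deficit parameter
  set F : ℝ → ℝ := I.indicator fun y => Real.exp (gaussPsi y - ψ y) with hFdef
  obtain ⟨δ', hδ'def⟩ : ∃ δ' : ℝ, δ' = δ * Real.exp (gaussPsi a) := ⟨_, rfl⟩
  have hδ'0 : 0 < δ' := by rw [hδ'def]; exact mul_pos hδ0 (Real.exp_pos _)
  have haR : |a| ≤ R := abs_a_le_R ⟨hθ0, hθ1⟩ hcdf (by rw [← hm'def]; exact hRgap)
  have hexpa : Real.exp (gaussPsi a) ≤ E := by
    rw [show gaussPsi a = a^2/2 + Real.log (2*π)/2 from rfl, Real.exp_add, exp_half_log_two_pi,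
      hEdef]
    have h1 : Real.exp (a^2/2) ≤ Real.exp (R^2/2) := by
      apply Real.exp_le_exp.2
      have hsq := sq_le_sq' (abs_le.1 haR).1 (abs_le.1 haR).2
      linarith [hsq]
    have h2 : (0:ℝ) < Real.sqrt (2*π) := Real.sqrt_pos.2 (by positivity)
    linarith [mul_le_mul_of_nonneg_right h1 (le_of_lt h2)]
  have hδ'E : δ' ≤ E * δ := by
    rw [hδ'def]
    calc δ * Real.exp (gaussPsi a) ≤ δ * E := mul_le_mul_of_nonneg_left hexpa (le_of_lt hδ0)
      _ = E * δ := mul_comm _ _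
  -- convexity and measurability of F
  have hψconv : ConvexOn ℝ I ψ := by
    refine ⟨hIconv, ?_⟩
    intro x hx y hy s t hs ht hst
    simp only [smul_eq_mul]
    rcases eq_or_lt_of_le hs with hs0 | hs0
    · rw [show t = 1 by linarith, ← hs0]; simp
    rcases eq_or_lt_of_le ht with ht0 | ht0
    · rw [show s = 1 by linarith, ← ht0]; simp
    · have hkey := hconv x hx y hy t ⟨ht0, by linarith⟩
      have hs' : s = 1 - t := by linarith
      rw [hs']
      have hpos : 0 ≤ 1/2*(1-t)*t*|x-y|^2 :=
        mul_nonneg (mul_nonneg (mul_nonneg (by norm_num) (by linarith)) (le_of_lt ht0))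
          (sq_nonneg _)
      linarith
  have hψcont : ContinuousOn ψ I := hψconv.continuousOn hIopen
  have hFc : ContinuousOn (fun y => Real.exp (gaussPsi y - ψ y)) I :=
    Real.continuous_exp.comp_continuousOn ((gaussPsi_continuous.continuousOn).sub hψcont)
  have hFm_vol : AEMeasurable F volume := by
    rw [hFdef]
    exact (aemeasurable_indicator_iff hIopen.measurableSet).2
      (hFc.aemeasurable hIopen.measurableSet)
  have hFm : AEMeasurable F gauss := by
    unfold gauss
    exact hFm_vol.mono_ac (withDensity_absolutelyContinuous _ _)
  have hF0 : ∀ x, 0 ≤ F x := by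
    intro x
    rw [hFdef]
    exact indicator_nonneg (fun y _ => le_of_lt (Real.exp_pos _)) x
  have hFI : ∀ x ∈ I, F x = Real.exp (gaussPsi x - ψ x) := by
    intro x hx; rw [hFdef]; exact indicator_of_mem hx _
  have hFout : ∀ x, x ∉ I → F x = 0 := by
    intro x hx; rw [hFdef]; exact indicator_of_notMem hx _
  -- centering conversions
  have hW : ∀ s : Set ℝ, MeasurableSet s → ∫⁻ x in s, ENNReal.ofReal (F x) ∂gauss
      = (volume.withDensity (I.indicator fun x => ENNReal.ofReal (Real.exp (-ψ x)))) s := by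
    intro s hs
    rw [hFdef]
    exact centering_conversion hIopen.measurableSet (by rw [hFdef] at hFm_vol; exact hFm_vol) hs
  have hWleftG : ∫⁻ x in Iic a, ENNReal.ofReal (F x) ∂gauss = gauss (Iic a) := by
    rw [hW _ measurableSet_Iic, hcdf]
    have hdiff : (volume.withDensity (I.indicator fun x => ENNReal.ofReal (Real.exp (-ψ x))))
        (Iic a \ I) = 0 := by
      rw [withDensity_apply _ (measurableSet_Iic.diff hIopen.measurableSet)]
      rw [setLIntegral_congr_fun (measurableSet_Iic.diff hIopen.measurableSet)
        (fun x hx => indicator_of_notMem hx.2 _)]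
      simp
    have := measure_inter_add_diff (μ := volume.withDensity
      (I.indicator fun x => ENNReal.ofReal (Real.exp (-ψ x)))) (Iic a) hIopen.measurableSet
    rw [hcent, hdiff, add_zero] at this
    exact this.symm
  have hWrightG : ∫⁻ x in Ioi a, ENNReal.ofReal (F x) ∂gauss = gauss (Ioi a) := by
    have hWtot : ∫⁻ x, ENNReal.ofReal (F x) ∂gauss = 1 := by
      have h := hW univ MeasurableSet.univ
      rw [Measure.restrict_univ] at h
      rw [h]
      exact hprob.measure_univ
    have h1 := hWtot
    rw [← lintegral_add_compl (fun x => ENNReal.ofReal (F x)) (measurableSet_Iic (a := a)),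
      compl_Iic] at h1
    have h2 : gauss (Iic a) + gauss (Ioi a) = 1 := by
      rw [← compl_Iic]
      rw [measure_add_measure_compl measurableSet_Iic]
      exact measure_univ
    rw [hWleftG, ← h2] at h1
    exact (ENNReal.add_right_inj (measure_ne_top _ _)).1 h1
  -- deficit
  have hFa : F a ≤ 1 + δ' := by
    rw [hFI a haI, hδ'def]
    have h1 : Real.exp (gaussPsi a - ψ a) = Real.exp (gaussPsi a) * Real.exp (-ψ a) := by
      rw [← Real.exp_add]; ring_nf
    rw [h1]
    calc Real.exp (gaussPsi a) * Real.exp (-ψ a)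
        ≤ Real.exp (gaussPsi a) * (Real.exp (-gaussPsi a) + δ) :=
          mul_le_mul_of_nonneg_left hdef (le_of_lt (Real.exp_pos _))
      _ = 1 + δ * Real.exp (gaussPsi a) := by
          rw [mul_add, ← Real.exp_add]
          simp [mul_comm]
  have hga : gaussPsi a - ψ a ≤ δ' := by
    have h1 : Real.exp (gaussPsi a - ψ a) ≤ Real.exp δ' := by
      rw [← hFI a haI]
      exact hFa.trans (by linarith [Real.add_one_le_exp δ'])
    exact Real.exp_le_exp.1 h1
  -- concavity of g := gaussPsi - ψ along I
  have hsec : ∀ p ∈ I, ∀ r ∈ I, ∀ t ∈ Ioo (0:ℝ) 1,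
      (1-t)*(gaussPsi p - ψ p) + t*(gaussPsi r - ψ r)
        ≤ gaussPsi ((1-t)*p + t*r) - ψ ((1-t)*p + t*r) := by
    intro p hp r hr t ht
    have hkey := hconv p hp r hr t ht
    have hid : gaussPsi ((1-t)*p + t*r)
        = (1-t)*gaussPsi p + t*gaussPsi r - 1/2*(1-t)*t*(p-r)^2 := by
      show ((1-t)*p + t*r)^2/2 + Real.log (2*π)/2 = _
      show _ = (1-t)*(p^2/2 + Real.log (2*π)/2) + t*(r^2/2 + Real.log (2*π)/2)
        - 1/2*(1-t)*t*(p-r)^2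
      ring
    have habs : |p - r|^2 = (p-r)^2 := sq_abs _
    rw [habs] at hkey
    linarith
  -- dichotomy
  have dich : (∀ x, x ≤ a → F x ≤ 1 + 2*δ') ∨ (∀ x, a ≤ x → F x ≤ 1 + 2*δ') := by
    by_contra hcon
    push_neg at hcon
    obtain ⟨⟨x, hxa, hxF⟩, ⟨y, hya, hyF⟩⟩ := hcon
    have hxI : x ∈ I := by
      by_contra h; rw [hFout x h] at hxF; linarith
    have hyI : y ∈ I := by
      by_contra h; rw [hFout y h] at hyF; linarith
    have hxa' : x < a := by
      rcases lt_or_eq_of_le hxa with h | h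
      · exact h
      · exfalso; rw [h] at hxF; linarith
    have hya' : a < y := by
      rcases lt_or_eq_of_le hya with h | h
      · exact h
      · exfalso; rw [← h] at hyF; linarith
    have hyx : 0 < y - x := by linarith
    have ht : (a - x)/(y - x) ∈ Ioo (0:ℝ) 1 :=
      ⟨div_pos (by linarith) hyx, (div_lt_one hyx).2 (by linarith)⟩
    have hcombo : (1-(a - x)/(y - x))*x + ((a - x)/(y - x))*y = a := by
      field_simp
      ring
    have hkey := hsec x hxI y hyI _ ht
    rw [hcombo] at hkey
    set t := (a - x)/(y - x)
    have hgmin : min (gaussPsi x - ψ x) (gaussPsi y - ψ y) ≤ gaussPsi a - ψ a := by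
      rcases le_total (gaussPsi x - ψ x) (gaussPsi y - ψ y) with h | h
      · rw [min_eq_left h]
        have h2 : t*(gaussPsi x - ψ x) ≤ t*(gaussPsi y - ψ y) :=
          mul_le_mul_of_nonneg_left h (le_of_lt ht.1)
        linarith
      · rw [min_eq_right h]
        have h2 : (1-t)*(gaussPsi y - ψ y) ≤ (1-t)*(gaussPsi x - ψ x) :=
          mul_le_mul_of_nonneg_left h (by linarith [ht.2])
        linarith
    have hFa2 : 1 + 2*δ' < F a := by
      rw [hFI a haI]
      rcases min_cases (gaussPsi x - ψ x) (gaussPsi y - ψ y) with ⟨hmeq, _⟩ | ⟨hmeq, _⟩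
      · rw [hmeq] at hgmin
        calc 1 + 2*δ' < F x := hxF
          _ = Real.exp (gaussPsi x - ψ x) := hFI x hxI
          _ ≤ Real.exp (gaussPsi a - ψ a) := Real.exp_le_exp.2 hgmin
      · rw [hmeq] at hgmin
        calc 1 + 2*δ' < F y := hyF
          _ = Real.exp (gaussPsi y - ψ y) := hFI y hyI
          _ ≤ Real.exp (gaussPsi a - ψ a) := Real.exp_le_exp.2 hgmin
    linarith
  -- κ and ε
  obtain ⟨κ, hκdef⟩ : ∃ κ : ℝ, κ = 4*δ'/d := ⟨_, rfl⟩
  have hκ0 : 0 < κ := by rw [hκdef]; exact div_pos (by linarith) hd0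
  have hκhalf : κ ≤ 1/2 := by
    have hid : (1+8/d)*E*δ = E*δ + 8*(E*δ)/d := by field_simp
    have h1 : 8*(E*δ)/d ≤ cε*δ := by
      rw [hcεdef, hid]
      linarith [mul_nonneg (le_of_lt hE0) (le_of_lt hδ0)]
    have h2 : 4*δ'/d ≤ 4*(E*δ)/d :=
      (div_le_div_iff_of_pos_right hd0).2 (by linarith [hδ'E])
    rw [hκdef]
    have h3 : 4*(E*δ)/d = (8*(E*δ)/d)/2 := by ring
    linarith
  obtain ⟨ε, hεdef⟩ : ∃ ε : ℝ, ε = δ' + 2*κ := ⟨_, rfl⟩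
  have hε0 : 0 ≤ ε := by rw [hεdef]; linarith
  have hεδ' : δ' ≤ ε := by rw [hεdef]; linarith
  have hεcε : ε ≤ cε*δ := by
    have hid : (1+8/d)*E*δ = E*δ + 8*(E*δ)/d := by field_simp
    have h2 : 8*δ'/d ≤ 8*(E*δ)/d :=
      (div_le_div_iff_of_pos_right hd0).2 (by linarith [hδ'E])
    have h3 : 2*κ = 8*δ'/d := by rw [hκdef]; ring
    rw [hεdef, hcεdef, hid, h3]
    linarith [hδ'E]
  have hε1 : ε ≤ 1 := le_trans hεcε hcεδ
  have hexpκ : Real.exp (-(2*κ)) ≤ 1 - κ := exp_neg_twok_le hκ0 hκhalf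
  -- sqrt facts
  have hδsqrt : δ ≤ Real.sqrt δ := self_le_sqrt hδ0 hδ1
  have harith : (2*E*δ)*(2*Real.exp (2+2*R))
      + (2*Real.sqrt (B₁*δ) + B₁*δ*(2*Real.exp (2+2*R)))
      + K*δ + (2*Real.sqrt (K*δ) + K*δ*(2*Real.exp (2+2*R))) ≤ C*Real.sqrt δ := by
    have hsB₁ : Real.sqrt (B₁*δ) = Real.sqrt B₁ * Real.sqrt δ := Real.sqrt_mul (le_of_lt hB₁0) δ
    have hsK : Real.sqrt (K*δ) = Real.sqrt K * Real.sqrt δ := Real.sqrt_mul (le_of_lt hK0) δ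
    have e3 : (2*E*δ)*(2*Real.exp (2+2*R)) = B₁*δ := by rw [hB₁def, hM₂def]; ring
    have e4 : B₁*δ*(2*Real.exp (2+2*R)) = B₁*δ*M₂ := by rw [hM₂def]
    have e5 : K*δ*(2*Real.exp (2+2*R)) = K*δ*M₂ := by rw [hM₂def]
    rw [hsB₁, hsK, hCdef, e3, e4, e5]
    have i1 : B₁*δ ≤ B₁*Real.sqrt δ := mul_le_mul_of_nonneg_left hδsqrt (le_of_lt hB₁0)
    have i2 : B₁*δ*M₂ ≤ B₁*Real.sqrt δ*M₂ := mul_le_mul_of_nonneg_right i1 (le_of_lt hM₂0)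
    have i3 : K*δ ≤ K*Real.sqrt δ := mul_le_mul_of_nonneg_left hδsqrt (le_of_lt hK0)
    have i4 : K*δ*M₂ ≤ K*Real.sqrt δ*M₂ := mul_le_mul_of_nonneg_right i3 (le_of_lt hM₂0)
    linarith [i1, i2, i3, i4, Real.sqrt_nonneg B₁, Real.sqrt_nonneg K, Real.sqrt_nonneg δ]
  -- nonnegativity of the four bound values
  have hEδ0 : (0:ℝ) ≤ 2*E*δ := mul_nonneg (mul_nonneg (by norm_num) (le_of_lt hE0)) (le_of_lt hδ0)
  have hexp2R0 : (0:ℝ) ≤ 2*Real.exp (2+2*R) := by positivity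
  have hw1 : (0:ℝ) ≤ (2*E*δ)*(2*Real.exp (2+2*R)) := mul_nonneg hEδ0 hexp2R0
  have hw2 : (0:ℝ) ≤ 2*Real.sqrt (B₁*δ) + B₁*δ*(2*Real.exp (2+2*R)) :=
    add_nonneg (mul_nonneg (by norm_num) (Real.sqrt_nonneg _)) (mul_nonneg hp1 hexp2R0)
  have hw3 : (0:ℝ) ≤ K*δ := hp2
  have hw4 : (0:ℝ) ≤ 2*Real.sqrt (K*δ) + K*δ*(2*Real.exp (2+2*R)) :=
    add_nonneg (mul_nonneg (by norm_num) (Real.sqrt_nonneg _)) (mul_nonneg hp2 hexp2R0)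
  have hKeq : (cε*δ*Real.exp 2) * (2*Real.exp (2+2*R)) = K*δ := by rw [hKdef, hM₂def]; ring
  have h2δ'B₁ : 2*δ' ≤ B₁*δ := by
    rw [hB₁def]
    have h1 := mul_nonneg (by linarith : (0:ℝ) ≤ M₂ - 1) (mul_nonneg (le_of_lt hE0) (le_of_lt hδ0))
    linarith [hδ'E]
  have hCsq0 : (0:ℝ) ≤ C * Real.sqrt δ := mul_nonneg (le_of_lt hC0) (Real.sqrt_nonneg _)
  have habsle := abs_le.1 haR
  rcases dich with hEasy | hEasy
  · -- CASE R : easy side Iic a, hard side Ioi a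
    have hbdE : ∀ x ∈ Iic a, max (F x - 1) 0 ≤ (2*E*δ) * Real.exp |x - a| := by
      intro x hx
      have h1 := hEasy x hx
      have h2 : (1:ℝ) ≤ Real.exp |x-a| := Real.one_le_exp (abs_nonneg _)
      refine max_le ?_ (mul_nonneg hEδ0 (le_of_lt (Real.exp_pos _)))
      have h3 := mul_nonneg hEδ0 (sub_nonneg.2 h2)
      linarith [hδ'E]
    have hppE := piece_pos_weighted (a := a) (c := 2*E*δ) hEδ0 haR hbdE
    have hppE_const : ∫⁻ x in Iic a, ENNReal.ofReal (max (F x - 1) 0) ∂gauss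
        ≤ ENNReal.ofReal (2*δ') :=
      piece_pos_const (by linarith) (fun x hx => max_le (by linarith [hEasy x hx]) (by linarith))
    have hbal_left := balance_lemma hF0 hFm.restrict hWleftG
    have hnpE_int : ∫⁻ x in Iic a, ENNReal.ofReal (max (1 - F x) 0) ∂gauss
        ≤ ENNReal.ofReal (2*δ') := by rw [hbal_left]; exact hppE_const
    have hnp_left := piece_np (a := a) (β := B₁*δ)
      (mul_pos hB₁0 hδ0) hB₁δ haR hF0 hFm.restrict
      (hnpE_int.trans (ENNReal.ofReal_le_ofReal h2δ'B₁))
    -- hard side point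
    obtain ⟨x₀, hx₀J, hx₀np⟩ := exists_good_point hκ0 (le_of_lt hδ'0)
      hFm.restrict (by linarith [habsle.1] : -(R+2) ≤ a-2) (by linarith [habsle.2])
      (fun x hx => le_trans hx.2 (by linarith) : Icc (a-2) ((a-2)+1) ⊆ Iic a)
      (by
        have : (a-2)+1 = a-1 := by ring
        exact hnpE_int)
      (by
        rw [hκdef, ← hddef, div_mul_cancel₀ _ (ne_of_gt hd0)]
        linarith)
    have hx₀1 : x₀ ≤ a - 1 := by have := hx₀J.2; linarith
    have hx₀2 : a - 2 ≤ x₀ := hx₀J.1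
    have hFx₀ : 1 - κ < F x₀ := by
      have h := le_max_left (1 - F x₀) 0
      linarith [hx₀np]
    have hx₀I : x₀ ∈ I := by
      by_contra h
      rw [hFout x₀ h] at hFx₀
      linarith
    have hgx₀ : -(2*κ) ≤ gaussPsi x₀ - ψ x₀ := by
      apply Real.exp_le_exp.1
      rw [← hFI x₀ hx₀I]
      linarith
    -- the secant bound on the right
    have hHard : ∀ x, a ≤ x → F x ≤ Real.exp (ε * (|x - a| + 2)) := by
      intro x hax
      rcases eq_or_lt_of_le hax with heq | hlt
      · rw [← heq]
        have h1 : 1 + δ' ≤ Real.exp (ε*(|a-a|+2)) := by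
          simp only [sub_self, abs_zero, zero_add]
          calc 1 + δ' ≤ 1 + ε := by linarith
            _ ≤ Real.exp ε := by linarith [Real.add_one_le_exp ε]
            _ ≤ Real.exp (ε*2) := Real.exp_le_exp.2 (by linarith)
        exact hFa.trans h1
      · by_cases hxI : x ∈ I
        · rw [hFI x hxI]
          apply Real.exp_le_exp.2
          rw [abs_of_nonneg (by linarith : (0:ℝ) ≤ x - a)]
          have hDpos : 0 < x - x₀ := by linarith
          have hupos : 0 < a - x₀ := by linarith
          have ht : (a - x₀)/(x - x₀) ∈ Ioo (0:ℝ) 1 :=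
            ⟨div_pos hupos hDpos, (div_lt_one hDpos).2 (by linarith)⟩
          have hcombo : (1-(a - x₀)/(x - x₀))*x₀ + ((a - x₀)/(x - x₀))*x = a := by
            field_simp
            ring
          have hkey := hsec x₀ hx₀I x hxI _ ht
          rw [hcombo] at hkey
          set t := (a - x₀)/(x - x₀) with htdef
          have h1 : t*(gaussPsi x - ψ x) ≤ δ' + (1-t)*(2*κ) := by
            have hp : (1-t)*(-(2*κ)) ≤ (1-t)*(gaussPsi x₀ - ψ x₀) :=
              mul_le_mul_of_nonneg_left hgx₀ (by linarith [ht.2])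
            linarith [hkey, hga]
          have e1 : t*(x-x₀) = a-x₀ := by rw [htdef]; field_simp
          have e2 : (1-t)*(x-x₀) = x-a := by rw [htdef]; field_simp; ring
          have h2 : (a - x₀)*(gaussPsi x - ψ x) ≤ δ'*(x-x₀) + 2*κ*(x-a) := by
            calc (a - x₀)*(gaussPsi x - ψ x) = (t*(x-x₀))*(gaussPsi x - ψ x) := by rw [e1]
              _ = (t*(gaussPsi x - ψ x))*(x-x₀) := by ring
              _ ≤ (δ' + (1-t)*(2*κ))*(x-x₀) := mul_le_mul_of_nonneg_right h1 (le_of_lt hDpos)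
              _ = δ'*(x-x₀) + 2*κ*((1-t)*(x-x₀)) := by ring
              _ = δ'*(x-x₀) + 2*κ*(x-a) := by rw [e2]
          rcases le_total (gaussPsi x - ψ x) 0 with hneg | hpos2
          · have : 0 ≤ ε*((x-a)+2) := mul_nonneg hε0 (by linarith)
            linarith
          · have h4 : gaussPsi x - ψ x ≤ (a-x₀)*(gaussPsi x - ψ x) := by
              linarith [mul_nonneg hpos2 (by linarith : (0:ℝ) ≤ a-x₀-1)]
            have h5 : δ'*(x-x₀) ≤ δ'*((x-a)+2) :=
              mul_le_mul_of_nonneg_left (by linarith) (le_of_lt hδ'0)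
            have h6 : 2*κ*(x-a) ≤ 2*κ*((x-a)+2) :=
              mul_le_mul_of_nonneg_left (by linarith) (by linarith)
            rw [hεdef]
            linarith [h2, h4, h5, h6]
        · rw [hFout x hxI]
          exact (Real.exp_pos _).le
    have hbdH : ∀ x ∈ Ioi a, max (F x - 1) 0 ≤ (cε*δ*Real.exp 2) * Real.exp |x-a| := by
      intro x hx
      have hFx := hHard x (le_of_lt hx)
      have h1 : Real.exp (ε*(|x-a|+2)) - 1 ≤ ε*(Real.exp (|x-a|+2) - 1) :=
        exp_convex_aux hε0 hε1
      have h2 : Real.exp (|x-a|+2) = Real.exp 2 * Real.exp |x-a| := by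
        rw [← Real.exp_add]; ring_nf
      refine max_le ?_ ?_
      · have h3 : ε*(Real.exp (|x-a|+2) - 1) ≤ (cε*δ)*Real.exp (|x-a|+2) := by
          calc ε*(Real.exp (|x-a|+2) - 1) ≤ ε*Real.exp (|x-a|+2) := by
                linarith [hε0]
            _ ≤ (cε*δ)*Real.exp (|x-a|+2) :=
                mul_le_mul_of_nonneg_right hεcε (le_of_lt (Real.exp_pos _))
        calc F x - 1 ≤ Real.exp (ε*(|x-a|+2)) - 1 := by linarith
          _ ≤ ε*(Real.exp (|x-a|+2) - 1) := h1
          _ ≤ (cε*δ)*Real.exp (|x-a|+2) := h3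
          _ = (cε*δ*Real.exp 2)*Real.exp |x-a| := by rw [h2]; ring
      · exact mul_nonneg (mul_nonneg (mul_nonneg (le_of_lt hcε0) (le_of_lt hδ0))
          (le_of_lt (Real.exp_pos _))) (le_of_lt (Real.exp_pos _))
    have hcδe0 : (0:ℝ) ≤ cε*δ*Real.exp 2 :=
      mul_nonneg (mul_nonneg (le_of_lt hcε0) (le_of_lt hδ0)) (le_of_lt (Real.exp_pos _))
    have hppH := piece_pos_weighted (a := a) (c := cε*δ*Real.exp 2) hcδe0 haR hbdH
    have hppH_un := piece_pos_unweighted (a := a) (c := cε*δ*Real.exp 2) hcδe0 haR hbdH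
    rw [hKeq] at hppH hppH_un
    have hbal_right := balance_lemma hF0 hFm.restrict hWrightG
    have hnpH_int : ∫⁻ x in Ioi a, ENNReal.ofReal (max (1 - F x) 0) ∂gauss
        ≤ ENNReal.ofReal (K*δ) := by rw [hbal_right]; exact hppH_un
    have hnp_right := piece_np (a := a) (β := K*δ)
      (mul_pos hK0 hδ0) hKδ haR hF0 hFm.restrict hnpH_int
    have htotal := assembly hFm hppE hnp_left hppH hnp_right
    apply final_conversion hCsq0 hFm
    refine le_trans htotal ?_
    rw [ofReal_add_four hw1 hw2 hw3 hw4]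
    exact ENNReal.ofReal_le_ofReal harith
  · -- CASE L : easy side Ioi a, hard side Iic a
    have harithL : K*δ + (2*Real.sqrt (K*δ) + K*δ*(2*Real.exp (2+2*R)))
        + (2*E*δ)*(2*Real.exp (2+2*R))
        + (2*Real.sqrt (B₁*δ) + B₁*δ*(2*Real.exp (2+2*R))) ≤ C*Real.sqrt δ := by
      linarith [harith]
    have hbdE : ∀ x ∈ Ioi a, max (F x - 1) 0 ≤ (2*E*δ) * Real.exp |x - a| := by
      intro x hx
      have h1 := hEasy x (le_of_lt hx)
      have h2 : (1:ℝ) ≤ Real.exp |x-a| := Real.one_le_exp (abs_nonneg _)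
      refine max_le ?_ (mul_nonneg hEδ0 (le_of_lt (Real.exp_pos _)))
      have h3 := mul_nonneg hEδ0 (sub_nonneg.2 h2)
      linarith [hδ'E]
    have hppE := piece_pos_weighted (a := a) (c := 2*E*δ) hEδ0 haR hbdE
    have hppE_const : ∫⁻ x in Ioi a, ENNReal.ofReal (max (F x - 1) 0) ∂gauss
        ≤ ENNReal.ofReal (2*δ') :=
      piece_pos_const (by linarith)
        (fun x hx => max_le (by linarith [hEasy x (le_of_lt hx)]) (by linarith))
    have hbal_right := balance_lemma hF0 hFm.restrict hWrightG
    have hnpE_int : ∫⁻ x in Ioi a, ENNReal.ofReal (max (1 - F x) 0) ∂gauss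
        ≤ ENNReal.ofReal (2*δ') := by rw [hbal_right]; exact hppE_const
    have hnp_right := piece_np (a := a) (β := B₁*δ)
      (mul_pos hB₁0 hδ0) hB₁δ haR hF0 hFm.restrict
      (hnpE_int.trans (ENNReal.ofReal_le_ofReal h2δ'B₁))
    -- hard side point
    obtain ⟨x₁, hx₁J, hx₁np⟩ := exists_good_point hκ0 (le_of_lt hδ'0)
      hFm.restrict (by linarith [habsle.1] : -(R+2) ≤ a+1) (by linarith [habsle.2])
      (fun x hx => lt_of_lt_of_le (by linarith) hx.1 : Icc (a+1) ((a+1)+1) ⊆ Ioi a)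
      hnpE_int
      (by
        rw [hκdef, ← hddef, div_mul_cancel₀ _ (ne_of_gt hd0)]
        linarith)
    have hx₁1 : a + 1 ≤ x₁ := hx₁J.1
    have hx₁2 : x₁ ≤ a + 2 := by have := hx₁J.2; linarith
    have hFx₁ : 1 - κ < F x₁ := by
      have h := le_max_left (1 - F x₁) 0
      linarith [hx₁np]
    have hx₁I : x₁ ∈ I := by
      by_contra h
      rw [hFout x₁ h] at hFx₁
      linarith
    have hgx₁ : -(2*κ) ≤ gaussPsi x₁ - ψ x₁ := by
      apply Real.exp_le_exp.1
      rw [← hFI x₁ hx₁I]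
      linarith
    have hHard : ∀ x, x ≤ a → F x ≤ Real.exp (ε * (|x - a| + 2)) := by
      intro x hax
      rcases eq_or_lt_of_le hax with heq | hlt
      · rw [heq]
        have h1 : 1 + δ' ≤ Real.exp (ε*(|a-a|+2)) := by
          simp only [sub_self, abs_zero, zero_add]
          calc 1 + δ' ≤ 1 + ε := by linarith
            _ ≤ Real.exp ε := by linarith [Real.add_one_le_exp ε]
            _ ≤ Real.exp (ε*2) := Real.exp_le_exp.2 (by linarith)
        exact hFa.trans h1
      · by_cases hxI : x ∈ I
        · rw [hFI x hxI]
          apply Real.exp_le_exp.2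
          rw [abs_of_nonpos (by linarith : x - a ≤ (0:ℝ))]
          have hDpos : 0 < x₁ - x := by linarith
          have hupos : 0 < a - x := by linarith
          have ht : (a - x)/(x₁ - x) ∈ Ioo (0:ℝ) 1 :=
            ⟨div_pos hupos hDpos, (div_lt_one hDpos).2 (by linarith)⟩
          have hcombo : (1-(a - x)/(x₁ - x))*x + ((a - x)/(x₁ - x))*x₁ = a := by
            field_simp
            ring
          have hkey := hsec x hxI x₁ hx₁I _ ht
          rw [hcombo] at hkey
          set t := (a - x)/(x₁ - x) with htdef
          have h1 : (1-t)*(gaussPsi x - ψ x) ≤ δ' + t*(2*κ) := by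
            have hp : t*(-(2*κ)) ≤ t*(gaussPsi x₁ - ψ x₁) :=
              mul_le_mul_of_nonneg_left hgx₁ (le_of_lt ht.1)
            linarith [hkey, hga]
          have e1 : t*(x₁-x) = a-x := by rw [htdef]; field_simp
          have e2 : (1-t)*(x₁-x) = x₁-a := by rw [htdef]; field_simp; ring
          have h2 : (x₁ - a)*(gaussPsi x - ψ x) ≤ δ'*(x₁-x) + 2*κ*(a-x) := by
            calc (x₁ - a)*(gaussPsi x - ψ x) = ((1-t)*(x₁-x))*(gaussPsi x - ψ x) := by rw [e2]
              _ = ((1-t)*(gaussPsi x - ψ x))*(x₁-x) := by ring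
              _ ≤ (δ' + t*(2*κ))*(x₁-x) := mul_le_mul_of_nonneg_right h1 (le_of_lt hDpos)
              _ = δ'*(x₁-x) + 2*κ*(t*(x₁-x)) := by ring
              _ = δ'*(x₁-x) + 2*κ*(a-x) := by rw [e1]
          rcases le_total (gaussPsi x - ψ x) 0 with hneg | hpos2
          · have : 0 ≤ ε*(-(x-a)+2) := mul_nonneg hε0 (by linarith)
            linarith
          · have h4 : gaussPsi x - ψ x ≤ (x₁-a)*(gaussPsi x - ψ x) := by
              linarith [mul_nonneg hpos2 (by linarith : (0:ℝ) ≤ x₁-a-1)]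
            have h5 : δ'*(x₁-x) ≤ δ'*((a-x)+2) :=
              mul_le_mul_of_nonneg_left (by linarith) (le_of_lt hδ'0)
            have h6 : 2*κ*(a-x) ≤ 2*κ*((a-x)+2) :=
              mul_le_mul_of_nonneg_left (by linarith) (by linarith)
            rw [hεdef]
            linarith [h2, h4, h5, h6]
        · rw [hFout x hxI]
          exact (Real.exp_pos _).le
    have hbdH : ∀ x ∈ Iic a, max (F x - 1) 0 ≤ (cε*δ*Real.exp 2) * Real.exp |x-a| := by
      intro x hx
      have hFx := hHard x hx
      have h1 : Real.exp (ε*(|x-a|+2)) - 1 ≤ ε*(Real.exp (|x-a|+2) - 1) :=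
        exp_convex_aux hε0 hε1
      have h2 : Real.exp (|x-a|+2) = Real.exp 2 * Real.exp |x-a| := by
        rw [← Real.exp_add]; ring_nf
      refine max_le ?_ ?_
      · have h3 : ε*(Real.exp (|x-a|+2) - 1) ≤ (cε*δ)*Real.exp (|x-a|+2) := by
          calc ε*(Real.exp (|x-a|+2) - 1) ≤ ε*Real.exp (|x-a|+2) := by
                linarith [hε0]
            _ ≤ (cε*δ)*Real.exp (|x-a|+2) :=
                mul_le_mul_of_nonneg_right hεcε (le_of_lt (Real.exp_pos _))
        calc F x - 1 ≤ Real.exp (ε*(|x-a|+2)) - 1 := by linarith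
          _ ≤ ε*(Real.exp (|x-a|+2) - 1) := h1
          _ ≤ (cε*δ)*Real.exp (|x-a|+2) := h3
          _ = (cε*δ*Real.exp 2)*Real.exp |x-a| := by rw [h2]; ring
      · exact mul_nonneg (mul_nonneg (mul_nonneg (le_of_lt hcε0) (le_of_lt hδ0))
          (le_of_lt (Real.exp_pos _))) (le_of_lt (Real.exp_pos _))
    have hcδe0 : (0:ℝ) ≤ cε*δ*Real.exp 2 :=
      mul_nonneg (mul_nonneg (le_of_lt hcε0) (le_of_lt hδ0)) (le_of_lt (Real.exp_pos _))
    have hppH := piece_pos_weighted (a := a) (c := cε*δ*Real.exp 2) hcδe0 haR hbdH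
    have hppH_un := piece_pos_unweighted (a := a) (c := cε*δ*Real.exp 2) hcδe0 haR hbdH
    rw [hKeq] at hppH hppH_un
    have hbal_left := balance_lemma hF0 hFm.restrict hWleftG
    have hnpH_int : ∫⁻ x in Iic a, ENNReal.ofReal (max (1 - F x) 0) ∂gauss
        ≤ ENNReal.ofReal (K*δ) := by rw [hbal_left]; exact hppH_un
    have hnp_left := piece_np (a := a) (β := K*δ)
      (mul_pos hK0 hδ0) hKδ haR hF0 hFm.restrict hnpH_int
    have htotal := assembly hFm hppH hnp_left hppE hnp_right
    apply final_conversion hCsq0 hFm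
    refine le_trans htotal ?_
    rw [ofReal_add_four hw3 hw4 hw1 hw2]
    exact ENNReal.ofReal_le_ofReal harithL
end

section
/- For every θ ∈ (0,1), every p ∈ [1,∞), there exist constants C = C(p,θ) > 0 and δ₀ = δ₀(p,θ) > 0 with the following property: if 0 < δ ≤ δ₀ and (I, ψ, m) satisfy the centering condition m((-∞, a_θ] ∩ I) = θ and the δ-deficit condition e^{-ψ(a_θ)} ≤ e^{-ψ_g(a_θ)} + δ, then ∫_I max(e^{ψ_g(x) − ψ(x)} − 1, 0)^p γ(dx) ≤ C·δ. -/
open MeasureTheory Real Set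

noncomputable def gd (x : ℝ) : ℝ := Real.exp (-gaussPsi x)

lemma gd_pos (x : ℝ) : 0 < gd x := Real.exp_pos _

lemma gd_cont : Continuous gd := by
  unfold gd gaussPsi
  exact Real.continuous_exp.comp (by continuity)

lemma gd_eq (x : ℝ) : gd x = (Real.sqrt (2 * π))⁻¹ * Real.exp (-(1/2) * x ^ 2) := by
  unfold gd gaussPsi
  rw [show -(x ^ 2 / 2 + Real.log (2 * π) / 2) = (-(Real.log (2 * π) / 2)) + (-(1/2) * x ^ 2)
    by ring, Real.exp_add]
  congr 1
  rw [show -(Real.log (2 * π) / 2) = -(Real.log (Real.sqrt (2 * π)))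
    by rw [Real.log_sqrt Real.two_pi_pos.le],
    Real.exp_neg, Real.exp_log (Real.sqrt_pos.2 Real.two_pi_pos)]

lemma gd_le (x : ℝ) : gd x ≤ Real.exp (-(1/2) * x ^ 2) := by
  rw [gd_eq]
  have h1 : (1:ℝ) ≤ Real.sqrt (2 * π) := by
    rw [show (1:ℝ) = Real.sqrt 1 by simp]
    apply Real.sqrt_le_sqrt
    nlinarith [Real.pi_gt_three]
  have h2 : (Real.sqrt (2*π))⁻¹ ≤ 1 := by
    rw [inv_le_one_iff₀]; right; exact h1
  nlinarith [Real.exp_pos (-(1/2) * x ^ 2), (Real.sqrt_pos.2 Real.two_pi_pos)]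

lemma gd_integrable : Integrable gd := by
  have : Integrable (fun x : ℝ => (Real.sqrt (2 * π))⁻¹ * Real.exp (-(1/2) * x ^ 2)) :=
    (integrable_exp_neg_mul_sq (by norm_num : (0:ℝ) < 1/2)).const_mul _
  exact this.congr (Filter.Eventually.of_forall fun x => (gd_eq x).symm)

lemma gd_total : ∫ x, gd x = 1 := by
  simp_rw [gd_eq]
  rw [integral_const_mul, integral_gaussian]
  rw [show π / (1/2) = 2 * π by ring]
  rw [inv_mul_cancel₀ (ne_of_gt (Real.sqrt_pos.2 Real.two_pi_pos))]

lemma gauss_apply_s6 {s : Set ℝ} (hs : MeasurableSet s) :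
    gauss s = ENNReal.ofReal (∫ x in s, gd x) := by
  simp only [gd]
  rw [gauss, withDensity_apply _ hs]
  have hint : Integrable (fun x => Real.exp (-gaussPsi x)) volume := gd_integrable
  exact (ofReal_integral_eq_lintegral_ofReal hint.integrableOn
      (Filter.Eventually.of_forall fun x => (Real.exp_pos _).le)).symm

lemma gd_setInt_pos {s : Set ℝ} (hs : MeasurableSet s) (h : 0 < volume s) :
    0 < ∫ x in s, gd x := by
  rw [setIntegral_pos_iff_support_of_nonneg_ae
    (Filter.Eventually.of_forall fun x => (gd_pos x).le) gd_integrable.integrableOn]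
  have : Function.support gd = univ := by
    ext x; simp [Function.support, (gd_pos x).ne']
  rwa [this, univ_inter]

lemma gauss_Iic_inj {a b : ℝ} (h : gauss (Iic a) = gauss (Iic b)) : a = b := by
  by_contra hne
  have key : ∀ u v : ℝ, u < v → gauss (Iic u) ≠ gauss (Iic v) := by
    intro u v huv heq
    have hsplit : Iic u ∪ Ioc u v = Iic v := Set.Iic_union_Ioc_eq_Iic huv.le
    have hd : Disjoint (Iic u) (Ioc u v) := by
      apply Set.disjoint_left.2; intro x hx hx2; exact absurd hx2.1 (not_lt.2 hx)
    have hadd : gauss (Iic v) = gauss (Iic u) + gauss (Ioc u v) := by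
      rw [← hsplit, measure_union hd measurableSet_Ioc]
    have hpos : 0 < gauss (Ioc u v) := by
      rw [gauss_apply_s6 measurableSet_Ioc]
      apply ENNReal.ofReal_pos.2
      apply gd_setInt_pos measurableSet_Ioc
      rw [Real.volume_Ioc]
      exact ENNReal.ofReal_pos.2 (by linarith)
    have hfin : gauss (Iic u) ≠ ⊤ := by
      rw [gauss_apply_s6 measurableSet_Iic]; exact ENNReal.ofReal_ne_top
    rw [← heq] at hadd
    exact hpos.ne' ((ENNReal.add_right_inj hfin).1 (by rw [← hadd, add_zero])).symm
  rcases lt_or_gt_of_ne hne with h1 | h1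
  · exact key a b h1 h
  · exact key b a h1 h.symm

lemma exp_neg_le_lin {l : ℝ} (h0 : 0 ≤ l) (h1 : l ≤ 1) :
    Real.exp (-l) ≤ 1 - (1 - Real.exp (-1)) * l := by
  have := convexOn_exp.2 (mem_univ (0:ℝ)) (mem_univ (-1:ℝ))
    (by linarith : (0:ℝ) ≤ 1 - l) h0 (by ring)
  simp only [smul_eq_mul, mul_zero, mul_neg, mul_one, zero_add, Real.exp_zero] at this
  nlinarith [this]

lemma exp_sub_one_le {t : ℝ} (ht : 0 ≤ t) : Real.exp t - 1 ≤ t * Real.exp t := by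
  have h1 : 1 - t ≤ Real.exp (-t) := by linarith [Real.add_one_le_exp (-t)]
  have h2 : Real.exp (-t) = (Real.exp t)⁻¹ := Real.exp_neg t
  have h3 : 0 < Real.exp t := Real.exp_pos t
  rw [h2] at h1
  have := mul_le_mul_of_nonneg_left h1 h3.le
  rw [mul_inv_cancel₀ h3.ne'] at this
  nlinarith

lemma self_le_exp (w : ℝ) : w ≤ Real.exp w := by
  nlinarith [Real.add_one_le_exp w]

lemma integrable_exp_abs_mul_gd (c A : ℝ) :
    Integrable (fun x => Real.exp (c * |x - A|) * gd x) := by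
  have hbound : ∀ x : ℝ, ‖Real.exp (c * |x - A|) * gd x‖ ≤
      Real.exp (|c|^2 + |c| * |A|) * Real.exp (-(1/4) * x ^ 2) := by
    intro x
    have hnn : 0 ≤ Real.exp (c * |x - A|) * gd x :=
      mul_nonneg (Real.exp_pos _).le (gd_pos x).le
    rw [Real.norm_eq_abs, abs_of_nonneg hnn]
    have h1 : Real.exp (c * |x - A|) * gd x ≤
        Real.exp (c * |x - A|) * Real.exp (-(1/2) * x ^ 2) :=
      mul_le_mul_of_nonneg_left (gd_le x) (Real.exp_pos _).le
    rw [← Real.exp_add] at h1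
    rw [← Real.exp_add]
    refine h1.trans (Real.exp_le_exp.2 ?_)
    have t1 : c * |x - A| ≤ |c| * |x - A| :=
      mul_le_mul_of_nonneg_right (le_abs_self c) (abs_nonneg _)
    have t2 : |x - A| ≤ |x| + |A| := abs_sub x A
    have h3 : |c| * |x| ≤ x^2/4 + |c|^2 := by nlinarith [sq_nonneg (|x|/2 - |c|), sq_abs x]
    nlinarith [t1, t2, h3, abs_nonneg c, mul_le_mul_of_nonneg_left t2 (abs_nonneg c)]
  apply Integrable.mono' ((integrable_exp_neg_mul_sq (by norm_num : (0:ℝ) < 1/4)).const_mul _)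
  · apply Continuous.aestronglyMeasurable
    exact (Real.continuous_exp.comp (continuous_const.mul
      (continuous_abs.comp (continuous_id.sub continuous_const)))).mul gd_cont
  · exact Filter.Eventually.of_forall hbound

lemma real_of_lintegral {f : ℝ → ℝ} {s : Set ℝ} (hf : AEMeasurable f (volume.restrict s))
    (hnn : ∀ x, 0 ≤ f x) {c : ℝ} (hc : 0 ≤ c)
    (h : ∫⁻ x in s, ENNReal.ofReal (f x) = ENNReal.ofReal c) :
    IntegrableOn f s volume ∧ ∫ x in s, f x = c := by
  have hint : IntegrableOn f s volume := by
    refine ⟨hf.aestronglyMeasurable, ?_⟩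
    rw [hasFiniteIntegral_iff_ofReal (Filter.Eventually.of_forall hnn), h]
    exact ENNReal.ofReal_lt_top
  refine ⟨hint, ?_⟩
  have h2 := ofReal_integral_eq_lintegral_ofReal hint (Filter.Eventually.of_forall hnn)
  rw [h, ENNReal.ofReal_eq_ofReal_iff (integral_nonneg hnn) hc] at h2
  exact h2

lemma decay_Iic (a l : ℝ) (h0 : 0 ≤ l) (h1 : l ≤ 1) :
    ∫ x in Iic a, Real.exp (-(l * (a - x))) * gd x ≤
      (∫ x in Iic a, gd x) - l * ((1 - Real.exp (-1)) * ∫ x in Iic (a-1), gd x) := by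
  set f := fun x => Real.exp (-(l * (a - x))) * gd x with hf
  have hfc : Continuous f :=
    (Real.continuous_exp.comp (by continuity)).mul gd_cont
  have hfle : ∀ x, x ≤ a → f x ≤ gd x := by
    intro x hx
    have h9 : Real.exp (-(l * (a - x))) ≤ 1 := by
      rw [Real.exp_le_one_iff]
      have : 0 ≤ l * (a - x) := mul_nonneg h0 (by linarith)
      linarith
    simp only [hf]
    nlinarith [gd_pos x]
  have hfi : IntegrableOn f (Iic a) volume := by
    apply Integrable.mono' gd_integrable.integrableOn hfc.aestronglyMeasurable.restrict
    rw [ae_restrict_iff' measurableSet_Iic]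
    refine Filter.Eventually.of_forall fun x hx => ?_
    rw [Real.norm_eq_abs, abs_of_nonneg (mul_nonneg (Real.exp_pos _).le (gd_pos x).le)]
    exact hfle x hx
  have hsplit : Iic (a-1) ∪ Ioc (a-1) a = Iic a := Set.Iic_union_Ioc_eq_Iic (by linarith)
  have hd : Disjoint (Iic (a-1)) (Ioc (a-1) a) := by
    apply Set.disjoint_left.2; intro x hx hx2; exact absurd hx2.1 (not_lt.2 hx)
  have heqf : ∫ x in Iic a, f x =
      (∫ x in Iic (a-1), f x) + ∫ x in Ioc (a-1) a, f x := by
    rw [← hsplit, setIntegral_union hd measurableSet_Ioc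
      (hfi.mono_set (hsplit ▸ subset_union_left))
      (hfi.mono_set (hsplit ▸ subset_union_right))]
  have heqg : ∫ x in Iic a, gd x =
      (∫ x in Iic (a-1), gd x) + ∫ x in Ioc (a-1) a, gd x := by
    rw [← hsplit, setIntegral_union hd measurableSet_Ioc
      gd_integrable.integrableOn gd_integrable.integrableOn]
  have hb1 : ∫ x in Iic (a-1), f x ≤
      (1 - (1 - Real.exp (-1)) * l) * ∫ x in Iic (a-1), gd x := by
    have : ∫ x in Iic (a-1), f x ≤ ∫ x in Iic (a-1), (1 - (1 - Real.exp (-1)) * l) * gd x := by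
      apply setIntegral_mono_on (hfi.mono_set (hsplit ▸ subset_union_left))
        (gd_integrable.integrableOn.const_mul _) measurableSet_Iic
      intro x hx
      have hax : 1 ≤ a - x := by simp only [mem_Iic] at hx; linarith
      have h5 : Real.exp (-(l * (a - x))) ≤ Real.exp (-l) := by
        apply Real.exp_le_exp.2
        nlinarith
      have h6 : Real.exp (-l) ≤ 1 - (1 - Real.exp (-1)) * l := exp_neg_le_lin h0 h1
      have := gd_pos x
      calc f x ≤ Real.exp (-l) * gd x := by
            exact mul_le_mul_of_nonneg_right h5 (gd_pos x).le
        _ ≤ (1 - (1 - Real.exp (-1)) * l) * gd x :=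
            mul_le_mul_of_nonneg_right h6 (gd_pos x).le
    rwa [integral_const_mul] at this
  have hb2 : ∫ x in Ioc (a-1) a, f x ≤ ∫ x in Ioc (a-1) a, gd x := by
    apply setIntegral_mono_on (hfi.mono_set (hsplit ▸ subset_union_right))
      gd_integrable.integrableOn measurableSet_Ioc
    intro x hx
    exact hfle x hx.2
  have hG1 : 0 ≤ ∫ x in Iic (a-1), gd x :=
    setIntegral_nonneg measurableSet_Iic fun x _ => (gd_pos x).le
  have hexp1 : Real.exp (-1) < 1 := by
    rw [Real.exp_lt_one_iff]; norm_num
  nlinarith [heqf, heqg, hb1, hb2, mul_nonneg (mul_nonneg h0 (by linarith : (0:ℝ) ≤ 1 - Real.exp (-1))) hG1]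

lemma decay_Ioi (a l : ℝ) (h0 : 0 ≤ l) (h1 : l ≤ 1) :
    ∫ x in Ioi a, Real.exp (-(l * (x - a))) * gd x ≤
      (∫ x in Ioi a, gd x) - l * ((1 - Real.exp (-1)) * ∫ x in Ioi (a+1), gd x) := by
  set f := fun x => Real.exp (-(l * (x - a))) * gd x with hf
  have hfc : Continuous f :=
    (Real.continuous_exp.comp (by continuity)).mul gd_cont
  have hfle : ∀ x, a ≤ x → f x ≤ gd x := by
    intro x hx
    have h9 : Real.exp (-(l * (x - a))) ≤ 1 := by
      rw [Real.exp_le_one_iff]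
      have : 0 ≤ l * (x - a) := mul_nonneg h0 (by linarith)
      linarith
    simp only [hf]
    nlinarith [gd_pos x]
  have hfi : IntegrableOn f (Ioi a) volume := by
    apply Integrable.mono' gd_integrable.integrableOn hfc.aestronglyMeasurable.restrict
    rw [ae_restrict_iff' measurableSet_Ioi]
    refine Filter.Eventually.of_forall fun x hx => ?_
    rw [Real.norm_eq_abs, abs_of_nonneg (mul_nonneg (Real.exp_pos _).le (gd_pos x).le)]
    exact hfle x (le_of_lt hx)
  have hsplit : Ioc a (a+1) ∪ Ioi (a+1) = Ioi a := Set.Ioc_union_Ioi_eq_Ioi (by linarith)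
  have hd : Disjoint (Ioc a (a+1)) (Ioi (a+1)) := by
    apply Set.disjoint_left.2; intro x hx hx2; exact absurd hx2 (not_lt.2 hx.2)
  have heqf : ∫ x in Ioi a, f x =
      (∫ x in Ioc a (a+1), f x) + ∫ x in Ioi (a+1), f x := by
    rw [← hsplit, setIntegral_union hd measurableSet_Ioi
      (hfi.mono_set (hsplit ▸ subset_union_left))
      (hfi.mono_set (hsplit ▸ subset_union_right))]
  have heqg : ∫ x in Ioi a, gd x =
      (∫ x in Ioc a (a+1), gd x) + ∫ x in Ioi (a+1), gd x := by
    rw [← hsplit, setIntegral_union hd measurableSet_Ioi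
      gd_integrable.integrableOn gd_integrable.integrableOn]
  have hb1 : ∫ x in Ioi (a+1), f x ≤
      (1 - (1 - Real.exp (-1)) * l) * ∫ x in Ioi (a+1), gd x := by
    have : ∫ x in Ioi (a+1), f x ≤ ∫ x in Ioi (a+1), (1 - (1 - Real.exp (-1)) * l) * gd x := by
      apply setIntegral_mono_on (hfi.mono_set (hsplit ▸ subset_union_right))
        (gd_integrable.integrableOn.const_mul _) measurableSet_Ioi
      intro x hx
      have hax : 1 ≤ x - a := by simp only [mem_Ioi] at hx; linarith
      have h5 : Real.exp (-(l * (x - a))) ≤ Real.exp (-l) := by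
        apply Real.exp_le_exp.2; nlinarith
      have h6 : Real.exp (-l) ≤ 1 - (1 - Real.exp (-1)) * l := exp_neg_le_lin h0 h1
      calc f x ≤ Real.exp (-l) * gd x := mul_le_mul_of_nonneg_right h5 (gd_pos x).le
        _ ≤ (1 - (1 - Real.exp (-1)) * l) * gd x :=
            mul_le_mul_of_nonneg_right h6 (gd_pos x).le
    rwa [integral_const_mul] at this
  have hb2 : ∫ x in Ioc a (a+1), f x ≤ ∫ x in Ioc a (a+1), gd x := by
    apply setIntegral_mono_on (hfi.mono_set (hsplit ▸ subset_union_left))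
      gd_integrable.integrableOn measurableSet_Ioc
    intro x hx
    exact hfle x hx.1.le
  have hG1 : 0 ≤ ∫ x in Ioi (a+1), gd x :=
    setIntegral_nonneg measurableSet_Ioi fun x _ => (gd_pos x).le
  have hexp1 : Real.exp (-1) < 1 := by
    rw [Real.exp_lt_one_iff]; norm_num
  nlinarith [heqf, heqg, hb1, hb2, mul_nonneg (mul_nonneg h0 (by linarith : (0:ℝ) ≤ 1 - Real.exp (-1))) hG1]

lemma intOn_decay_Iic (a l : ℝ) (h0 : 0 ≤ l) :
    IntegrableOn (fun x => Real.exp (-(l * (a - x))) * gd x) (Iic a) volume := by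
  apply Integrable.mono' gd_integrable.integrableOn
    (((Real.continuous_exp.comp (by continuity)).mul gd_cont).aestronglyMeasurable.restrict)
  refine (ae_restrict_iff' measurableSet_Iic).2 (Filter.Eventually.of_forall fun x hx => ?_)
  have h9 : Real.exp (-(l * (a - x))) ≤ 1 := by
    rw [Real.exp_le_one_iff]
    have : 0 ≤ l * (a - x) := mul_nonneg h0 (by simp only [mem_Iic] at hx; linarith)
    linarith
  simp only [Function.comp_apply, Real.norm_eq_abs, Pi.mul_apply]
  rw [abs_of_nonneg (mul_nonneg (Real.exp_pos _).le (gd_pos x).le)]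
  nlinarith [gd_pos x]

lemma intOn_decay_Ioi (a l : ℝ) (h0 : 0 ≤ l) :
    IntegrableOn (fun x => Real.exp (-(l * (x - a))) * gd x) (Ioi a) volume := by
  apply Integrable.mono' gd_integrable.integrableOn
    (((Real.continuous_exp.comp (by continuity)).mul gd_cont).aestronglyMeasurable.restrict)
  refine (ae_restrict_iff' measurableSet_Ioi).2 (Filter.Eventually.of_forall fun x hx => ?_)
  have h9 : Real.exp (-(l * (x - a))) ≤ 1 := by
    rw [Real.exp_le_one_iff]
    have : 0 ≤ l * (x - a) := mul_nonneg h0 (by simp only [mem_Ioi] at hx; linarith)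
    linarith
  simp only [Function.comp_apply, Real.norm_eq_abs, Pi.mul_apply]
  rw [abs_of_nonneg (mul_nonneg (Real.exp_pos _).le (gd_pos x).le)]
  nlinarith [gd_pos x]

set_option maxHeartbeats 1000000 in
/-- the positive-part estimate `∫_I [e^{ψ_g - ψ} - 1]₊^p dγ ≤ C·δ`. -/
theorem positive_part_lp_estimate_on_interval (θ p : ℝ) (hθ : θ ∈ Ioo (0:ℝ) 1)
    (hp : 1 ≤ p) :
    ∃ C : ℝ, 0 < C ∧ ∃ δ₀ : ℝ, 0 < δ₀ ∧
      ∀ (δ : ℝ), 0 < δ → δ ≤ δ₀ →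
      ∀ (I : Set ℝ) (ψ : ℝ → ℝ) (a : ℝ),
        IsOpen I → Convex ℝ I → a ∈ I →
        gauss (Iic a) = ENNReal.ofReal θ →
        (∀ x ∈ I, ∀ y ∈ I, ∀ t ∈ Ioo (0:ℝ) 1,
          ψ ((1 - t) * x + t * y)
            ≤ (1 - t) * ψ x + t * ψ y - (1 / 2) * (1 - t) * t * |x - y| ^ 2) →
        IsProbabilityMeasure
          (MeasureTheory.volume.withDensity
            (I.indicator fun x => ENNReal.ofReal (Real.exp (-ψ x)))) →
        (MeasureTheory.volume.withDensity
            (I.indicator fun x => ENNReal.ofReal (Real.exp (-ψ x)))) (Iic a ∩ I)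
          = ENNReal.ofReal θ →
        Real.exp (-ψ a) ≤ Real.exp (-gaussPsi a) + δ →
        (∫ x in I, max (Real.exp (gaussPsi x - ψ x) - 1) 0 ^ p ∂gauss) ≤ C * δ := by
  obtain ⟨hθ0, hθ1⟩ := hθ
  by_cases hex : ∃ a : ℝ, gauss (Iic a) = ENNReal.ofReal θ
  case neg =>
    exact ⟨1, one_pos, 1, one_pos, fun δ _ _ I ψ a _ _ _ hga _ _ _ _ =>
      absurd ⟨a, hga⟩ hex⟩
  obtain ⟨a₀, ha₀⟩ := hex
  have hp0 : (0:ℝ) ≤ p := by linarith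
  set c₀ := Real.exp (gaussPsi a₀) with hc₀def
  have hc₀pos : 0 < c₀ := Real.exp_pos _
  set G₁ := ∫ x in Iic (a₀ - 1), gd x with hG₁def
  set G₂ := ∫ x in Ioi (a₀ + 1), gd x with hG₂def
  have hG₁ : 0 < G₁ := gd_setInt_pos measurableSet_Iic (by simp [Real.volume_Iic])
  have hG₂ : 0 < G₂ := gd_setInt_pos measurableSet_Ioi (by simp [Real.volume_Ioi])
  have hee : Real.exp (-1) < 1 := by rw [Real.exp_lt_one_iff]; norm_num
  set M₁ := (1 - Real.exp (-1)) * G₁ with hM₁def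
  set M₂ := (1 - Real.exp (-1)) * G₂ with hM₂def
  have hM₁ : 0 < M₁ := mul_pos (by linarith) hG₁
  have hM₂ : 0 < M₂ := mul_pos (by linarith) hG₂
  set K := max (2*θ*c₀/M₁) (2*(1-θ)*c₀/M₂) with hKdef
  have hK : 0 < K := lt_max_iff.2 (Or.inl (by positivity))
  set h := fun x : ℝ => (c₀ + K * |x - a₀|) * Real.exp (c₀ + K * |x - a₀|) with hhdef
  have hwnn : ∀ x, 0 ≤ c₀ + K * |x - a₀| := fun x => by positivity
  have hhnn : ∀ x, 0 ≤ h x := fun x => mul_nonneg (hwnn x) (Real.exp_pos _).le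
  have hconth : Continuous h := by
    have hc : Continuous fun x : ℝ => c₀ + K * |x - a₀| :=
      continuous_const.add (continuous_const.mul ((continuous_id.sub continuous_const).abs))
    exact hc.mul (Real.continuous_exp.comp hc)
  have hple : ∀ x, h x ^ p ≤ Real.exp (2*p*c₀) * Real.exp ((2*p*K) * |x - a₀|) := by
    intro x
    have hw0 : 0 ≤ c₀ + K * |x - a₀| := hwnn x
    have h1 : h x ≤ Real.exp (2 * (c₀ + K * |x - a₀|)) := by
      rw [hhdef, show (2:ℝ) * (c₀ + K * |x - a₀|) = (c₀ + K * |x - a₀|) + (c₀ + K * |x - a₀|)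
        by ring, Real.exp_add]
      exact mul_le_mul_of_nonneg_right (self_le_exp _) (Real.exp_pos _).le
    have h2 : h x ^ p ≤ (Real.exp (2*(c₀ + K * |x - a₀|))) ^ p :=
      Real.rpow_le_rpow (hhnn x) h1 hp0
    rw [← Real.exp_mul] at h2
    refine h2.trans (le_of_eq ?_)
    rw [← Real.exp_add]
    congr 1
    ring
  have hBint : Integrable (fun x => gd x * h x ^ p) volume := by
    apply Integrable.mono'
      ((integrable_exp_abs_mul_gd (2*p*K) a₀).const_mul (Real.exp (2*p*c₀)))
    · exact (gd_cont.mul (hconth.rpow_const fun x => Or.inr hp0)).aestronglyMeasurable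
    · refine Filter.Eventually.of_forall fun x => ?_
      have h1 := hple x
      have h2 : 0 ≤ gd x * h x ^ p :=
        mul_nonneg (gd_pos x).le (Real.rpow_nonneg (hhnn x) p)
      rw [Real.norm_eq_abs, abs_of_nonneg h2]
      have := gd_pos x
      nlinarith [Real.exp_pos (2*p*c₀), Real.exp_pos ((2*p*K) * |x - a₀|),
        Real.rpow_nonneg (hhnn x) p]
  set B := ∫ x, gd x * h x ^ p with hBdef
  have hB : 0 ≤ B :=
    integral_nonneg fun x => mul_nonneg (gd_pos x).le (Real.rpow_nonneg (hhnn x) p)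
  have h1θ : 0 < 1 - θ := by linarith
  refine ⟨B + 1, by linarith, min 1 (min (M₁/(2*c₀*θ)) (M₂/(2*c₀*(1-θ)))),
    lt_min one_pos (lt_min (by positivity) (by positivity)), ?_⟩
  intro δ hδ hδ0 I ψ a hIopen hIconv haI hga hψconv hprob hcen hdef
  have hδ1 : δ ≤ 1 := le_trans hδ0 (min_le_left _ _)
  have hδM₁ : δ ≤ M₁/(2*c₀*θ) := le_trans hδ0 ((min_le_right _ _).trans (min_le_left _ _))
  have hδM₂ : δ ≤ M₂/(2*c₀*(1-θ)) := le_trans hδ0 ((min_le_right _ _).trans (min_le_right _ _))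
  have haa : a = a₀ := gauss_Iic_inj (hga.trans ha₀.symm)
  rw [haa] at haI hga hcen hdef
  clear haa
  have hIm : MeasurableSet I := hIopen.measurableSet
  set φ := fun x : ℝ => ψ x - gaussPsi x with hφdef
  -- convexity of φ
  have hφconv : ConvexOn ℝ I φ := by
    refine ⟨hIconv, ?_⟩
    intro x hx y hy s t hs ht hst
    rcases eq_or_lt_of_le hs with hs0 | hs0
    · have ht1 : t = 1 := by linarith
      simp [← hs0, ht1]
    rcases eq_or_lt_of_le ht with ht0 | ht0
    · have hs1 : s = 1 := by linarith
      simp [← ht0, hs1]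
    have hs1t : s = 1 - t := by linarith
    have ht1 : t < 1 := by linarith
    have hkey := hψconv x hx y hy t ⟨ht0, ht1⟩
    have habs : |x - y| ^ 2 = (x - y)^2 := sq_abs _
    rw [habs] at hkey
    have hgq : gaussPsi ((1-t)*x + t*y)
        = (1-t)*gaussPsi x + t*gaussPsi y - (1/2)*(1-t)*t*(x-y)^2 := by
      simp only [gaussPsi]; ring
    simp only [smul_eq_mul, hφdef, hs1t]
    nlinarith [hkey, hgq]
  have hψcont : ContinuousOn ψ I := by
    have h1 : ContinuousOn φ I := hφconv.continuousOn hIopen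
    have h2 : ψ = fun x => φ x + gaussPsi x := by
      funext x; simp only [hφdef]; ring
    have h3 : Continuous gaussPsi := by
      unfold gaussPsi
      exact ((continuous_pow 2).div_const 2).add continuous_const
    rw [h2]
    exact h1.add h3.continuousOn
  have hLm : MeasurableSet (Iic a₀ ∩ I) := measurableSet_Iic.inter hIm
  have hRm : MeasurableSet (Ioi a₀ ∩ I) := measurableSet_Ioi.inter hIm
  have haem : ∀ {s : Set ℝ}, MeasurableSet s → s ⊆ I →
      AEMeasurable (fun x => Real.exp (-ψ x)) (volume.restrict s) := by
    intro s hs hsub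
    exact (Real.continuous_exp.comp_continuousOn ((hψcont.mono hsub).neg)).aemeasurable hs
  -- left mass
  have hcen' : ∫⁻ x in Iic a₀ ∩ I, ENNReal.ofReal (Real.exp (-ψ x)) = ENNReal.ofReal θ := by
    rw [withDensity_apply _ hLm] at hcen
    rw [← hcen]
    apply setLIntegral_congr_fun_ae hLm
    exact Filter.Eventually.of_forall fun x hx =>
      (Set.indicator_of_mem hx.2 (fun x => ENNReal.ofReal (Real.exp (-ψ x)))).symm
  obtain ⟨hIntL, hEL⟩ := real_of_lintegral (haem hLm inter_subset_right)
    (fun x => (Real.exp_pos _).le) hθ0.le hcen'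
  -- total mass
  have htot' : ∫⁻ x in I, ENNReal.ofReal (Real.exp (-ψ x)) = ENNReal.ofReal 1 := by
    have h1 := hprob.measure_univ
    rw [withDensity_apply _ MeasurableSet.univ, Measure.restrict_univ,
      lintegral_indicator hIm] at h1
    rw [h1, ENNReal.ofReal_one]
  obtain ⟨hIntI, hEtot⟩ := real_of_lintegral (haem hIm subset_rfl)
    (fun x => (Real.exp_pos _).le) zero_le_one htot'
  -- right mass
  have hsplitI : (Iic a₀ ∩ I) ∪ (Ioi a₀ ∩ I) = I := by
    rw [← union_inter_distrib_right, Iic_union_Ioi, univ_inter]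
  have hdisj : Disjoint (Iic a₀ ∩ I) (Ioi a₀ ∩ I) :=
    ((Iic_disjoint_Ioi le_rfl).mono inter_subset_left inter_subset_left)
  have hER : ∫ x in Ioi a₀ ∩ I, Real.exp (-ψ x) = 1 - θ := by
    have h1 := setIntegral_union (f := fun x => Real.exp (-ψ x)) (μ := volume) hdisj hRm
      (hIntI.mono_set inter_subset_right)
      (hIntI.mono_set inter_subset_right)
    rw [hsplitI, hEtot, hEL] at h1
    linarith
  -- gaussian masses
  have hGa : ∫ x in Iic a₀, gd x = θ := by
    have h1 := ha₀
    rw [gauss_apply_s6 measurableSet_Iic] at h1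
    exact (ENNReal.ofReal_eq_ofReal_iff
      (setIntegral_nonneg measurableSet_Iic fun x _ => (gd_pos x).le) hθ0.le).1 h1
  have hGIoi : ∫ x in Ioi a₀, gd x = 1 - θ := by
    have h1 := setIntegral_union (f := gd) (μ := volume) (Iic_disjoint_Ioi (le_refl a₀))
      measurableSet_Ioi gd_integrable.integrableOn gd_integrable.integrableOn
    rw [Iic_union_Ioi, Measure.restrict_univ, gd_total, hGa] at h1
    linarith
  -- deficit at a₀
  have hφa : Real.exp (-φ a₀) ≤ 1 + c₀ * δ := by
    have h1 : Real.exp (-φ a₀) = c₀ * Real.exp (-ψ a₀) := by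
      simp only [hφdef, hc₀def]
      rw [← Real.exp_add]
      congr 1; ring
    rw [h1]
    calc c₀ * Real.exp (-ψ a₀) ≤ c₀ * (Real.exp (-gaussPsi a₀) + δ) :=
          mul_le_mul_of_nonneg_left hdef hc₀pos.le
      _ = 1 + c₀ * δ := by
          rw [mul_add, hc₀def, ← Real.exp_add, add_neg_cancel, Real.exp_zero]
  -- key chord estimates
  have keyR : ∀ z ∈ I, a₀ < z → φ a₀ - φ z ≤ 2*θ*c₀/M₁ * δ * (z - a₀) := by
    intro z hz hza
    by_contra hcon
    push_neg at hcon
    set lf := (φ a₀ - φ z) / (z - a₀) with hlfdef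
    have hza' : 0 < z - a₀ := by linarith
    have hlfgt : 2*θ*c₀/M₁ * δ < lf := by
      rw [hlfdef, lt_div_iff₀ hza']; exact hcon
    have hCpos : 0 < 2*θ*c₀/M₁ * δ := by positivity
    set l := min lf 1 with hldef
    have hl0 : 0 < l := lt_min (lt_trans hCpos hlfgt) one_pos
    have hl1 : l ≤ 1 := min_le_right _ _
    have hch : ∀ x ∈ Iic a₀ ∩ I,
        Real.exp (-ψ x) ≤ (1 + c₀*δ) * (Real.exp (-(l*(a₀ - x))) * gd x) := by
      rintro x ⟨hx1, hx2⟩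
      have hchord : φ a₀ + l * (a₀ - x) ≤ φ x := by
        rcases eq_or_lt_of_le (mem_Iic.1 hx1) with heq | hlt
        · rw [heq]; simp
        · have hs := hφconv.slope_mono_adjacent hx2 hz hlt hza
          have hax : 0 < a₀ - x := by linarith
          have h2 : (φ z - φ a₀)/(z - a₀) = -lf := by
            rw [hlfdef]; field_simp; ring
          rw [h2] at hs
          rw [div_le_iff₀ hax] at hs
          have h3 : l ≤ lf := min_le_left _ _
          have h4 : l * (a₀ - x) ≤ lf * (a₀ - x) :=
            mul_le_mul_of_nonneg_right h3 hax.le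
          linarith
      have he1 : Real.exp (-ψ x) = Real.exp (-φ x) * gd x := by
        simp only [hφdef, gd]
        rw [← Real.exp_add]; congr 1; ring
      rw [he1]
      have he2 : Real.exp (-φ x) ≤ Real.exp (-φ a₀) * Real.exp (-(l*(a₀-x))) := by
        rw [← Real.exp_add]
        apply Real.exp_le_exp.2
        linarith [hchord]
      calc Real.exp (-φ x) * gd x
          ≤ (Real.exp (-φ a₀) * Real.exp (-(l*(a₀-x)))) * gd x :=
            mul_le_mul_of_nonneg_right he2 (gd_pos x).le
        _ ≤ (1 + c₀*δ) * (Real.exp (-(l*(a₀-x))) * gd x) := by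
            nlinarith [Real.exp_pos (-(l*(a₀-x))), gd_pos x, hφa,
              mul_pos (Real.exp_pos (-(l*(a₀-x)))) (gd_pos x)]
    have hIntdm : IntegrableOn
        (fun x => (1 + c₀*δ)*(Real.exp (-(l*(a₀ - x))) * gd x)) (Iic a₀) volume :=
      (intOn_decay_Iic a₀ l hl0.le).const_mul _
    have hstep1 : θ ≤ ∫ x in Iic a₀ ∩ I, (1 + c₀*δ)*(Real.exp (-(l*(a₀ - x))) * gd x) := by
      rw [← hEL]
      apply integral_mono_of_nonneg
        (Filter.Eventually.of_forall fun x => (Real.exp_pos _).le)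
        (hIntdm.mono_set inter_subset_left)
      exact (ae_restrict_iff' hLm).2 (Filter.Eventually.of_forall hch)
    have hstep2 : ∫ x in Iic a₀ ∩ I, (1 + c₀*δ)*(Real.exp (-(l*(a₀ - x))) * gd x)
        ≤ ∫ x in Iic a₀, (1 + c₀*δ)*(Real.exp (-(l*(a₀ - x))) * gd x) := by
      apply setIntegral_mono_set hIntdm
      · refine Filter.Eventually.of_forall fun x => ?_
        exact mul_nonneg (by positivity) (mul_nonneg (Real.exp_pos _).le (gd_pos x).le)
      · exact HasSubset.Subset.eventuallyLE inter_subset_left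
    have hstep3 : ∫ x in Iic a₀, (1 + c₀*δ)*(Real.exp (-(l*(a₀ - x))) * gd x)
        ≤ (1 + c₀*δ) * (θ - l * M₁) := by
      rw [integral_const_mul]
      apply mul_le_mul_of_nonneg_left _ (by positivity)
      have hdec := decay_Iic a₀ l hl0.le hl1
      rw [hGa] at hdec
      exact hdec
    have hmain : θ ≤ (1 + c₀*δ)*(θ - l*M₁) := le_trans hstep1 (le_trans hstep2 hstep3)
    have h7 : l * M₁ ≤ θ * (c₀ * δ) := by
      have hexp : (1+c₀*δ)*(θ - l*M₁)
          = θ - l*M₁ + (c₀*δ)*θ - (c₀*δ)*(l*M₁) := by ring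
      have hxy : 0 ≤ (c₀*δ)*(l*M₁) := by positivity
      linarith
    have h8 : l ≤ 1/2 := by
      rw [le_div_iff₀ (by positivity : (0:ℝ) < 2*c₀*θ)] at hδM₁
      have e1 : θ*(c₀*δ) = δ*(2*c₀*θ)/2 := by ring
      have e2 : l * M₁ ≤ (1/2) * M₁ := by linarith
      exact le_of_mul_le_mul_right e2 hM₁
    have h9 : lf ≤ 1 := by
      by_contra h10
      push_neg at h10
      rw [hldef, min_eq_right h10.le] at h8
      linarith
    have h11 : l = lf := by rw [hldef, min_eq_left h9]
    rw [h11] at h7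
    have h12 : (2*θ*c₀/M₁ * δ) * M₁ < lf * M₁ := mul_lt_mul_of_pos_right hlfgt hM₁
    have h13 : (2*θ*c₀/M₁ * δ) * M₁ = 2*(θ*(c₀*δ)) := by field_simp
    have h14 : 0 < θ*(c₀*δ) := by positivity
    linarith
  have keyL : ∀ z ∈ I, z < a₀ → φ a₀ - φ z ≤ 2*(1-θ)*c₀/M₂ * δ * (a₀ - z) := by
    intro z hz hza
    by_contra hcon
    push_neg at hcon
    set lf := (φ a₀ - φ z) / (a₀ - z) with hlfdef
    have hza' : 0 < a₀ - z := by linarith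
    have hlfgt : 2*(1-θ)*c₀/M₂ * δ < lf := by
      rw [hlfdef, lt_div_iff₀ hza']; exact hcon
    have hCpos : 0 < 2*(1-θ)*c₀/M₂ * δ := by
      have : 0 < 1 - θ := by linarith
      positivity
    set l := min lf 1 with hldef
    have hl0 : 0 < l := lt_min (lt_trans hCpos hlfgt) one_pos
    have hl1 : l ≤ 1 := min_le_right _ _
    have hch : ∀ x ∈ Ioi a₀ ∩ I,
        Real.exp (-ψ x) ≤ (1 + c₀*δ) * (Real.exp (-(l*(x - a₀))) * gd x) := by
      rintro x ⟨hx1, hx2⟩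
      have hchord : φ a₀ + l * (x - a₀) ≤ φ x := by
        have hs := hφconv.slope_mono_adjacent hz hx2 hza (mem_Ioi.1 hx1)
        have hax : 0 < x - a₀ := sub_pos.2 (mem_Ioi.1 hx1)
        have h2 : (φ a₀ - φ z)/(a₀ - z) = lf := by rw [hlfdef]
        rw [h2] at hs
        rw [le_div_iff₀ hax] at hs
        have h3 : l ≤ lf := min_le_left _ _
        have h4 : l * (x - a₀) ≤ lf * (x - a₀) :=
          mul_le_mul_of_nonneg_right h3 hax.le
        linarith
      have he1 : Real.exp (-ψ x) = Real.exp (-φ x) * gd x := by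
        simp only [hφdef, gd]
        rw [← Real.exp_add]; congr 1; ring
      rw [he1]
      have he2 : Real.exp (-φ x) ≤ Real.exp (-φ a₀) * Real.exp (-(l*(x-a₀))) := by
        rw [← Real.exp_add]
        apply Real.exp_le_exp.2
        linarith [hchord]
      calc Real.exp (-φ x) * gd x
          ≤ (Real.exp (-φ a₀) * Real.exp (-(l*(x-a₀)))) * gd x :=
            mul_le_mul_of_nonneg_right he2 (gd_pos x).le
        _ ≤ (1 + c₀*δ) * (Real.exp (-(l*(x-a₀))) * gd x) := by
            nlinarith [Real.exp_pos (-(l*(x-a₀))), gd_pos x, hφa,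
              mul_pos (Real.exp_pos (-(l*(x-a₀)))) (gd_pos x)]
    have hIntdm : IntegrableOn
        (fun x => (1 + c₀*δ)*(Real.exp (-(l*(x - a₀))) * gd x)) (Ioi a₀) volume :=
      (intOn_decay_Ioi a₀ l hl0.le).const_mul _
    have hstep1 : 1 - θ ≤ ∫ x in Ioi a₀ ∩ I, (1 + c₀*δ)*(Real.exp (-(l*(x - a₀))) * gd x) := by
      rw [← hER]
      apply integral_mono_of_nonneg
        (Filter.Eventually.of_forall fun x => (Real.exp_pos _).le)
        (hIntdm.mono_set inter_subset_left)
      exact (ae_restrict_iff' hRm).2 (Filter.Eventually.of_forall hch)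
    have hstep2 : ∫ x in Ioi a₀ ∩ I, (1 + c₀*δ)*(Real.exp (-(l*(x - a₀))) * gd x)
        ≤ ∫ x in Ioi a₀, (1 + c₀*δ)*(Real.exp (-(l*(x - a₀))) * gd x) := by
      apply setIntegral_mono_set hIntdm
      · refine Filter.Eventually.of_forall fun x => ?_
        exact mul_nonneg (by positivity) (mul_nonneg (Real.exp_pos _).le (gd_pos x).le)
      · exact HasSubset.Subset.eventuallyLE inter_subset_left
    have hstep3 : ∫ x in Ioi a₀, (1 + c₀*δ)*(Real.exp (-(l*(x - a₀))) * gd x)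
        ≤ (1 + c₀*δ) * ((1-θ) - l * M₂) := by
      rw [integral_const_mul]
      apply mul_le_mul_of_nonneg_left _ (by positivity)
      have hdec := decay_Ioi a₀ l hl0.le hl1
      rw [hGIoi] at hdec
      exact hdec
    have hmain : 1 - θ ≤ (1 + c₀*δ)*((1-θ) - l*M₂) := le_trans hstep1 (le_trans hstep2 hstep3)
    have h7 : l * M₂ ≤ (1-θ) * (c₀ * δ) := by
      have hexp : (1+c₀*δ)*((1-θ) - l*M₂)
          = (1-θ) - l*M₂ + (c₀*δ)*(1-θ) - (c₀*δ)*(l*M₂) := by ring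
      have hxy : 0 ≤ (c₀*δ)*(l*M₂) := by positivity
      linarith
    have h8 : l ≤ 1/2 := by
      rw [le_div_iff₀ (by positivity : (0:ℝ) < 2*c₀*(1-θ))] at hδM₂
      have e1 : (1-θ)*(c₀*δ) = δ*(2*c₀*(1-θ))/2 := by ring
      have e2 : l * M₂ ≤ (1/2) * M₂ := by linarith
      exact le_of_mul_le_mul_right e2 hM₂
    have h9 : lf ≤ 1 := by
      by_contra h10
      push_neg at h10
      rw [hldef, min_eq_right h10.le] at h8
      linarith
    have h11 : l = lf := by rw [hldef, min_eq_left h9]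
    rw [h11] at h7
    have h12 : (2*(1-θ)*c₀/M₂ * δ) * M₂ < lf * M₂ := mul_lt_mul_of_pos_right hlfgt hM₂
    have h13 : (2*(1-θ)*c₀/M₂ * δ) * M₂ = 2*((1-θ)*(c₀*δ)) := by field_simp
    have h14 : 0 < (1-θ)*(c₀*δ) := by positivity
    linarith
  -- pointwise bound on I
  have hptwise : ∀ x ∈ I, max (Real.exp (gaussPsi x - ψ x) - 1) 0 ≤ δ * h x := by
    intro x hx
    have hub : -(φ x) ≤ δ * (c₀ + K * |x - a₀|) := by
      have h1 : φ a₀ - φ x ≤ K * δ * |x - a₀| := by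
        rcases lt_trichotomy x a₀ with hlt | heq | hgt
        · have h2 := keyL x hx hlt
          have habs : |x - a₀| = a₀ - x := by
            rw [abs_of_neg (by linarith : x - a₀ < 0)]; ring
          rw [habs]
          calc φ a₀ - φ x ≤ 2*(1-θ)*c₀/M₂ * δ * (a₀ - x) := h2
            _ ≤ K * δ * (a₀ - x) := by
                apply mul_le_mul_of_nonneg_right _ (by linarith)
                exact mul_le_mul_of_nonneg_right (le_max_right _ _) hδ.le
        · rw [heq]; simp
        · have h2 := keyR x hx hgt
          have habs : |x - a₀| = x - a₀ := abs_of_pos (by linarith)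
          rw [habs]
          calc φ a₀ - φ x ≤ 2*θ*c₀/M₁ * δ * (x - a₀) := h2
            _ ≤ K * δ * (x - a₀) := by
                apply mul_le_mul_of_nonneg_right _ (by linarith)
                exact mul_le_mul_of_nonneg_right (le_max_left _ _) hδ.le
      have h2 : -(φ a₀) ≤ c₀ * δ := by
        have h3 : -(φ a₀) ≤ Real.log (1 + c₀*δ) := by
          rw [Real.le_log_iff_exp_le (by positivity)]
          exact hφa
        have h4 : Real.log (1 + c₀*δ) ≤ c₀*δ := by
          have := Real.log_le_sub_one_of_pos (show (0:ℝ) < 1 + c₀*δ by positivity)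
          linarith
        linarith
      have h5 : δ*(c₀ + K * |x - a₀|) = c₀*δ + K*δ*|x - a₀| := by ring
      linarith
    have hw0 : 0 ≤ c₀ + K * |x - a₀| := hwnn x
    apply max_le _ (by positivity)
    have hgp : Real.exp (gaussPsi x - ψ x) = Real.exp (-(φ x)) := by
      congr 1; simp only [hφdef]; ring
    rw [hgp]
    have e1 : Real.exp (-(φ x)) ≤ Real.exp (δ * (c₀ + K * |x - a₀|)) :=
      Real.exp_le_exp.2 hub
    have e2 : Real.exp (δ * (c₀ + K * |x - a₀|)) - 1
        ≤ (δ * (c₀ + K * |x - a₀|)) * Real.exp (δ * (c₀ + K * |x - a₀|)) :=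
      exp_sub_one_le (by positivity)
    have e3 : Real.exp (δ * (c₀ + K * |x - a₀|)) ≤ Real.exp (c₀ + K * |x - a₀|) :=
      Real.exp_le_exp.2 (mul_le_of_le_one_left hw0 hδ1)
    have e4 : δ * h x = δ * ((c₀ + K * |x - a₀|) * Real.exp (c₀ + K * |x - a₀|)) := rfl
    rw [e4]
    have e5 : (δ * (c₀ + K * |x - a₀|)) * Real.exp (δ * (c₀ + K * |x - a₀|))
        ≤ (δ * (c₀ + K * |x - a₀|)) * Real.exp (c₀ + K * |x - a₀|) :=
      mul_le_mul_of_nonneg_left e3 (by positivity)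
    have e6 : (δ * (c₀ + K * |x - a₀|)) * Real.exp (c₀ + K * |x - a₀|)
        = δ * ((c₀ + K * |x - a₀|) * Real.exp (c₀ + K * |x - a₀|)) := by ring
    linarith
  -- final chain
  have hgoalconv : ∫ x in I, max (Real.exp (gaussPsi x - ψ x) - 1) 0 ^ p ∂gauss
      = ∫ x in I, gd x * max (Real.exp (gaussPsi x - ψ x) - 1) 0 ^ p := by
    rw [gauss, restrict_withDensity hIm]
    rw [show (fun x : ℝ => ENNReal.ofReal (Real.exp (-gaussPsi x)))
      = (fun x : ℝ => ((Real.toNNReal (gd x) : NNReal) : ENNReal)) from rfl]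
    rw [integral_withDensity_eq_integral_smul
      (f := fun x => Real.toNNReal (gd x))
      (continuous_real_toNNReal.measurable.comp gd_cont.measurable)]
    congr 1
    funext x
    rw [NNReal.smul_def, Real.coe_toNNReal _ (gd_pos x).le, smul_eq_mul]
  rw [hgoalconv]
  have hIntg : Integrable (fun x => gd x * (δ * h x) ^ p) volume := by
    have heq : (fun x => gd x * (δ * h x) ^ p)
        = fun x => δ ^ p * (gd x * h x ^ p) := by
      funext x
      rw [Real.mul_rpow hδ.le (hhnn x)]
      ring
    rw [heq]
    exact hBint.const_mul _
  calc ∫ x in I, gd x * max (Real.exp (gaussPsi x - ψ x) - 1) 0 ^ p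
      ≤ ∫ x in I, gd x * (δ * h x) ^ p := by
        apply integral_mono_of_nonneg
        · refine Filter.Eventually.of_forall fun x => ?_
          exact mul_nonneg (gd_pos x).le (Real.rpow_nonneg (le_max_right _ _) p)
        · exact hIntg.integrableOn
        · refine (ae_restrict_iff' hIm).2 (Filter.Eventually.of_forall fun x hx => ?_)
          apply mul_le_mul_of_nonneg_left _ (gd_pos x).le
          exact Real.rpow_le_rpow (le_max_right _ _) (hptwise x hx) hp0
    _ ≤ ∫ x, gd x * (δ * h x) ^ p := by
        apply setIntegral_le_integral hIntg
        refine Filter.Eventually.of_forall fun x => ?_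
        exact mul_nonneg (gd_pos x).le (Real.rpow_nonneg (by positivity) p)
    _ = δ ^ p * B := by
        rw [hBdef]
        rw [show (fun x => gd x * (δ * h x) ^ p)
          = fun x => δ ^ p * (gd x * h x ^ p) from funext fun x => by
            rw [Real.mul_rpow hδ.le (hhnn x)]; ring]
        rw [integral_const_mul]
    _ ≤ δ * B := by
        apply mul_le_mul_of_nonneg_right _ hB
        calc δ ^ p ≤ δ ^ (1:ℝ) := Real.rpow_le_rpow_of_exponent_ge hδ hδ1 hp
          _ = δ := Real.rpow_one δ
    _ ≤ (B + 1) * δ := by nlinarith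
end
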